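/- arXiv:0910.4115 — 15 statements merged into one kernel-verified Lean document; each statement's English description precedes it below -/
import Mathlib

section
/- Let a < b be real numbers, let p > 1 and q be real numbers with 1/p + 1/q = 1, and let f, g : ℝ → ℝ be continuous functions that are positive on [a,b]. Suppose there are constants m, M with 0 < m and m ≤ f(t)^p / g(t)^q ≤ M for all t ∈ [a,b]. Then (∫_a^b f(t)^p dt)^(1/p) · (∫_a^b g(t)^q dt)^(1/q) ≤ (M/m)^(1/(p·q)) · ∫_a^b f(t)·g(t) dt. (This is the reverse Hölder inequality of Theorem 3.1 in the continuous case 𝕋 = ℝ, where the diamond-alpha integral reduces to the Lebesgue integral.) -/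
/-- Reverse Hölder inequality (Theorem 3.1, continuous case 𝕋 = ℝ). -/
theorem reverse_holder_continuous
    (a b p q m M : ℝ) (f g : ℝ → ℝ)
    (hab : a < b) (hp : 1 < p) (hpq : 1 / p + 1 / q = 1)
    (hf : Continuous f) (hg : Continuous g)
    (hfpos : ∀ t ∈ Set.Icc a b, 0 < f t)
    (hgpos : ∀ t ∈ Set.Icc a b, 0 < g t)
    (hm : 0 < m)
    (hlb : ∀ t ∈ Set.Icc a b, m ≤ f t ^ p / g t ^ q)
    (hub : ∀ t ∈ Set.Icc a b, f t ^ p / g t ^ q ≤ M) :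
    (∫ t in a..b, f t ^ p) ^ (1 / p) * (∫ t in a..b, g t ^ q) ^ (1 / q)
      ≤ (M / m) ^ (1 / (p * q)) * ∫ t in a..b, f t * g t := by
  have hp0 : 0 < p := lt_trans one_pos hp
  have hq : 1 < q := by
    have h1 : 1 / q = 1 - 1 / p := by linarith
    have h2 : 0 < 1 / p := by positivity
    have h3 : 1 / p < 1 := by
      rw [div_lt_one hp0]; exact hp
    have hq0 : 0 < 1 / q := by rw [h1]; linarith
    have hq1 : 1 / q < 1 := by rw [h1]; linarith
    have := one_lt_one_div hq0 hq1
    rwa [one_div_one_div] at this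
  have hq0 : 0 < q := lt_trans one_pos hq
  have hM : 0 < M := lt_of_lt_of_le hm (le_trans (hlb a ⟨le_refl a, hab.le⟩) (hub a ⟨le_refl a, hab.le⟩))
  -- pointwise bounds
  have key1 : ∀ t ∈ Set.Icc a b, f t ^ p ≤ M ^ (1/q) * (f t * g t) := by
    intro t ht
    have hF := hfpos t ht
    have hG := hgpos t ht
    have hGq : (0:ℝ) < g t ^ q := Real.rpow_pos_of_pos hG q
    have h1 : f t ^ p ≤ M * g t ^ q := (div_le_iff₀ hGq).mp (hub t ht)
    have h2 : (f t ^ p) ^ (1/q) ≤ (M * g t ^ q) ^ (1/q) :=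
      Real.rpow_le_rpow (Real.rpow_nonneg hF.le p) h1 (by positivity)
    have h3 : (M * g t ^ q) ^ (1/q) = M ^ (1/q) * g t := by
      rw [Real.mul_rpow hM.le (Real.rpow_nonneg hG.le q), ← Real.rpow_mul hG.le,
        mul_one_div, div_self (ne_of_gt hq0), Real.rpow_one]
    have hexp : p = 1 + p * (1/q) := by
      field_simp
      field_simp at hpq
      nlinarith [hpq]
    calc f t ^ p = f t ^ (1 + p * (1/q)) := by rw [← hexp]
      _ = f t ^ (1:ℝ) * f t ^ (p * (1/q)) := Real.rpow_add hF 1 _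
      _ = f t * (f t ^ p) ^ (1/q) := by rw [Real.rpow_one, Real.rpow_mul hF.le]
      _ ≤ f t * (M ^ (1/q) * g t) := by
          rw [← h3]; exact mul_le_mul_of_nonneg_left (h3 ▸ h2) hF.le
      _ = M ^ (1/q) * (f t * g t) := by ring
  have key2 : ∀ t ∈ Set.Icc a b, g t ^ q ≤ (m⁻¹) ^ (1/p) * (f t * g t) := by
    intro t ht
    have hF := hfpos t ht
    have hG := hgpos t ht
    have hGq : (0:ℝ) < g t ^ q := Real.rpow_pos_of_pos hG q
    have h1 : g t ^ q ≤ m⁻¹ * f t ^ p := by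
      have := (le_div_iff₀ hGq).mp (hlb t ht)
      rw [inv_mul_eq_div, le_div_iff₀ hm] at *
      nlinarith [this]
    have h2 : (g t ^ q) ^ (1/p) ≤ (m⁻¹ * f t ^ p) ^ (1/p) :=
      Real.rpow_le_rpow (Real.rpow_nonneg hG.le q) h1 (by positivity)
    have h3 : (m⁻¹ * f t ^ p) ^ (1/p) = (m⁻¹) ^ (1/p) * f t := by
      rw [Real.mul_rpow (by positivity) (Real.rpow_nonneg hF.le p), ← Real.rpow_mul hF.le]
      rw [mul_one_div, div_self (ne_of_gt hp0), Real.rpow_one]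
    have hexp : q = 1 + q * (1/p) := by
      field_simp
      field_simp at hpq
      nlinarith [hpq]
    calc g t ^ q = g t ^ (1 + q * (1/p)) := by rw [← hexp]
      _ = g t ^ (1:ℝ) * g t ^ (q * (1/p)) := Real.rpow_add hG 1 _
      _ = g t * (g t ^ q) ^ (1/p) := by rw [Real.rpow_one, Real.rpow_mul hG.le]
      _ ≤ g t * ((m⁻¹) ^ (1/p) * f t) := by
          rw [← h3]; exact mul_le_mul_of_nonneg_left (h3 ▸ h2) hG.le
      _ = (m⁻¹) ^ (1/p) * (f t * g t) := by ring
  -- integrability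
  have hicc : Set.uIcc a b = Set.Icc a b := Set.uIcc_of_le hab.le
  have hfp_int : IntervalIntegrable (fun t => f t ^ p) MeasureTheory.volume a b := by
    apply ContinuousOn.intervalIntegrable
    apply ContinuousOn.rpow_const hf.continuousOn
    intro t ht
    rw [hicc] at ht
    exact Or.inl (ne_of_gt (hfpos t ht))
  have hgq_int : IntervalIntegrable (fun t => g t ^ q) MeasureTheory.volume a b := by
    apply ContinuousOn.intervalIntegrable
    apply ContinuousOn.rpow_const hg.continuousOn
    intro t ht
    rw [hicc] at ht
    exact Or.inl (ne_of_gt (hgpos t ht))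
  have hfg_int : IntervalIntegrable (fun t => f t * g t) MeasureTheory.volume a b :=
    (hf.mul hg).intervalIntegrable a b
  set I := ∫ t in a..b, f t * g t with hI
  have hIpos : 0 < I := by
    apply intervalIntegral.intervalIntegral_pos_of_pos_on hfg_int _ hab
    intro t ht
    exact mul_pos (hfpos t (Set.mem_Icc_of_Ioo ht)) (hgpos t (Set.mem_Icc_of_Ioo ht))
  have int1 : (∫ t in a..b, f t ^ p) ≤ M ^ (1/q) * I := by
    rw [hI, ← intervalIntegral.integral_const_mul]
    exact intervalIntegral.integral_mono_on hab.le hfp_int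
      (hfg_int.const_mul _) key1
  have int2 : (∫ t in a..b, g t ^ q) ≤ (m⁻¹) ^ (1/p) * I := by
    rw [hI, ← intervalIntegral.integral_const_mul]
    exact intervalIntegral.integral_mono_on hab.le hgq_int
      (hfg_int.const_mul _) key2
  have hA : (0:ℝ) ≤ ∫ t in a..b, f t ^ p :=
    intervalIntegral.integral_nonneg hab.le (fun u hu => Real.rpow_nonneg (hfpos u hu).le p)
  have hB : (0:ℝ) ≤ ∫ t in a..b, g t ^ q :=
    intervalIntegral.integral_nonneg hab.le (fun u hu => Real.rpow_nonneg (hgpos u hu).le q)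
  have s1 : (∫ t in a..b, f t ^ p) ^ (1/p) ≤ M ^ (1/(p*q)) * I ^ (1/p) := by
    calc (∫ t in a..b, f t ^ p) ^ (1/p) ≤ (M ^ (1/q) * I) ^ (1/p) :=
          Real.rpow_le_rpow hA int1 (by positivity)
      _ = M ^ (1/(p*q)) * I ^ (1/p) := by
          rw [Real.mul_rpow (by positivity) hIpos.le, ← Real.rpow_mul hM.le]
          congr 1
          rw [div_mul_div_comm, one_mul, mul_comm]
  have s2 : (∫ t in a..b, g t ^ q) ^ (1/q) ≤ (m⁻¹) ^ (1/(p*q)) * I ^ (1/q) := by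
    calc (∫ t in a..b, g t ^ q) ^ (1/q) ≤ ((m⁻¹) ^ (1/p) * I) ^ (1/q) :=
          Real.rpow_le_rpow hB int2 (by positivity)
      _ = (m⁻¹) ^ (1/(p*q)) * I ^ (1/q) := by
          rw [Real.mul_rpow (by positivity) hIpos.le, ← Real.rpow_mul (by positivity)]
          congr 1
          rw [div_mul_div_comm, one_mul]
  calc (∫ t in a..b, f t ^ p) ^ (1/p) * (∫ t in a..b, g t ^ q) ^ (1/q)
      ≤ (M ^ (1/(p*q)) * I ^ (1/p)) * ((m⁻¹) ^ (1/(p*q)) * I ^ (1/q)) := by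
        apply mul_le_mul s1 s2 (Real.rpow_nonneg hB _) (by positivity)
    _ = (M ^ (1/(p*q)) * (m⁻¹) ^ (1/(p*q))) * (I ^ (1/p) * I ^ (1/q)) := by ring
    _ = (M/m) ^ (1/(p*q)) * I := by
        rw [← Real.mul_rpow hM.le (by positivity), ← Real.rpow_add hIpos, hpq,
          Real.rpow_one, ← div_eq_mul_inv]
end

section
/- Let a < b be real numbers and let p > 1, q with 1/p + 1/q = 1. Let K : ℝ × ℝ → ℝ be continuous and nonnegative on [a,b] × [a,b], let f, g : ℝ → ℝ be continuous and nonnegative on [a,b], and let φ, ψ : ℝ → ℝ be continuous and positive on [a,b]. Define F(x) = ∫_a^b K(x,y)·ψ(y)^(−p) dy and G(y) = ∫_a^b K(x,y)·φ(x)^(−q) dx. Then ∫_a^b ∫_a^b K(x,y)·f(x)·g(y) dx dy ≤ (∫_a^b φ(x)^p·F(x)·f(x)^p dx)^(1/p) · (∫_a^b ψ(y)^q·G(y)·g(y)^q dy)^(1/q). (This is inequality (5) of Theorem 3.4 in the continuous case 𝕋 = ℝ.) -/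
open MeasureTheory

/-- Inequality (5) of Theorem 3.4, continuous case 𝕋 = ℝ. -/
theorem hardy_type_first_inequality_continuous
    (a b p q : ℝ) (K : ℝ × ℝ → ℝ) (f g φ ψ : ℝ → ℝ)
    (hab : a < b) (hp : 1 < p) (hpq : 1 / p + 1 / q = 1)
    (hK : ContinuousOn K (Set.Icc a b ×ˢ Set.Icc a b))
    (hKnn : ∀ z ∈ Set.Icc a b ×ˢ Set.Icc a b, 0 ≤ K z)
    (hf : ContinuousOn f (Set.Icc a b)) (hfnn : ∀ t ∈ Set.Icc a b, 0 ≤ f t)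
    (hg : ContinuousOn g (Set.Icc a b)) (hgnn : ∀ t ∈ Set.Icc a b, 0 ≤ g t)
    (hφ : ContinuousOn φ (Set.Icc a b)) (hφpos : ∀ t ∈ Set.Icc a b, 0 < φ t)
    (hψ : ContinuousOn ψ (Set.Icc a b)) (hψpos : ∀ t ∈ Set.Icc a b, 0 < ψ t)
    (F G : ℝ → ℝ)
    (hF : ∀ x, F x = ∫ y in a..b, K (x, y) * ψ y ^ (-p))
    (hG : ∀ y, G y = ∫ x in a..b, K (x, y) * φ x ^ (-q)) :
    (∫ y in a..b, ∫ x in a..b, K (x, y) * f x * g y)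
      ≤ (∫ x in a..b, φ x ^ p * F x * f x ^ p) ^ (1 / p) *
        (∫ y in a..b, ψ y ^ q * G y * g y ^ q) ^ (1 / q) := by
  have hp0 : 0 < p := lt_trans zero_lt_one hp
  have hpq' : p.HolderConjugate q := Real.holderConjugate_iff.mpr ⟨hp, by rw [inv_eq_one_div, inv_eq_one_div]; exact hpq⟩
  have hq1 : 1 < q := hpq'.symm.lt
  have hq0 : 0 < q := hpq'.symm.pos
  have hle : a ≤ b := hab.le
  -- convert interval integrals to set integrals over `Icc a b`
  have hconv : ∀ h : ℝ → ℝ, (∫ t in a..b, h t) = ∫ t in Set.Icc a b, h t := by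
    intro h
    rw [intervalIntegral.integral_of_le hle, ← integral_Icc_eq_integral_Ioc]
  simp only [hconv] at hF hG ⊢
  set μ0 : Measure ℝ := volume.restrict (Set.Icc a b) with hμ0def
  have hcS : IsCompact (Set.Icc a b ×ˢ Set.Icc a b) :=
    isCompact_Icc.prod isCompact_Icc
  have hmS : MeasurableSet (Set.Icc a b ×ˢ Set.Icc a b) :=
    measurableSet_Icc.prod measurableSet_Icc
  have hμ : μ0.prod μ0 = volume.restrict (Set.Icc a b ×ˢ Set.Icc a b) := by
    rw [hμ0def, Measure.prod_restrict, ← Measure.volume_eq_prod]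
  haveI : IsFiniteMeasure (μ0.prod μ0) := by
    constructor
    rw [hμ, Measure.restrict_apply_univ]
    exact hcS.measure_lt_top
  -- the two Hölder factors
  set u : ℝ × ℝ → ℝ := fun z => K (z.2, z.1) ^ (1 / p) * (φ z.2 * (ψ z.1)⁻¹ * f z.2) with hu
  set v : ℝ × ℝ → ℝ := fun z => K (z.2, z.1) ^ (1 / q) * (ψ z.1 * (φ z.2)⁻¹ * g z.1) with hv
  -- continuity facts
  have cKsw : ContinuousOn (fun z : ℝ × ℝ => K (z.2, z.1)) (Set.Icc a b ×ˢ Set.Icc a b) :=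
    hK.comp (continuous_snd.prodMk continuous_fst).continuousOn fun z hz =>
      Set.mk_mem_prod hz.2 hz.1
  have cφ2 : ContinuousOn (fun z : ℝ × ℝ => φ z.2) (Set.Icc a b ×ˢ Set.Icc a b) :=
    hφ.comp continuous_snd.continuousOn fun z hz => hz.2
  have cψ1 : ContinuousOn (fun z : ℝ × ℝ => ψ z.1) (Set.Icc a b ×ˢ Set.Icc a b) :=
    hψ.comp continuous_fst.continuousOn fun z hz => hz.1
  have cf2 : ContinuousOn (fun z : ℝ × ℝ => f z.2) (Set.Icc a b ×ˢ Set.Icc a b) :=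
    hf.comp continuous_snd.continuousOn fun z hz => hz.2
  have cg1 : ContinuousOn (fun z : ℝ × ℝ => g z.1) (Set.Icc a b ×ˢ Set.Icc a b) :=
    hg.comp continuous_fst.continuousOn fun z hz => hz.1
  have cu : ContinuousOn u (Set.Icc a b ×ˢ Set.Icc a b) := by
    rw [hu]
    exact (cKsw.rpow_const fun z hz => Or.inr (by positivity)).mul
      ((cφ2.mul (cψ1.inv₀ fun z hz => (hψpos _ hz.1).ne')).mul cf2)
  have cv : ContinuousOn v (Set.Icc a b ×ˢ Set.Icc a b) := by
    rw [hv]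
    exact (cKsw.rpow_const fun z hz => Or.inr (by positivity)).mul
      ((cψ1.mul (cφ2.inv₀ fun z hz => (hφpos _ hz.2).ne')).mul cg1)
  have haeS : ∀ᵐ z ∂(μ0.prod μ0), z ∈ Set.Icc a b ×ˢ Set.Icc a b := by
    rw [hμ]; exact ae_restrict_mem hmS
  -- nonnegativity
  have hunn' : ∀ z ∈ Set.Icc a b ×ˢ Set.Icc a b, 0 ≤ u z := by
    intro z hz
    exact mul_nonneg (Real.rpow_nonneg (hKnn _ (Set.mk_mem_prod hz.2 hz.1)) _)
      (mul_nonneg (mul_nonneg (hφpos _ hz.2).le (inv_nonneg.mpr (hψpos _ hz.1).le))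
        (hfnn _ hz.2))
  have hvnn' : ∀ z ∈ Set.Icc a b ×ˢ Set.Icc a b, 0 ≤ v z := by
    intro z hz
    exact mul_nonneg (Real.rpow_nonneg (hKnn _ (Set.mk_mem_prod hz.2 hz.1)) _)
      (mul_nonneg (mul_nonneg (hψpos _ hz.1).le (inv_nonneg.mpr (hφpos _ hz.2).le))
        (hgnn _ hz.1))
  have hunn : 0 ≤ᵐ[μ0.prod μ0] u := by
    filter_upwards [haeS] with z hz using hunn' z hz
  have hvnn : 0 ≤ᵐ[μ0.prod μ0] v := by
    filter_upwards [haeS] with z hz using hvnn' z hz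
  -- Memℒp facts
  obtain ⟨Cu, hCu⟩ := hcS.exists_bound_of_continuousOn cu
  obtain ⟨Cv, hCv⟩ := hcS.exists_bound_of_continuousOn cv
  have hu_meas : AEStronglyMeasurable u (μ0.prod μ0) := by
    rw [hμ]; exact cu.aestronglyMeasurable hmS
  have hv_meas : AEStronglyMeasurable v (μ0.prod μ0) := by
    rw [hμ]; exact cv.aestronglyMeasurable hmS
  have hu_mem : MemLp u (ENNReal.ofReal p) (μ0.prod μ0) :=
    MemLp.of_bound hu_meas Cu (by filter_upwards [haeS] with z hz using hCu z hz)
  have hv_mem : MemLp v (ENNReal.ofReal q) (μ0.prod μ0) :=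
    MemLp.of_bound hv_meas Cv (by filter_upwards [haeS] with z hz using hCv z hz)
  -- integrability of the main integrand
  have hint1 : Integrable (fun z : ℝ × ℝ => K (z.2, z.1) * f z.2 * g z.1) (μ0.prod μ0) := by
    rw [hμ]
    exact ContinuousOn.integrableOn_compact hcS ((cKsw.mul cf2).mul cg1)
  -- equality of the Lp-power integrals with the RHS integrals
  have hB : (∫ z, u z ^ p ∂(μ0.prod μ0)) = ∫ x, φ x ^ p * F x * f x ^ p ∂μ0 := by
    have h1 : (∫ z, u z ^ p ∂(μ0.prod μ0)) =
        ∫ z, (fun z : ℝ × ℝ => φ z.2 ^ p * (K (z.2, z.1) * ψ z.1 ^ (-p)) * f z.2 ^ p) z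
          ∂(μ0.prod μ0) := by
      rw [hμ]
      refine setIntegral_congr_fun hmS fun z hz => ?_
      have hK0 : 0 ≤ K (z.2, z.1) := hKnn _ (Set.mk_mem_prod hz.2 hz.1)
      have hφp : 0 < φ z.2 := hφpos _ hz.2
      have hψp : 0 < ψ z.1 := hψpos _ hz.1
      have hf0 : 0 ≤ f z.2 := hfnn _ hz.2
      simp only [hu]
      rw [Real.mul_rpow (Real.rpow_nonneg hK0 _)
          (mul_nonneg (mul_nonneg hφp.le (inv_nonneg.mpr hψp.le)) hf0),
        ← Real.rpow_mul hK0, one_div_mul_cancel hp0.ne', Real.rpow_one,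
        Real.mul_rpow (mul_nonneg hφp.le (inv_nonneg.mpr hψp.le)) hf0,
        Real.mul_rpow hφp.le (inv_nonneg.mpr hψp.le),
        Real.inv_rpow hψp.le, ← Real.rpow_neg hψp.le]
      ring
    have hHint : Integrable
        (fun z : ℝ × ℝ => φ z.2 ^ p * (K (z.2, z.1) * ψ z.1 ^ (-p)) * f z.2 ^ p)
        (μ0.prod μ0) := by
      rw [hμ]
      refine ContinuousOn.integrableOn_compact hcS ?_
      exact ((cφ2.rpow_const fun z hz => Or.inl (hφpos _ hz.2).ne').mul
        (cKsw.mul (cψ1.rpow_const fun z hz => Or.inl (hψpos _ hz.1).ne'))).mul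
        (cf2.rpow_const fun z hz => Or.inr hp0.le)
    rw [h1, integral_prod_symm _ hHint]
    refine integral_congr_ae (Filter.Eventually.of_forall fun x => ?_)
    simp only
    have : (fun y => φ x ^ p * (K (x, y) * ψ y ^ (-p)) * f x ^ p) =
        fun y => (φ x ^ p * f x ^ p) * (K (x, y) * ψ y ^ (-p)) := funext fun y => by ring
    rw [this, integral_const_mul, ← hF x]
    ring
  have hC : (∫ z, v z ^ q ∂(μ0.prod μ0)) = ∫ y, ψ y ^ q * G y * g y ^ q ∂μ0 := by
    have h1 : (∫ z, v z ^ q ∂(μ0.prod μ0)) =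
        ∫ z, (fun z : ℝ × ℝ => ψ z.1 ^ q * (K (z.2, z.1) * φ z.2 ^ (-q)) * g z.1 ^ q) z
          ∂(μ0.prod μ0) := by
      rw [hμ]
      refine setIntegral_congr_fun hmS fun z hz => ?_
      have hK0 : 0 ≤ K (z.2, z.1) := hKnn _ (Set.mk_mem_prod hz.2 hz.1)
      have hφp : 0 < φ z.2 := hφpos _ hz.2
      have hψp : 0 < ψ z.1 := hψpos _ hz.1
      have hg0 : 0 ≤ g z.1 := hgnn _ hz.1
      simp only [hv]
      rw [Real.mul_rpow (Real.rpow_nonneg hK0 _)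
          (mul_nonneg (mul_nonneg hψp.le (inv_nonneg.mpr hφp.le)) hg0),
        ← Real.rpow_mul hK0, one_div_mul_cancel hq0.ne', Real.rpow_one,
        Real.mul_rpow (mul_nonneg hψp.le (inv_nonneg.mpr hφp.le)) hg0,
        Real.mul_rpow hψp.le (inv_nonneg.mpr hφp.le),
        Real.inv_rpow hφp.le, ← Real.rpow_neg hφp.le]
      ring
    have hHint : Integrable
        (fun z : ℝ × ℝ => ψ z.1 ^ q * (K (z.2, z.1) * φ z.2 ^ (-q)) * g z.1 ^ q)
        (μ0.prod μ0) := by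
      rw [hμ]
      refine ContinuousOn.integrableOn_compact hcS ?_
      exact ((cψ1.rpow_const fun z hz => Or.inl (hψpos _ hz.1).ne').mul
        (cKsw.mul (cφ2.rpow_const fun z hz => Or.inl (hφpos _ hz.2).ne'))).mul
        (cg1.rpow_const fun z hz => Or.inr hq0.le)
    rw [h1, integral_prod _ hHint]
    refine integral_congr_ae (Filter.Eventually.of_forall fun y => ?_)
    simp only
    have : (fun x => ψ y ^ q * (K (x, y) * φ x ^ (-q)) * g y ^ q) =
        fun x => (ψ y ^ q * g y ^ q) * (K (x, y) * φ x ^ (-q)) := funext fun x => by ring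
    rw [this, integral_const_mul, ← hG y]
    ring
  -- main chain
  calc (∫ y, ∫ x, K (x, y) * f x * g y ∂μ0 ∂μ0)
      = ∫ z, K (z.2, z.1) * f z.2 * g z.1 ∂(μ0.prod μ0) := by
        exact integral_integral (f := fun y x => K (x, y) * f x * g y) hint1
    _ = ∫ z, u z * v z ∂(μ0.prod μ0) := by
        rw [hμ]
        refine setIntegral_congr_fun hmS fun z hz => ?_
        have hK0 : 0 ≤ K (z.2, z.1) := hKnn _ (Set.mk_mem_prod hz.2 hz.1)
        have hφ0 : φ z.2 ≠ 0 := (hφpos _ hz.2).ne'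
        have hψ0 : ψ z.1 ≠ 0 := (hψpos _ hz.1).ne'
        simp only [hu, hv]
        rw [mul_mul_mul_comm, ← Real.rpow_add_of_nonneg hK0 (by positivity) (by positivity),
          hpq, Real.rpow_one]
        field_simp
    _ ≤ (∫ z, u z ^ p ∂(μ0.prod μ0)) ^ (1 / p) * (∫ z, v z ^ q ∂(μ0.prod μ0)) ^ (1 / q) :=
        integral_mul_le_Lp_mul_Lq_of_nonneg hpq' hunn hvnn hu_mem hv_mem
    _ = _ := by rw [hB, hC]
end

section
/- Let a < b be real numbers and let p > 1, q with 1/p + 1/q = 1. Let K : ℝ × ℝ → ℝ be continuous and positive on [a,b] × [a,b], let f : ℝ → ℝ be continuous and nonnegative on [a,b], and let φ, ψ : ℝ → ℝ be continuous and positive on [a,b]. Define F(x) = ∫_a^b K(x,y)·ψ(y)^(−p) dy and G(y) = ∫_a^b K(x,y)·φ(x)^(−q) dx. Then ∫_a^b G(y)^(1−p)·ψ(y)^(−p)·(∫_a^b K(x,y)·f(x) dx)^p dy ≤ ∫_a^b φ(x)^p·F(x)·f(x)^p dx. (This is the Hardy inequality (6) of Theorem 3.4 in the continuous case 𝕋 =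 ℝ.) -/
open MeasureTheory Set

/-- Continuous-on-`Icc` functions are in every `ℒr` on the restriction to `Ioc`. -/
lemma aux_memLp {a b : ℝ} {h : ℝ → ℝ} (hh : ContinuousOn h (Set.Icc a b)) (r : ENNReal) :
    MemLp h r (volume.restrict (Set.Ioc a b)) := by
  haveI : IsFiniteMeasure (volume.restrict (Set.Ioc a b)) :=
    ⟨by rw [Measure.restrict_apply_univ]; exact measure_Ioc_lt_top⟩
  obtain ⟨C, hC⟩ := isCompact_Icc.exists_bound_of_continuousOn hh
  exact MemLp.of_bound
    ((hh.mono Set.Ioc_subset_Icc_self).aestronglyMeasurable measurableSet_Ioc) C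
    (by filter_upwards [ae_restrict_mem measurableSet_Ioc] with x hx
        exact hC x (Set.Ioc_subset_Icc_self hx))

/-- Hardy inequality (6) of Theorem 3.4, continuous case 𝕋 = ℝ. -/
theorem hardy_inequality_continuous
    (a b p q : ℝ) (K : ℝ × ℝ → ℝ) (f φ ψ : ℝ → ℝ)
    (hab : a < b) (hp : 1 < p) (hpq : 1 / p + 1 / q = 1)
    (hK : ContinuousOn K (Set.Icc a b ×ˢ Set.Icc a b))
    (hKpos : ∀ z ∈ Set.Icc a b ×ˢ Set.Icc a b, 0 < K z)
    (hf : ContinuousOn f (Set.Icc a b)) (hfnn : ∀ t ∈ Set.Icc a b, 0 ≤ f t)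
    (hφ : ContinuousOn φ (Set.Icc a b)) (hφpos : ∀ t ∈ Set.Icc a b, 0 < φ t)
    (hψ : ContinuousOn ψ (Set.Icc a b)) (hψpos : ∀ t ∈ Set.Icc a b, 0 < ψ t)
    (F G : ℝ → ℝ)
    (hF : ∀ x, F x = ∫ y in a..b, K (x, y) * ψ y ^ (-p))
    (hG : ∀ y, G y = ∫ x in a..b, K (x, y) * φ x ^ (-q)) :
    (∫ y in a..b, G y ^ (1 - p) * ψ y ^ (-p) * (∫ x in a..b, K (x, y) * f x) ^ p)
      ≤ ∫ x in a..b, φ x ^ p * F x * f x ^ p := by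
  have hp0 : 0 < p := lt_trans one_pos hp
  have hpq' : p.HolderConjugate q := Real.holderConjugate_iff.mpr ⟨hp, by rw [inv_eq_one_div, inv_eq_one_div]; exact hpq⟩
  have hq0 : 0 < q := hpq'.symm.pos
  set μ : Measure ℝ := volume.restrict (Set.Ioc a b) with hμ
  -- RHS integrand nonneg
  have hFnn : ∀ x ∈ Set.Icc a b, 0 ≤ F x := by
    intro x hx
    rw [hF]
    exact intervalIntegral.integral_nonneg hab.le fun y hy =>
      mul_nonneg (hKpos (x, y) ⟨hx, hy⟩).le (Real.rpow_nonneg (hψpos y hy).le _)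
  have hRHSnn : 0 ≤ ∫ x in a..b, φ x ^ p * F x * f x ^ p :=
    intervalIntegral.integral_nonneg hab.le fun x hx =>
      mul_nonneg (mul_nonneg (Real.rpow_nonneg (hφpos x hx).le _) (hFnn x hx))
        (Real.rpow_nonneg (hfnn x hx) _)
  -- the pointwise (in y) inequality after Hölder
  have hpoint : ∀ y ∈ Set.Icc a b,
      G y ^ (1 - p) * ψ y ^ (-p) * (∫ x in Set.Ioc a b, K (x, y) * f x) ^ p
        ≤ ∫ x in Set.Ioc a b, ψ y ^ (-p) * (K (x, y) * (φ x ^ p * f x ^ p)) := by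
    intro y hy
    have hKy : ContinuousOn (fun x => K (x, y)) (Set.Icc a b) :=
      hK.comp (Continuous.continuousOn (by continuity)) fun x hx => ⟨hx, hy⟩
    have hKynn : ∀ x ∈ Set.Icc a b, 0 < K (x, y) := fun x hx => hKpos (x, y) ⟨hx, hy⟩
    have hψy : 0 < ψ y := hψpos y hy
    -- G y > 0
    have hGpos : 0 < G y := by
      rw [hG]
      apply intervalIntegral.intervalIntegral_pos_of_pos_on
      · apply ContinuousOn.intervalIntegrable
        rw [Set.uIcc_of_le hab.le]
        exact hKy.mul (hφ.rpow_const fun x hx => Or.inl (hφpos x hx).ne')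
      · intro x hx
        have hx' : x ∈ Set.Icc a b := Set.mem_Icc_of_Ioo hx
        exact mul_pos (hKynn x hx') (Real.rpow_pos_of_pos (hφpos x hx') _)
      · exact hab
    -- Hölder setup
    set u : ℝ → ℝ := fun x => K (x, y) ^ (1 / p) * (φ x * f x) with hu
    set v : ℝ → ℝ := fun x => K (x, y) ^ (1 / q) * (φ x)⁻¹ with hv
    have hucont : ContinuousOn u (Set.Icc a b) :=
      (hKy.rpow_const fun x hx => Or.inr (by positivity)).mul (hφ.mul hf)
    have hvcont : ContinuousOn v (Set.Icc a b) :=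
      (hKy.rpow_const fun x hx => Or.inr (by positivity)).mul
        (hφ.inv₀ fun x hx => (hφpos x hx).ne')
    have huv : ∀ x ∈ Set.Ioc a b, u x * v x = K (x, y) * f x := by
      intro x hx
      have hx' : x ∈ Set.Icc a b := Set.Ioc_subset_Icc_self hx
      have h1 : K (x, y) ^ (1 / p) * K (x, y) ^ (1 / q) = K (x, y) := by
        rw [← Real.rpow_add (hKynn x hx'), hpq, Real.rpow_one]
      have h2 : φ x * (φ x)⁻¹ = 1 := mul_inv_cancel₀ (hφpos x hx').ne'
      calc u x * v x = K (x, y) ^ (1 / p) * K (x, y) ^ (1 / q) * (φ x * (φ x)⁻¹) * f x := by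
            simp only [hu, hv]; ring
        _ = K (x, y) * f x := by rw [h1, h2, mul_one]
    have hup : ∀ x ∈ Set.Ioc a b, u x ^ p = K (x, y) * (φ x ^ p * f x ^ p) := by
      intro x hx
      have hx' : x ∈ Set.Icc a b := Set.Ioc_subset_Icc_self hx
      rw [hu, Real.mul_rpow (Real.rpow_nonneg (hKynn x hx').le _)
          (mul_nonneg (hφpos x hx').le (hfnn x hx')),
        ← Real.rpow_mul (hKynn x hx').le, one_div_mul_cancel hp0.ne', Real.rpow_one,
        Real.mul_rpow (hφpos x hx').le (hfnn x hx')]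
    have hvq : ∀ x ∈ Set.Ioc a b, v x ^ q = K (x, y) * φ x ^ (-q) := by
      intro x hx
      have hx' : x ∈ Set.Icc a b := Set.Ioc_subset_Icc_self hx
      rw [hv, Real.mul_rpow (Real.rpow_nonneg (hKynn x hx').le _) (inv_nonneg.mpr (hφpos x hx').le),
        ← Real.rpow_mul (hKynn x hx').le, one_div_mul_cancel hq0.ne', Real.rpow_one,
        Real.inv_rpow (hφpos x hx').le, ← Real.rpow_neg (hφpos x hx').le]
    set A : ℝ := ∫ x in Set.Ioc a b, K (x, y) * (φ x ^ p * f x ^ p) with hA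
    have hAnn : 0 ≤ A :=
      setIntegral_nonneg measurableSet_Ioc fun x hx =>
        mul_nonneg (hKynn x (Set.Ioc_subset_Icc_self hx)).le
          (mul_nonneg (Real.rpow_nonneg (hφpos x (Set.Ioc_subset_Icc_self hx)).le _)
            (Real.rpow_nonneg (hfnn x (Set.Ioc_subset_Icc_self hx)) _))
    -- Hölder
    have hHolder : ∫ x in Set.Ioc a b, K (x, y) * f x ≤ A ^ (1 / p) * G y ^ (1 / q) := by
      have h1 : ∫ x in Set.Ioc a b, K (x, y) * f x = ∫ x in Set.Ioc a b, u x * v x :=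
        (setIntegral_congr_fun measurableSet_Ioc fun x hx => huv x hx).symm
      have h2 : ∫ x in Set.Ioc a b, u x ^ p = A :=
        setIntegral_congr_fun measurableSet_Ioc fun x hx => hup x hx
      have h3 : ∫ x in Set.Ioc a b, v x ^ q = G y := by
        rw [hG, intervalIntegral.integral_of_le hab.le]
        exact setIntegral_congr_fun measurableSet_Ioc fun x hx => hvq x hx
      rw [h1, ← h2, ← h3]
      apply integral_mul_le_Lp_mul_Lq_of_nonneg hpq'
      · filter_upwards [ae_restrict_mem measurableSet_Ioc] with x hx
        have hx' : x ∈ Set.Icc a b := Set.Ioc_subset_Icc_self hx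
        exact mul_nonneg (Real.rpow_nonneg (hKynn x hx').le _)
          (mul_nonneg (hφpos x hx').le (hfnn x hx'))
      · filter_upwards [ae_restrict_mem measurableSet_Ioc] with x hx
        have hx' : x ∈ Set.Icc a b := Set.Ioc_subset_Icc_self hx
        exact mul_nonneg (Real.rpow_nonneg (hKynn x hx').le _)
          (inv_nonneg.mpr (hφpos x hx').le)
      · exact aux_memLp hucont _
      · exact aux_memLp hvcont _
    have hKfnn : 0 ≤ ∫ x in Set.Ioc a b, K (x, y) * f x :=
      setIntegral_nonneg measurableSet_Ioc fun x hx =>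
        mul_nonneg (hKynn x (Set.Ioc_subset_Icc_self hx)).le
          (hfnn x (Set.Ioc_subset_Icc_self hx))
    have hqp : 1 / q * p = p - 1 := by
      have h1q : 1 / q = 1 - 1 / p := by linarith
      rw [h1q]; field_simp
    have hpow : (∫ x in Set.Ioc a b, K (x, y) * f x) ^ p ≤ A * G y ^ (p - 1) := by
      calc (∫ x in Set.Ioc a b, K (x, y) * f x) ^ p
          ≤ (A ^ (1 / p) * G y ^ (1 / q)) ^ p := Real.rpow_le_rpow hKfnn hHolder hp0.le
        _ = A * G y ^ (p - 1) := by
            rw [Real.mul_rpow (Real.rpow_nonneg hAnn _) (Real.rpow_nonneg hGpos.le _),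
              ← Real.rpow_mul hAnn, ← Real.rpow_mul hGpos.le,
              one_div_mul_cancel hp0.ne', Real.rpow_one, hqp]
    have hGone : G y ^ (1 - p) * G y ^ (p - 1) = 1 := by
      rw [← Real.rpow_add hGpos]
      norm_num
    calc G y ^ (1 - p) * ψ y ^ (-p) * (∫ x in Set.Ioc a b, K (x, y) * f x) ^ p
        ≤ G y ^ (1 - p) * ψ y ^ (-p) * (A * G y ^ (p - 1)) := by
          apply mul_le_mul_of_nonneg_left hpow (by positivity)
      _ = ψ y ^ (-p) * A * (G y ^ (1 - p) * G y ^ (p - 1)) := by ring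
      _ = ψ y ^ (-p) * A := by rw [hGone, mul_one]
      _ = ∫ x in Set.Ioc a b, ψ y ^ (-p) * (K (x, y) * (φ x ^ p * f x ^ p)) :=
          (integral_const_mul _ _).symm
  -- pass to Ioc integrals
  simp only [intervalIntegral.integral_of_le hab.le] at hRHSnn ⊢
  by_cases hLI : IntegrableOn
      (fun y => G y ^ (1 - p) * ψ y ^ (-p) * (∫ x in Set.Ioc a b, K (x, y) * f x) ^ p)
      (Set.Ioc a b) volume
  swap
  · rw [integral_undef hLI]; exact hRHSnn
  · -- the kernel function for Fubini
    set H : ℝ × ℝ → ℝ := fun z => ψ z.2 ^ (-p) * (K z * (φ z.1 ^ p * f z.1 ^ p)) with hH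
    have hHcont : ContinuousOn H (Set.Icc a b ×ˢ Set.Icc a b) := by
      apply ContinuousOn.mul
      · exact (hψ.comp continuous_snd.continuousOn fun z hz => hz.2).rpow_const
          fun z hz => Or.inl (hψpos _ hz.2).ne'
      · exact hK.mul
          (((hφ.comp continuous_fst.continuousOn fun z hz => hz.1).rpow_const
              fun z hz => Or.inl (hφpos _ hz.1).ne').mul
            ((hf.comp continuous_fst.continuousOn fun z hz => hz.1).rpow_const
              fun z hz => Or.inr hp0.le))
    have hHint : Integrable H (μ.prod μ) := by
      have h1 : IntegrableOn H (Set.Icc a b ×ˢ Set.Icc a b) (volume.prod volume) := by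
        rw [← Measure.volume_eq_prod]
        exact hHcont.integrableOn_compact (isCompact_Icc.prod isCompact_Icc)
      have h2 : IntegrableOn H (Set.Ioc a b ×ˢ Set.Ioc a b) (volume.prod volume) :=
        h1.mono_set (Set.prod_mono Set.Ioc_subset_Icc_self Set.Ioc_subset_Icc_self)
      rwa [IntegrableOn, ← Measure.prod_restrict] at h2
    have hMI : Integrable (fun y => ∫ x, H (x, y) ∂μ) μ := hHint.integral_prod_right
    calc ∫ y in Set.Ioc a b, G y ^ (1 - p) * ψ y ^ (-p) *
            (∫ x in Set.Ioc a b, K (x, y) * f x) ^ p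
        ≤ ∫ y in Set.Ioc a b, ∫ x in Set.Ioc a b,
            ψ y ^ (-p) * (K (x, y) * (φ x ^ p * f x ^ p)) := by
          apply integral_mono_ae hLI hMI
          filter_upwards [ae_restrict_mem measurableSet_Ioc] with y hy
          exact hpoint y (Set.Ioc_subset_Icc_self hy)
      _ = ∫ x in Set.Ioc a b, ∫ y in Set.Ioc a b,
            ψ y ^ (-p) * (K (x, y) * (φ x ^ p * f x ^ p)) :=
          (integral_integral_swap (f := fun x y =>
            ψ y ^ (-p) * (K (x, y) * (φ x ^ p * f x ^ p))) hHint).symm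
      _ = ∫ x in Set.Ioc a b, φ x ^ p * F x * f x ^ p := by
          apply setIntegral_congr_fun measurableSet_Ioc
          intro x hx
          have h1 : ∫ y in Set.Ioc a b, ψ y ^ (-p) * (K (x, y) * (φ x ^ p * f x ^ p))
              = ∫ y in Set.Ioc a b, (K (x, y) * ψ y ^ (-p)) * (φ x ^ p * f x ^ p) :=
            setIntegral_congr_fun measurableSet_Ioc fun y hy => by ring
          have h2 : F x = ∫ y in Set.Ioc a b, K (x, y) * ψ y ^ (-p) := by
            rw [hF, intervalIntegral.integral_of_le hab.le]
          simp only [h1, integral_mul_const, ← h2]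
          ring
end

section
/- Let a < b be real numbers and let p > 1, q with 1/p + 1/q = 1. Let K : ℝ × ℝ → ℝ be continuous and positive on [a,b] × [a,b], let f : ℝ → ℝ be continuous and nonnegative on [a,b], and let φ, ψ : ℝ → ℝ be continuous and positive on [a,b]. Define F(x) = ∫_a^b K(x,y)·ψ(y)^(−p) dy and G(y) = ∫_a^b K(x,y)·φ(x)^(−q) dx. Assume that for every continuous nonnegative function g : ℝ → ℝ the inequality ∫_a^b ∫_a^b K(x,y)·f(x)·g(y) dx dy ≤ (∫_a^b φ(x)^p·F(x)·f(x)^p dx)^(1/p) · (∫_a^b ψ(y)^q·G(y)·g(y)^q dy)^(1/q) holds. Then ∫_a^b G(y)^(1−p)·ψ(y)^(−p)·(∫_a^b K(x,y)·f(x) dx)^p dy ≤ ∫_a^b φ(x)^p·F(x)·f(x)^p dx. (One direction of the equivalence asserted in Theorem 3.4, continuous case.) -/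
open Set MeasureTheory intervalIntegral

/-- Continuity of a parametric interval integral with a kernel continuous on a square. -/
lemma param_cont_aux {a b : ℝ} (hab : a ≤ b) (K : ℝ × ℝ → ℝ) (u : ℝ → ℝ)
    (hK : ContinuousOn K (Set.Icc a b ×ˢ Set.Icc a b)) (hu : ContinuousOn u (Set.Icc a b)) :
    ContinuousOn (fun y => ∫ x in a..b, K (x, y) * u x) (Set.Icc a b) := by
  obtain ⟨M, hM⟩ := ((isCompact_Icc (a := a) (b := b)).prod isCompact_Icc).exists_bound_of_continuousOn hK
  obtain ⟨N, hN⟩ := (isCompact_Icc (a := a) (b := b)).exists_bound_of_continuousOn hu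
  have hM0 : 0 ≤ M := le_trans (norm_nonneg _)
    (hM (a, a) ⟨left_mem_Icc.mpr hab, left_mem_Icc.mpr hab⟩)
  have hIoc : Set.uIoc a b ⊆ Set.Icc a b := by
    rw [Set.uIoc_of_le hab]; exact Set.Ioc_subset_Icc_self
  intro y₀ hy₀
  apply intervalIntegral.continuousWithinAt_of_dominated_interval
    (bound := fun _ => M * N)
  · filter_upwards [self_mem_nhdsWithin] with y hy
    have hcont : ContinuousOn (fun x => K (x, y) * u x) (Set.Icc a b) := by
      refine ContinuousOn.mul ?_ hu
      exact hK.comp ((continuous_id.prodMk continuous_const).continuousOn)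
        (fun x hx => ⟨hx, hy⟩)
    exact ((hcont.mono hIoc).aestronglyMeasurable measurableSet_uIoc)
  · filter_upwards [self_mem_nhdsWithin] with y hy
    filter_upwards with t ht
    have ht' : t ∈ Set.Icc a b := hIoc ht
    rw [norm_mul]
    exact mul_le_mul (hM (t, y) ⟨ht', hy⟩) (hN t ht') (norm_nonneg _) hM0
  · exact intervalIntegrable_const
  · filter_upwards with t ht
    have ht' : t ∈ Set.Icc a b := hIoc ht
    have : ContinuousOn (fun y => K (t, y)) (Set.Icc a b) :=
      hK.comp ((continuous_const.prodMk continuous_id).continuousOn)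
        (fun y hy => ⟨ht', hy⟩)
    exact ((this.continuousWithinAt hy₀).mul continuousWithinAt_const)

/-- Direction (5) ⟹ (6) of the equivalence in Theorem 3.4, continuous case 𝕋 = ℝ. -/
theorem hardy_equivalence_forward_continuous
    (a b p q : ℝ) (K : ℝ × ℝ → ℝ) (f φ ψ : ℝ → ℝ)
    (hab : a < b) (hp : 1 < p) (hpq : 1 / p + 1 / q = 1)
    (hK : ContinuousOn K (Set.Icc a b ×ˢ Set.Icc a b))
    (hKpos : ∀ z ∈ Set.Icc a b ×ˢ Set.Icc a b, 0 < K z)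
    (hf : ContinuousOn f (Set.Icc a b)) (hfnn : ∀ t ∈ Set.Icc a b, 0 ≤ f t)
    (hφ : ContinuousOn φ (Set.Icc a b)) (hφpos : ∀ t ∈ Set.Icc a b, 0 < φ t)
    (hψ : ContinuousOn ψ (Set.Icc a b)) (hψpos : ∀ t ∈ Set.Icc a b, 0 < ψ t)
    (F G : ℝ → ℝ)
    (hF : ∀ x, F x = ∫ y in a..b, K (x, y) * ψ y ^ (-p))
    (hG : ∀ y, G y = ∫ x in a..b, K (x, y) * φ x ^ (-q))
    (h5 : ∀ g : ℝ → ℝ, Continuous g → (∀ t, 0 ≤ g t) →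
      (∫ y in a..b, ∫ x in a..b, K (x, y) * f x * g y)
        ≤ (∫ x in a..b, φ x ^ p * F x * f x ^ p) ^ (1 / p) *
          (∫ y in a..b, ψ y ^ q * G y * g y ^ q) ^ (1 / q)) :
    (∫ y in a..b, G y ^ (1 - p) * ψ y ^ (-p) * (∫ x in a..b, K (x, y) * f x) ^ p)
      ≤ ∫ x in a..b, φ x ^ p * F x * f x ^ p := by
  have hp0 : (0:ℝ) < p := lt_trans one_pos hp
  have h1p : 1 / p < 1 := (div_lt_one hp0).mpr hp
  have h1p0 : 0 < 1 / p := by positivity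
  have hq0 : (0:ℝ) < q := one_div_pos.mp (by linarith)
  have hq1 : (1:ℝ) < q := (div_lt_one hq0).mp (by linarith)
  have hpq' : p + q = p * q := by
    field_simp at hpq; linarith
  -- A y := inner integral
  set A : ℝ → ℝ := fun y => ∫ x in a..b, K (x, y) * f x with hA_def
  have hA_nonneg : ∀ y ∈ Set.Icc a b, 0 ≤ A y := by
    intro y hy
    apply intervalIntegral.integral_nonneg hab.le
    intro x hx
    exact mul_nonneg (hKpos (x, y) ⟨hx, hy⟩).le (hfnn x hx)
  have hA_cont : ContinuousOn A (Set.Icc a b) :=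
    param_cont_aux hab.le K f hK hf
  have hG_cont : ContinuousOn G (Set.Icc a b) := by
    refine (param_cont_aux hab.le K (fun x => φ x ^ (-q)) hK ?_).congr (fun y _ => hG y)
    exact hφ.rpow_const (fun x hx => Or.inl (hφpos x hx).ne')
  have hG_pos : ∀ y ∈ Set.Icc a b, 0 < G y := by
    intro y hy
    rw [hG y]
    apply intervalIntegral_pos_of_pos_on
    · apply ContinuousOn.intervalIntegrable
      rw [Set.uIcc_of_le hab.le]
      refine ContinuousOn.mul ?_ (hφ.rpow_const (fun x hx => Or.inl (hφpos x hx).ne'))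
      exact hK.comp ((continuous_id.prodMk continuous_const).continuousOn) (fun x hx => ⟨hx, hy⟩)
    · intro x hx
      have hx' : x ∈ Set.Icc a b := Set.Ioo_subset_Icc_self hx
      exact mul_pos (hKpos (x, y) ⟨hx', hy⟩) (Real.rpow_pos_of_pos (hφpos x hx') _)
    · exact hab
  -- the test function g
  set h : ℝ → ℝ := fun t => G t ^ (1 - p) * ψ t ^ (-p) * A t ^ (p - 1) with hh_def
  set proj : ℝ → ℝ := fun y => max a (min y b) with hproj_def
  have hproj_mem : ∀ y, proj y ∈ Set.Icc a b := fun y =>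
    ⟨le_max_left _ _, max_le hab.le (min_le_right _ _)⟩
  have hproj_cont : Continuous proj := continuous_const.max (continuous_id.min continuous_const)
  set g : ℝ → ℝ := fun y => h (proj y) with hg_def
  have hh_cont : ContinuousOn h (Set.Icc a b) := by
    refine ContinuousOn.mul (ContinuousOn.mul ?_ ?_) ?_
    · exact hG_cont.rpow_const (fun t ht => Or.inl (hG_pos t ht).ne')
    · exact hψ.rpow_const (fun t ht => Or.inl (hψpos t ht).ne')
    · exact hA_cont.rpow_const (fun t _ => Or.inr (by linarith))
  have hg_cont : Continuous g := hh_cont.comp_continuous hproj_cont hproj_mem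
  have hg_nonneg : ∀ t, 0 ≤ g t := by
    intro t
    have ht := hproj_mem t
    refine mul_nonneg (mul_nonneg ?_ ?_) ?_
    · exact Real.rpow_nonneg (hG_pos _ ht).le _
    · exact Real.rpow_nonneg (hψpos _ ht).le _
    · exact Real.rpow_nonneg (hA_nonneg _ ht) _
  have hg_eq : ∀ y ∈ Set.Icc a b, g y = G y ^ (1 - p) * ψ y ^ (-p) * A y ^ (p - 1) := by
    intro y hy
    have : proj y = y := by
      simp only [hproj_def, min_eq_left hy.2, max_eq_right hy.1]
    simp only [hg_def, hh_def, this]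
  -- target integrand
  set J : ℝ := ∫ y in a..b, G y ^ (1 - p) * ψ y ^ (-p) * A y ^ p with hJ_def
  have hJ_nonneg : 0 ≤ J := by
    apply intervalIntegral.integral_nonneg hab.le
    intro y hy
    exact mul_nonneg (mul_nonneg (Real.rpow_nonneg (hG_pos y hy).le _)
      (Real.rpow_nonneg (hψpos y hy).le _)) (Real.rpow_nonneg (hA_nonneg y hy) _)
  set I : ℝ := ∫ x in a..b, φ x ^ p * F x * f x ^ p with hI_def
  have hF_nonneg : ∀ x ∈ Set.Icc a b, 0 ≤ F x := by
    intro x hx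
    rw [hF x]
    apply intervalIntegral.integral_nonneg hab.le
    intro y hy
    exact mul_nonneg (hKpos (x, y) ⟨hx, hy⟩).le (Real.rpow_nonneg (hψpos y hy).le _)
  have hI_nonneg : 0 ≤ I := by
    apply intervalIntegral.integral_nonneg hab.le
    intro x hx
    exact mul_nonneg (mul_nonneg (Real.rpow_nonneg (hφpos x hx).le _) (hF_nonneg x hx))
      (Real.rpow_nonneg (hfnn x hx) _)
  -- rewrite LHS of h5
  have E1 : (∫ y in a..b, ∫ x in a..b, K (x, y) * f x * g y) = J := by
    apply intervalIntegral.integral_congr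
    rw [Set.uIcc_of_le hab.le]
    intro y hy
    dsimp only
    rw [intervalIntegral.integral_mul_const, hg_eq y hy]
    show A y * _ = _
    rcases eq_or_lt_of_le (hA_nonneg y hy) with hA0 | hApos
    · rw [← hA0, Real.zero_rpow (by linarith : p - 1 ≠ 0), Real.zero_rpow hp0.ne']
      ring
    · have : A y ^ (p - 1) * A y = A y ^ p := by
        nth_rewrite 2 [← Real.rpow_one (A y)]
        rw [← Real.rpow_add hApos]; norm_num
      calc A y * (G y ^ (1 - p) * ψ y ^ (-p) * A y ^ (p - 1))
          = G y ^ (1 - p) * ψ y ^ (-p) * (A y ^ (p - 1) * A y) := by ring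
        _ = _ := by rw [this]
  -- rewrite RHS second factor of h5
  have E2 : (∫ y in a..b, ψ y ^ q * G y * g y ^ q) = J := by
    apply intervalIntegral.integral_congr
    rw [Set.uIcc_of_le hab.le]
    intro y hy
    have hGy := hG_pos y hy
    have hψy := hψpos y hy
    have hAy := hA_nonneg y hy
    dsimp only
    rw [hg_eq y hy]
    rw [Real.mul_rpow (by positivity) (Real.rpow_nonneg hAy _),
        Real.mul_rpow (by positivity) (by positivity),
        ← Real.rpow_mul hGy.le, ← Real.rpow_mul hψy.le, ← Real.rpow_mul hAy]
    have e1 : (1 - p) * q = -p := by linear_combination hpq'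
    have e2 : (p - 1) * q = p := by linear_combination -hpq'
    rw [e1, e2]
    have hGc : G y * G y ^ (-p : ℝ) = G y ^ (1 - p) := by
      nth_rewrite 1 [← Real.rpow_one (G y)]
      rw [← Real.rpow_add hGy]; congr 1
    have hψc : ψ y ^ q * ψ y ^ (-p * q) = ψ y ^ (-p) := by
      rw [← Real.rpow_add hψy]; congr 1; linear_combination hpq'
    calc ψ y ^ q * G y * (G y ^ (-p : ℝ) * ψ y ^ (-p * q) * A y ^ p)
        = (G y * G y ^ (-p : ℝ)) * (ψ y ^ q * ψ y ^ (-p * q)) * A y ^ p := by ring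
      _ = _ := by rw [hGc, hψc]
  have key : J ≤ I ^ (1 / p) * J ^ (1 / q) := by
    have := h5 g hg_cont hg_nonneg
    rwa [E1, E2] at this
  rcases eq_or_lt_of_le hJ_nonneg with hJ0 | hJpos
  · rw [← hJ0]; exact hI_nonneg
  · have hJq : (0:ℝ) < J ^ (1 / q) := Real.rpow_pos_of_pos hJpos _
    have hsplit : J = J ^ (1 / p) * J ^ (1 / q) := by
      rw [← Real.rpow_add hJpos, hpq, Real.rpow_one]
    have h1 : J ^ (1 / p) ≤ I ^ (1 / p) := by
      have h2 : J ^ (1 / p) * J ^ (1 / q) ≤ I ^ (1 / p) * J ^ (1 / q) := by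
        rw [← hsplit]; exact key
      exact le_of_mul_le_mul_right h2 hJq
    calc J = (J ^ (1 / p)) ^ p := by
            rw [← Real.rpow_mul hJ_nonneg, one_div_mul_cancel hp0.ne', Real.rpow_one]
      _ ≤ (I ^ (1 / p)) ^ p := Real.rpow_le_rpow (Real.rpow_nonneg hJ_nonneg _) h1 hp0.le
      _ = I := by rw [← Real.rpow_mul hI_nonneg, one_div_mul_cancel hp0.ne', Real.rpow_one]
end

section
/- Let a < b be real numbers and let p > 1, q with 1/p + 1/q = 1. Let K : ℝ × ℝ → ℝ be continuous and positive on [a,b] × [a,b], let f, g : ℝ → ℝ be continuous and nonnegative on [a,b], and let φ, ψ : ℝ → ℝ be continuous and positive on [a,b]. Define F(x) = ∫_a^b K(x,y)·ψ(y)^(−p) dy and G(y) = ∫_a^b K(x,y)·φ(x)^(−q) dx. Assume that ∫_a^b G(y)^(1−p)·ψ(y)^(−p)·(∫_a^b K(x,y)·f(x) dx)^p dy ≤ ∫_a^b φ(x)^p·F(x)·f(x)^p dx. Then ∫_a^b ∫_a^b K(x,y)·f(x)·g(y) dx dy ≤ (∫_a^b φ(x)^p·F(x)·f(x)^p dx)^(1/p)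 · (∫_a^b ψ(y)^q·G(y)·g(y)^q dy)^(1/q). (The other direction of the equivalence asserted in Theorem 3.4, continuous case.) -/
open MeasureTheory Set intervalIntegral

lemma my_ext {X : Type*} [TopologicalSpace X] [NormalSpace X] {s : Set X} (hs : IsClosed s)
    {h : X → ℝ} (hh : ContinuousOn h s) : ∃ H : X → ℝ, Continuous H ∧ ∀ x ∈ s, H x = h x := by
  obtain ⟨g, hg⟩ := ContinuousMap.exists_restrict_eq hs ⟨s.restrict h, hh.restrict⟩
  exact ⟨g, g.continuous, fun x hx => congrFun (congrArg ContinuousMap.toFun hg) ⟨x, hx⟩⟩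

lemma my_memLp {h : ℝ → ℝ} {a b : ℝ} (hc : ContinuousOn h (Set.Icc a b)) (r : ENNReal) :
    MemLp h r (volume.restrict (Set.Ioc a b)) := by
  haveI : IsFiniteMeasure (volume.restrict (Set.Ioc a b)) := by
    constructor
    rw [Measure.restrict_apply MeasurableSet.univ, Set.univ_inter, Real.volume_Ioc]
    exact ENNReal.ofReal_lt_top
  obtain ⟨C, hC⟩ := (isCompact_Icc).exists_bound_of_continuousOn hc
  refine MemLp.of_bound ((hc.mono Set.Ioc_subset_Icc_self).aestronglyMeasurable measurableSet_Ioc) C ?_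
  filter_upwards [ae_restrict_mem measurableSet_Ioc] with x hx
  exact hC x (Set.Ioc_subset_Icc_self hx)



/-- Direction (6) ⟹ (5) of the equivalence in Theorem 3.4, continuous case 𝕋 = ℝ. -/
theorem hardy_equivalence_backward_continuous
    (a b p q : ℝ) (K : ℝ × ℝ → ℝ) (f g φ ψ : ℝ → ℝ)
    (hab : a < b) (hp : 1 < p) (hpq : 1 / p + 1 / q = 1)
    (hK : ContinuousOn K (Set.Icc a b ×ˢ Set.Icc a b))
    (hKpos : ∀ z ∈ Set.Icc a b ×ˢ Set.Icc a b, 0 < K z)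
    (hf : ContinuousOn f (Set.Icc a b)) (hfnn : ∀ t ∈ Set.Icc a b, 0 ≤ f t)
    (hg : ContinuousOn g (Set.Icc a b)) (hgnn : ∀ t ∈ Set.Icc a b, 0 ≤ g t)
    (hφ : ContinuousOn φ (Set.Icc a b)) (hφpos : ∀ t ∈ Set.Icc a b, 0 < φ t)
    (hψ : ContinuousOn ψ (Set.Icc a b)) (hψpos : ∀ t ∈ Set.Icc a b, 0 < ψ t)
    (F G : ℝ → ℝ)
    (hF : ∀ x, F x = ∫ y in a..b, K (x, y) * ψ y ^ (-p))
    (hG : ∀ y, G y = ∫ x in a..b, K (x, y) * φ x ^ (-q))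
    (h6 : (∫ y in a..b, G y ^ (1 - p) * ψ y ^ (-p) * (∫ x in a..b, K (x, y) * f x) ^ p)
      ≤ ∫ x in a..b, φ x ^ p * F x * f x ^ p) :
    (∫ y in a..b, ∫ x in a..b, K (x, y) * f x * g y)
      ≤ (∫ x in a..b, φ x ^ p * F x * f x ^ p) ^ (1 / p) *
        (∫ y in a..b, ψ y ^ q * G y * g y ^ q) ^ (1 / q) := by
  have hp0 : (0:ℝ) < p := lt_trans one_pos hp
  have h1p : 1 / p < 1 := by rw [div_lt_one hp0]; exact hp
  have h1p0 : 0 < 1 / p := by positivity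
  have h1q : 1 / q = 1 - 1 / p := by linarith
  have h1q0 : 0 < 1 / q := by rw [h1q]; linarith
  have hq0 : (0:ℝ) < q := by
    rcases lt_trichotomy q 0 with h | h | h
    · exfalso; have : 1 / q < 0 := div_neg_of_pos_of_neg one_pos h; linarith
    · exfalso; rw [h] at h1q0; simp at h1q0
    · exact h
  have hcpq : Real.HolderConjugate p q :=
    Real.holderConjugate_iff.mpr ⟨hp, by rw [← one_div, ← one_div]; exact hpq⟩
  set μ := volume.restrict (Set.Ioc a b) with hμ
  set I := Set.Icc a b with hI
  have hIoc : Set.Ioc a b ⊆ I := Set.Ioc_subset_Icc_self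
  have hsq : IsClosed (I ×ˢ I) := isClosed_Icc.prod isClosed_Icc
  -- continuous extensions
  have cKf : ContinuousOn (fun z : ℝ × ℝ => K z * f z.1) (I ×ˢ I) :=
    hK.mul (hf.comp continuous_fst.continuousOn fun z hz => hz.1)
  have cφq : ContinuousOn (fun x => φ x ^ (-q)) I :=
    hφ.rpow_const fun x hx => Or.inl (hφpos x hx).ne'
  have cKφ : ContinuousOn (fun z : ℝ × ℝ => K z * φ z.1 ^ (-q)) (I ×ˢ I) :=
    hK.mul (cφq.comp continuous_fst.continuousOn fun z hz => hz.1)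
  obtain ⟨KF, hKFc, hKFeq⟩ := my_ext hsq cKf
  obtain ⟨KP, hKPc, hKPeq⟩ := my_ext hsq cKφ
  obtain ⟨Si, hSic, hSieq⟩ := my_ext isClosed_Icc (hψ.inv₀ fun y hy => (hψpos y hy).ne')
  obtain ⟨Se, hSec, hSeeq⟩ := my_ext isClosed_Icc hψ
  obtain ⟨Ge, hGec, hGeeq⟩ := my_ext isClosed_Icc hg
  -- parametric integrals
  set E := fun y : ℝ => ∫ x in a..b, KF (x, y) with hE
  have hEc : Continuous E :=
    intervalIntegral.continuous_parametric_intervalIntegral_of_continuous'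
      (f := fun y x => KF (x, y)) (hKFc.comp (continuous_snd.prodMk continuous_fst)) a b
  have hEeq : ∀ y ∈ I, E y = ∫ x in a..b, K (x, y) * f x := by
    intro y hy
    refine intervalIntegral.integral_congr fun x hx => ?_
    rw [Set.uIcc_of_le hab.le] at hx
    exact hKFeq (x, y) ⟨hx, hy⟩
  set Gc := fun y : ℝ => ∫ x in a..b, KP (x, y) with hGc
  have hGcc : Continuous Gc :=
    intervalIntegral.continuous_parametric_intervalIntegral_of_continuous'
      (f := fun y x => KP (x, y)) (hKPc.comp (continuous_snd.prodMk continuous_fst)) a b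
  have hGceq : ∀ y ∈ I, Gc y = G y := by
    intro y hy
    rw [hG y]
    refine intervalIntegral.integral_congr fun x hx => ?_
    rw [Set.uIcc_of_le hab.le] at hx
    exact hKPeq (x, y) ⟨hx, hy⟩
  -- positivity of G
  have hGpos : ∀ y ∈ I, 0 < G y := by
    intro y hy
    rw [hG y]
    apply intervalIntegral.intervalIntegral_pos_of_pos_on
    · apply ContinuousOn.intervalIntegrable
      rw [Set.uIcc_of_le hab.le]
      exact (hK.comp (continuous_id.prodMk continuous_const).continuousOn
        fun x hx => ⟨hx, hy⟩).mul cφq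
    · intro x hx
      exact mul_pos (hKpos (x, y) ⟨Set.Ioo_subset_Icc_self hx, hy⟩)
        (Real.rpow_pos_of_pos (hφpos x (Set.Ioo_subset_Icc_self hx)) _)
    · exact hab
  -- nonnegativity of E
  have hEnn : ∀ y ∈ I, 0 ≤ E y := by
    intro y hy
    rw [hEeq y hy]
    apply intervalIntegral.integral_nonneg hab.le
    intro x hx
    exact mul_nonneg (hKpos (x, y) ⟨hx, hy⟩).le (hfnn x hx)
  -- Hölder setup
  set A := fun y : ℝ => Gc y ^ (-(1/q)) * Si y * E y with hA
  set B := fun y : ℝ => Se y * Gc y ^ (1/q) * Ge y with hB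
  have cA : ContinuousOn A I :=
    ((hGcc.continuousOn.rpow_const fun y hy =>
      Or.inl (by rw [hGceq y hy]; exact (hGpos y hy).ne')).mul
      hSic.continuousOn).mul hEc.continuousOn
  have cB : ContinuousOn B I :=
    ((hSec.continuousOn.mul (hGcc.continuousOn.rpow_const fun y hy =>
      Or.inl (by rw [hGceq y hy]; exact (hGpos y hy).ne'))).mul hGec.continuousOn)
  have hAmem : MemLp A (ENNReal.ofReal p) μ := my_memLp cA _
  have hBmem : MemLp B (ENNReal.ofReal q) μ := my_memLp cB _
  have hAnn : 0 ≤ᵐ[μ] A := by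
    filter_upwards [ae_restrict_mem measurableSet_Ioc] with y hy
    have hyI : y ∈ I := hIoc hy
    refine mul_nonneg (mul_nonneg ?_ ?_) (hEnn y hyI)
    · exact Real.rpow_nonneg (by rw [hGceq y hyI]; exact (hGpos y hyI).le) _
    · rw [hSieq y hyI]; exact inv_nonneg.mpr (hψpos y hyI).le
  have hBnn : 0 ≤ᵐ[μ] B := by
    filter_upwards [ae_restrict_mem measurableSet_Ioc] with y hy
    have hyI : y ∈ I := hIoc hy
    refine mul_nonneg (mul_nonneg ?_ ?_) ?_
    · rw [hSeeq y hyI]; exact (hψpos y hyI).le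
    · exact Real.rpow_nonneg (by rw [hGceq y hyI]; exact (hGpos y hyI).le) _
    · rw [hGeeq y hyI]; exact hgnn y hyI
  have hold := MeasureTheory.integral_mul_le_Lp_mul_Lq_of_nonneg hcpq hAnn hBnn hAmem hBmem
  -- arithmetic identities
  have key1 : -(1/q) * p = 1 - p := by
    rw [h1q]; field_simp; ring
  have key2 : (1/q) * q = 1 := div_mul_cancel₀ 1 hq0.ne'
  -- identity 1 : the LHS
  have e1 : (∫ y in a..b, ∫ x in a..b, K (x, y) * f x * g y) = ∫ y, A y * B y ∂μ := by
    rw [intervalIntegral.integral_of_le hab.le]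
    refine integral_congr_ae ?_
    filter_upwards [ae_restrict_mem measurableSet_Ioc] with y hy
    have hyI : y ∈ I := hIoc hy
    have hGy : 0 < G y := hGpos y hyI
    have : (∫ x in a..b, K (x, y) * f x * g y) = (∫ x in a..b, K (x, y) * f x) * g y := by
      rw [← intervalIntegral.integral_mul_const]
    rw [this]
    have hAB : A y * B y = (G y ^ (-(1/q)) * G y ^ (1/q)) * ((ψ y)⁻¹ * ψ y) *
        ((∫ x in a..b, K (x, y) * f x) * g y) := by
      simp only [hA, hB]
      rw [hGceq y hyI, hSieq y hyI, hEeq y hyI, hSeeq y hyI, hGeeq y hyI, Pi.inv_apply]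
      ring
    rw [hAB, ← Real.rpow_add hGy, neg_add_cancel, Real.rpow_zero,
      inv_mul_cancel₀ (hψpos y hyI).ne', one_mul, one_mul]
  -- identity 2 : A^p
  have e2 : (∫ y in a..b, G y ^ (1 - p) * ψ y ^ (-p) * (∫ x in a..b, K (x, y) * f x) ^ p)
      = ∫ y, A y ^ p ∂μ := by
    rw [intervalIntegral.integral_of_le hab.le]
    refine integral_congr_ae ?_
    filter_upwards [ae_restrict_mem measurableSet_Ioc] with y hy
    have hyI : y ∈ I := hIoc hy
    have hGy : 0 < G y := hGpos y hyI
    have hψy : 0 < ψ y := hψpos y hyI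
    have hEy : 0 ≤ E y := hEnn y hyI
    have : A y = G y ^ (-(1/q)) * (ψ y)⁻¹ * E y := by
      simp only [hA]; rw [hGceq y hyI, hSieq y hyI, Pi.inv_apply]
    rw [this, Real.mul_rpow (mul_nonneg (Real.rpow_nonneg hGy.le _)
        (inv_nonneg.mpr hψy.le)) hEy,
      Real.mul_rpow (Real.rpow_nonneg hGy.le _) (inv_nonneg.mpr hψy.le),
      ← Real.rpow_mul hGy.le, key1, Real.inv_rpow hψy.le, ← Real.rpow_neg hψy.le,
      hEeq y hyI]
  -- identity 3 : B^q
  have e3 : (∫ y in a..b, ψ y ^ q * G y * g y ^ q) = ∫ y, B y ^ q ∂μ := by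
    rw [intervalIntegral.integral_of_le hab.le]
    refine integral_congr_ae ?_
    filter_upwards [ae_restrict_mem measurableSet_Ioc] with y hy
    have hyI : y ∈ I := hIoc hy
    have hGy : 0 < G y := hGpos y hyI
    have hψy : 0 < ψ y := hψpos y hyI
    have hgy : 0 ≤ g y := hgnn y hyI
    have : B y = ψ y * G y ^ (1/q) * g y := by
      simp only [hB]; rw [hGceq y hyI, hSeeq y hyI, hGeeq y hyI]
    rw [this, Real.mul_rpow (mul_nonneg hψy.le (Real.rpow_nonneg hGy.le _)) hgy,
      Real.mul_rpow hψy.le (Real.rpow_nonneg hGy.le _),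
      ← Real.rpow_mul hGy.le, key2, Real.rpow_one]
  -- final assembly
  have hApnn : 0 ≤ ∫ y, A y ^ p ∂μ := by
    refine integral_nonneg_of_ae ?_
    filter_upwards [hAnn] with y hy using Real.rpow_nonneg hy _
  have hBqnn : 0 ≤ ∫ y, B y ^ q ∂μ := by
    refine integral_nonneg_of_ae ?_
    filter_upwards [hBnn] with y hy using Real.rpow_nonneg hy _
  have hle : (∫ y, A y ^ p ∂μ) ≤ ∫ x in a..b, φ x ^ p * F x * f x ^ p := e2 ▸ h6
  calc (∫ y in a..b, ∫ x in a..b, K (x, y) * f x * g y)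
      = ∫ y, A y * B y ∂μ := e1
    _ ≤ (∫ y, A y ^ p ∂μ) ^ (1/p) * (∫ y, B y ^ q ∂μ) ^ (1/q) := hold
    _ ≤ (∫ x in a..b, φ x ^ p * F x * f x ^ p) ^ (1/p) * (∫ y, B y ^ q ∂μ) ^ (1/q) := by
        exact mul_le_mul_of_nonneg_right (Real.rpow_le_rpow hApnn hle h1p0.le)
          (Real.rpow_nonneg hBqnn _)
    _ = (∫ x in a..b, φ x ^ p * F x * f x ^ p) ^ (1/p) *
        (∫ y in a..b, ψ y ^ q * G y * g y ^ q) ^ (1/q) := by rw [e3]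
end

section
/- Let a < b be real numbers and let p > 1, q with 1/p + 1/q = 1. Let h, f, g : ℝ → ℝ be continuous and nonnegative on [a,b] and let φ, ψ : ℝ → ℝ be continuous and positive on [a,b]. Define H(y) = h(y)·ψ(y)^(−p). Then ∫_a^b ( ∫_a^y h(y)·f(x)·g(y) dx ) dy ≤ (∫_a^b φ(x)^p·f(x)^p·(∫_x^b H(y) dy) dx)^(1/p) · (∫_a^b ψ(y)^q·g(y)^q·h(y)·(∫_a^y φ(x)^(−q) dx) dy)^(1/q). (First inequality of Corollary 3.6, continuous case 𝕋 = ℝ, obtained from Theorem 3.4 with the triangular kernel K(x,y) = h(y) for x ≤ y, K(x,y) = 0 for x > y.) -/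
open MeasureTheory Set intervalIntegral

lemma aux_memLp_s7 (F : ℝ → ℝ) (hF : Continuous F) (c d : ℝ) (r : ENNReal) :
    MemLp F r (volume.restrict (Set.Ioc c d)) := by
  have hfin : IsFiniteMeasure (volume.restrict (Set.Ioc c d)) :=
    ⟨by rw [Measure.restrict_apply_univ]; exact measure_Ioc_lt_top⟩
  obtain ⟨C, hC⟩ := isCompact_Icc.exists_bound_of_continuousOn
    (hF.continuousOn : ContinuousOn F (Set.Icc c d))
  refine (memLp_top_of_bound hF.aestronglyMeasurable.restrict C ?_).mono_exponent le_top
  filter_upwards [ae_restrict_mem measurableSet_Ioc] with x hx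
  exact hC x (Set.Ioc_subset_Icc_self hx)

lemma aux_holder {p q c d : ℝ} (hcd : c ≤ d) (hpq : p.HolderConjugate q)
    {F G : ℝ → ℝ} (hF : Continuous F) (hG : Continuous G)
    (hFnn : ∀ t ∈ Set.Icc c d, 0 ≤ F t) (hGnn : ∀ t ∈ Set.Icc c d, 0 ≤ G t) :
    ∫ t in c..d, F t * G t
      ≤ (∫ t in c..d, F t ^ p) ^ (1 / p) * (∫ t in c..d, G t ^ q) ^ (1 / q) := by
  rw [intervalIntegral.integral_of_le hcd, intervalIntegral.integral_of_le hcd,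
      intervalIntegral.integral_of_le hcd]
  refine MeasureTheory.integral_mul_le_Lp_mul_Lq_of_nonneg hpq ?_ ?_
    (aux_memLp_s7 F hF c d _) (aux_memLp_s7 G hG c d _)
  · filter_upwards [ae_restrict_mem measurableSet_Ioc] with x hx
    exact hFnn x (Set.Ioc_subset_Icc_self hx)
  · filter_upwards [ae_restrict_mem measurableSet_Ioc] with x hx
    exact hGnn x (Set.Ioc_subset_Icc_self hx)

lemma aux_swap (a b : ℝ) {u v : ℝ → ℝ} (hu : Continuous u) (hv : Continuous v) :
    ∫ y in a..b, (∫ x in a..y, u x) * v y = ∫ x in a..b, u x * ∫ y in x..b, v y := by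
  have hU : ∀ y ∈ Set.uIcc a b, HasDerivAt (fun t => ∫ x in a..t, u x) (u y) y :=
    fun y _ => (hu.integral_hasStrictDerivAt a y).hasDerivAt
  have hWeq : (fun t => ∫ x in t..b, v x) = fun t => -∫ x in b..t, v x := by
    funext t; rw [intervalIntegral.integral_symm]
  have hW : ∀ y ∈ Set.uIcc a b, HasDerivAt (fun t => ∫ x in t..b, v x) (-v y) y := by
    intro y _
    rw [hWeq]
    exact ((hv.integral_hasStrictDerivAt b y).hasDerivAt).neg
  have key := intervalIntegral.integral_mul_deriv_eq_deriv_mul hU hW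
      (hu.intervalIntegrable a b) ((hv.neg).intervalIntegrable a b)
  simp only [intervalIntegral.integral_same, mul_neg] at key
  rw [intervalIntegral.integral_neg] at key
  simp only [zero_mul, mul_zero] at key
  linarith [key]

lemma aux_main (a b p q : ℝ) (h f g φ ψ : ℝ → ℝ)
    (hab : a ≤ b) (hp : 1 < p) (hpq : 1 / p + 1 / q = 1)
    (hh : Continuous h) (hhnn : ∀ t, 0 ≤ h t)
    (hf : Continuous f) (hfnn : ∀ t, 0 ≤ f t)
    (hg : Continuous g) (hgnn : ∀ t, 0 ≤ g t)
    (hφ : Continuous φ) (hφpos : ∀ t, 0 < φ t)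
    (hψ : Continuous ψ) (hψpos : ∀ t, 0 < ψ t) :
    (∫ y in a..b, ∫ x in a..y, h y * f x * g y)
      ≤ (∫ x in a..b, φ x ^ p * f x ^ p * ∫ y in x..b, h y * ψ y ^ (-p)) ^ (1 / p) *
        (∫ y in a..b, ψ y ^ q * g y ^ q * h y * ∫ x in a..y, φ x ^ (-q)) ^ (1 / q) := by
  have hc : p.HolderConjugate q := Real.holderConjugate_iff.mpr ⟨hp, by rw [← one_div, ← one_div]; exact hpq⟩
  have hp0 : (0:ℝ) < p := hc.pos
  have hq0 : (0:ℝ) < q := hc.symm.pos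
  -- basic continuous functions
  have hwc : Continuous (fun x => φ x ^ p * f x ^ p) :=
    (hφ.rpow_const fun x => Or.inl (hφpos x).ne').mul
      (hf.rpow_const fun x => Or.inr hp0.le)
  have hwnn : ∀ x, 0 ≤ φ x ^ p * f x ^ p := fun x =>
    mul_nonneg (Real.rpow_nonneg (hφpos x).le _) (Real.rpow_nonneg (hfnn x) _)
  have hφqc : Continuous (fun x => φ x ^ (-q)) :=
    hφ.rpow_const fun x => Or.inl (hφpos x).ne'
  have hHc : Continuous (fun y => h y * ψ y ^ (-p)) :=
    hh.mul (hψ.rpow_const fun y => Or.inl (hψpos y).ne')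
  have hHnn : ∀ y, 0 ≤ h y * ψ y ^ (-p) := fun y =>
    mul_nonneg (hhnn y) (Real.rpow_nonneg (hψpos y).le _)
  set P : ℝ → ℝ := fun y => ∫ x in a..y, φ x ^ p * f x ^ p with hP
  set Q : ℝ → ℝ := fun y => ∫ x in a..y, φ x ^ (-q) with hQ
  have hPc : Continuous P :=
    intervalIntegral.continuous_primitive (fun c d => hwc.intervalIntegrable c d) a
  have hQc : Continuous Q :=
    intervalIntegral.continuous_primitive (fun c d => hφqc.intervalIntegrable c d) a
  have hPnn : ∀ y ∈ Set.Icc a b, 0 ≤ P y := fun y hy =>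
    intervalIntegral.integral_nonneg hy.1 (fun x _ => hwnn x)
  have hQnn : ∀ y ∈ Set.Icc a b, 0 ≤ Q y := fun y hy =>
    intervalIntegral.integral_nonneg hy.1 (fun x _ => Real.rpow_nonneg (hφpos x).le _)
  set A : ℝ → ℝ := fun y => (h y * ψ y ^ (-p) * P y) ^ (1/p) with hA
  set B : ℝ → ℝ := fun y => (ψ y ^ q * g y ^ q * h y * Q y) ^ (1/q) with hB
  have hAc : Continuous A :=
    ((hHc.mul hPc).rpow_const fun y => Or.inr (by positivity))
  have hBc : Continuous B := by
    refine Continuous.rpow_const ?_ fun y => Or.inr (by positivity)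
    exact (((hψ.rpow_const fun y => Or.inl (hψpos y).ne').mul
      (hg.rpow_const fun y => Or.inr hq0.le)).mul hh).mul hQc
  have hABnn : ∀ y ∈ Set.Icc a b, 0 ≤ A y := fun y hy =>
    Real.rpow_nonneg (mul_nonneg (hHnn y) (hPnn y hy)) _
  have hBase : ∀ y ∈ Set.Icc a b, 0 ≤ ψ y ^ q * g y ^ q * h y * Q y := fun y hy =>
    mul_nonneg (mul_nonneg (mul_nonneg (Real.rpow_nonneg (hψpos y).le _)
      (Real.rpow_nonneg (hgnn y) _)) (hhnn y)) (hQnn y hy)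
  have hBnn : ∀ y ∈ Set.Icc a b, 0 ≤ B y := fun y hy =>
    Real.rpow_nonneg (hBase y hy) _
  -- Step: pointwise inequality
  have step : ∀ y ∈ Set.Icc a b, (∫ x in a..y, h y * f x * g y) ≤ A y * B y := by
    intro y hy
    have hay : a ≤ y := hy.1
    -- inner Hölder
    have hold : ∫ x in a..y, f x ≤ (P y) ^ (1/p) * (Q y) ^ (1/q) := by
      have h1 := aux_holder hay hc
        (F := fun x => φ x * f x) (G := fun x => φ x ^ (-1 : ℝ))
        (hφ.mul hf) (hφ.rpow_const fun x => Or.inl (hφpos x).ne')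
        (fun t _ => mul_nonneg (hφpos t).le (hfnn t))
        (fun t _ => Real.rpow_nonneg (hφpos t).le _)
      have e1 : (∫ x in a..y, (φ x * f x) * φ x ^ (-1 : ℝ)) = ∫ x in a..y, f x := by
        refine intervalIntegral.integral_congr fun x _ => ?_
        rw [Real.rpow_neg_one]
        rw [mul_comm (φ x) (f x), mul_assoc, mul_inv_cancel₀ (hφpos x).ne', mul_one]
      have e2 : (∫ x in a..y, (φ x * f x) ^ p) = P y := by
        refine intervalIntegral.integral_congr fun x _ => ?_
        exact Real.mul_rpow (hφpos x).le (hfnn x)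
      have e3 : (∫ x in a..y, (φ x ^ (-1 : ℝ)) ^ q) = Q y := by
        refine intervalIntegral.integral_congr fun x _ => ?_
        rw [← Real.rpow_mul (hφpos x).le, neg_one_mul]
      rw [e1, e2, e3] at h1
      exact h1
    -- rewrite inner integral
    have inner_eq : (∫ x in a..y, h y * f x * g y) = h y * g y * ∫ x in a..y, f x := by
      rw [show (fun x => h y * f x * g y) = fun x => (h y * g y) * f x by funext x; ring]
      exact intervalIntegral.integral_const_mul _ _
    rw [inner_eq]
    have hAB : h y * g y * ((P y) ^ (1/p) * (Q y) ^ (1/q)) = A y * B y := by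
      simp only [hA, hB]
      have eA : (h y * ψ y ^ (-p) * P y) ^ (1/p)
          = h y ^ (1/p) * ψ y ^ (-1 : ℝ) * P y ^ (1/p) := by
        rw [Real.mul_rpow (hHnn y) (hPnn y hy), Real.mul_rpow (hhnn y) (Real.rpow_nonneg (hψpos y).le _),
            ← Real.rpow_mul (hψpos y).le]
        congr 2
        field_simp
      have eB : (ψ y ^ q * g y ^ q * h y * Q y) ^ (1/q)
          = ψ y * g y * h y ^ (1/q) * Q y ^ (1/q) := by
        rw [Real.mul_rpow (mul_nonneg (mul_nonneg (Real.rpow_nonneg (hψpos y).le _)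
              (Real.rpow_nonneg (hgnn y) _)) (hhnn y)) (hQnn y hy),
            Real.mul_rpow (mul_nonneg (Real.rpow_nonneg (hψpos y).le _)
              (Real.rpow_nonneg (hgnn y) _)) (hhnn y),
            Real.mul_rpow (Real.rpow_nonneg (hψpos y).le _) (Real.rpow_nonneg (hgnn y) _),
            ← Real.rpow_mul (hψpos y).le, ← Real.rpow_mul (hgnn y),
            mul_one_div, div_self hq0.ne', Real.rpow_one, Real.rpow_one]
      rw [eA, eB]
      have ehh : h y ^ (1/p) * h y ^ (1/q) = h y := by
        rw [← Real.rpow_add' (hhnn y) (by rw [hpq]; norm_num), hpq, Real.rpow_one]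
      have eψ : ψ y ^ (-1 : ℝ) * ψ y = 1 := by
        rw [Real.rpow_neg_one]
        exact inv_mul_cancel₀ (hψpos y).ne'
      calc h y * g y * (P y ^ (1/p) * Q y ^ (1/q))
          = (h y ^ (1/p) * h y ^ (1/q)) * (ψ y ^ (-1:ℝ) * ψ y) * g y
              * (P y ^ (1/p) * Q y ^ (1/q)) := by rw [ehh, eψ]; ring
        _ = h y ^ (1/p) * ψ y ^ (-1:ℝ) * P y ^ (1/p)
              * (ψ y * g y * h y ^ (1/q) * Q y ^ (1/q)) := by ring
    rw [← hAB]
    exact mul_le_mul_of_nonneg_left hold (mul_nonneg (hhnn y) (hgnn y))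
  -- chain
  have lhs_eq : (∫ y in a..b, ∫ x in a..y, h y * f x * g y)
      ≤ ∫ y in a..b, A y * B y := by
    refine intervalIntegral.integral_mono_on hab ?_ ?_ step
    · have : Continuous fun y => h y * g y * ∫ x in a..y, f x :=
        (hh.mul hg).mul
          (intervalIntegral.continuous_primitive (fun c d => hf.intervalIntegrable c d) a)
      have eq1 : (fun y => ∫ x in a..y, h y * f x * g y)
          = fun y => h y * g y * ∫ x in a..y, f x := by
        funext y
        rw [show (fun x => h y * f x * g y) = fun x => (h y * g y) * f x by funext x; ring]
        exact intervalIntegral.integral_const_mul _ _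
      rw [eq1]
      exact this.intervalIntegrable a b
    · exact (hAc.mul hBc).intervalIntegrable a b
  have holder2 := aux_holder hab hc hAc hBc hABnn hBnn
  have eAp : (∫ y in a..b, A y ^ p) = ∫ y in a..b, (h y * ψ y ^ (-p) * P y) := by
    refine intervalIntegral.integral_congr fun y hy => ?_
    rw [Set.uIcc_of_le hab] at hy
    simp only [hA]
    rw [← Real.rpow_mul (mul_nonneg (hHnn y) (hPnn y hy)), one_div_mul_cancel hp0.ne',
      Real.rpow_one]
  have eBq : (∫ y in a..b, B y ^ q) = ∫ y in a..b, (ψ y ^ q * g y ^ q * h y * Q y) := by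
    refine intervalIntegral.integral_congr fun y hy => ?_
    rw [Set.uIcc_of_le hab] at hy
    simp only [hB]
    rw [← Real.rpow_mul (hBase y hy), one_div_mul_cancel hq0.ne', Real.rpow_one]
  rw [eAp, eBq] at holder2
  have swap : (∫ y in a..b, (h y * ψ y ^ (-p)) * P y)
      = ∫ x in a..b, (φ x ^ p * f x ^ p) * ∫ y in x..b, h y * ψ y ^ (-p) := by
    have := aux_swap a b hwc hHc
    rw [← this]
    refine intervalIntegral.integral_congr fun y _ => ?_
    rw [hP]; ring
  have efirst : (∫ y in a..b, h y * ψ y ^ (-p) * P y)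
      = ∫ x in a..b, φ x ^ p * f x ^ p * ∫ y in x..b, h y * ψ y ^ (-p) := swap
  rw [efirst] at holder2
  exact le_trans lhs_eq holder2

/-- First inequality of Corollary 3.6, continuous case 𝕋 = ℝ. -/
theorem corollary36_first_inequality_continuous
    (a b p q : ℝ) (h f g φ ψ : ℝ → ℝ)
    (hab : a < b) (hp : 1 < p) (hpq : 1 / p + 1 / q = 1)
    (hh : ContinuousOn h (Set.Icc a b)) (hhnn : ∀ t ∈ Set.Icc a b, 0 ≤ h t)
    (hf : ContinuousOn f (Set.Icc a b)) (hfnn : ∀ t ∈ Set.Icc a b, 0 ≤ f t)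
    (hg : ContinuousOn g (Set.Icc a b)) (hgnn : ∀ t ∈ Set.Icc a b, 0 ≤ g t)
    (hφ : ContinuousOn φ (Set.Icc a b)) (hφpos : ∀ t ∈ Set.Icc a b, 0 < φ t)
    (hψ : ContinuousOn ψ (Set.Icc a b)) (hψpos : ∀ t ∈ Set.Icc a b, 0 < ψ t)
    (H : ℝ → ℝ) (hH : ∀ y, H y = h y * ψ y ^ (-p)) :
    (∫ y in a..b, ∫ x in a..y, h y * f x * g y)
      ≤ (∫ x in a..b, φ x ^ p * f x ^ p * ∫ y in x..b, H y) ^ (1 / p) *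
        (∫ y in a..b, ψ y ^ q * g y ^ q * h y * ∫ x in a..y, φ x ^ (-q)) ^ (1 / q) := by
  set π : ℝ → ℝ := fun t => max a (min t b) with hπ
  have πc : Continuous π := continuous_const.max (continuous_id.min continuous_const)
  have πmem : ∀ t, π t ∈ Set.Icc a b :=
    fun t => ⟨le_max_left _ _, max_le hab.le (min_le_right _ _)⟩
  have πid : ∀ t ∈ Set.Icc a b, π t = t := fun t ht => by
    simp [hπ, min_eq_left ht.2, max_eq_right ht.1]
  have main := aux_main a b p q (h ∘ π) (f ∘ π) (g ∘ π) (φ ∘ π) (ψ ∘ π) hab.le hp hpq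
    (hh.comp_continuous πc πmem) (fun t => hhnn _ (πmem t))
    (hf.comp_continuous πc πmem) (fun t => hfnn _ (πmem t))
    (hg.comp_continuous πc πmem) (fun t => hgnn _ (πmem t))
    (hφ.comp_continuous πc πmem) (fun t => hφpos _ (πmem t))
    (hψ.comp_continuous πc πmem) (fun t => hψpos _ (πmem t))
  have E1 : (∫ y in a..b, ∫ x in a..y, h y * f x * g y)
      = ∫ y in a..b, ∫ x in a..y, (h ∘ π) y * (f ∘ π) x * (g ∘ π) y := by
    refine intervalIntegral.integral_congr fun y hy => ?_
    rw [Set.uIcc_of_le hab.le] at hy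
    refine intervalIntegral.integral_congr fun x hx => ?_
    rw [Set.uIcc_of_le hy.1] at hx
    have hxm : x ∈ Set.Icc a b := ⟨hx.1, hx.2.trans hy.2⟩
    simp only [Function.comp_apply, πid y hy, πid x hxm]
  have E2 : (∫ x in a..b, (φ ∘ π) x ^ p * (f ∘ π) x ^ p
        * ∫ y in x..b, (h ∘ π) y * (ψ ∘ π) y ^ (-p))
      = ∫ x in a..b, φ x ^ p * f x ^ p * ∫ y in x..b, H y := by
    refine intervalIntegral.integral_congr fun x hx => ?_
    rw [Set.uIcc_of_le hab.le] at hx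
    have inner : (∫ y in x..b, (h ∘ π) y * (ψ ∘ π) y ^ (-p)) = ∫ y in x..b, H y := by
      refine intervalIntegral.integral_congr fun y hy => ?_
      rw [Set.uIcc_of_le hx.2] at hy
      have hym : y ∈ Set.Icc a b := ⟨hx.1.trans hy.1, hy.2⟩
      simp only [Function.comp_apply, πid y hym, hH y]
    simp only [Function.comp_apply] at inner
    simp only [Function.comp_apply, πid x hx, inner]
  have E3 : (∫ y in a..b, (ψ ∘ π) y ^ q * (g ∘ π) y ^ q * (h ∘ π) y
        * ∫ x in a..y, (φ ∘ π) x ^ (-q))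
      = ∫ y in a..b, ψ y ^ q * g y ^ q * h y * ∫ x in a..y, φ x ^ (-q) := by
    refine intervalIntegral.integral_congr fun y hy => ?_
    rw [Set.uIcc_of_le hab.le] at hy
    have inner : (∫ x in a..y, (φ ∘ π) x ^ (-q)) = ∫ x in a..y, φ x ^ (-q) := by
      refine intervalIntegral.integral_congr fun x hx => ?_
      rw [Set.uIcc_of_le hy.1] at hx
      have hxm : x ∈ Set.Icc a b := ⟨hx.1, hx.2.trans hy.2⟩
      simp only [Function.comp_apply, πid x hxm]
    simp only [Function.comp_apply] at inner
    simp only [Function.comp_apply, πid y hy, inner]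
  rw [E1, ← E2, ← E3]
  exact main
end

section
/- Let a < b be real numbers and let p > 1, q with 1/p + 1/q = 1. Let h, f : ℝ → ℝ be continuous and nonnegative on [a,b] with h positive on [a,b], and let φ, ψ : ℝ → ℝ be continuous and positive on [a,b]. Define H(y) = h(y)·ψ(y)^(−p). Then ∫_a^b H(y)·(∫_a^y φ(x)^(−q) dx)^(1−p)·(∫_a^y f(x) dx)^p dy ≤ ∫_a^b φ(x)^p·f(x)^p·(∫_x^b H(y) dy) dx, where the integrand on the left is understood with the convention 0^(1−p)·0 = 0 at y = a. (Second (Hardy-type) inequality of Corollary 3.6, continuous case 𝕋 = ℝ.) -/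
open MeasureTheory Set intervalIntegral

/-- Second (Hardy-type) inequality of Corollary 3.6, continuous case 𝕋 = ℝ. -/
theorem corollary36_second_inequality_continuous
    (a b p q : ℝ) (h f φ ψ : ℝ → ℝ)
    (hab : a < b) (hp : 1 < p) (hpq : 1 / p + 1 / q = 1)
    (hh : ContinuousOn h (Set.Icc a b)) (hhpos : ∀ t ∈ Set.Icc a b, 0 < h t)
    (hf : ContinuousOn f (Set.Icc a b)) (hfnn : ∀ t ∈ Set.Icc a b, 0 ≤ f t)
    (hφ : ContinuousOn φ (Set.Icc a b)) (hφpos : ∀ t ∈ Set.Icc a b, 0 < φ t)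
    (hψ : ContinuousOn ψ (Set.Icc a b)) (hψpos : ∀ t ∈ Set.Icc a b, 0 < ψ t)
    (H : ℝ → ℝ) (hH : ∀ y, H y = h y * ψ y ^ (-p)) :
    (∫ y in a..b, H y * (∫ x in a..y, φ x ^ (-q)) ^ (1 - p) * (∫ x in a..y, f x) ^ p)
      ≤ ∫ x in a..b, φ x ^ p * f x ^ p * ∫ y in x..b, H y := by
  have hcj : p.HolderConjugate q := Real.holderConjugate_iff.2 ⟨hp, by simpa [one_div] using hpq⟩
  have hp0 : (0:ℝ) < p := hcj.left_pos
  have hq0 : (0:ℝ) < q := hcj.right_pos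
  set g : ℝ → ℝ := fun x => φ x ^ p * f x ^ p with hgdef
  set C : ℝ → ℝ := fun y => ∫ x in a..y, φ x ^ (-q) with hCdef
  set A : ℝ → ℝ := fun y => ∫ x in a..y, f x with hAdef
  set B : ℝ → ℝ := fun y => ∫ x in a..y, g x with hBdef
  -- basic continuity facts
  have hHcont : ContinuousOn H (Icc a b) := by
    have : ContinuousOn (fun y => h y * ψ y ^ (-p)) (Icc a b) :=
      hh.mul (hψ.rpow_const fun x hx => Or.inl (hψpos x hx).ne')
    exact this.congr fun y _ => hH y
  have hHpos : ∀ y ∈ Icc a b, 0 < H y := fun y hy => by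
    rw [hH y]; exact mul_pos (hhpos y hy) (Real.rpow_pos_of_pos (hψpos y hy) _)
  have hgcont : ContinuousOn g (Icc a b) :=
    (hφ.rpow_const fun x hx => Or.inr hp0.le).mul (hf.rpow_const fun x hx => Or.inr hp0.le)
  have hgnn : ∀ x ∈ Icc a b, 0 ≤ g x := fun x hx =>
    mul_nonneg (Real.rpow_nonneg (hφpos x hx).le _) (Real.rpow_nonneg (hfnn x hx) _)
  have hφqcont : ContinuousOn (fun x => φ x ^ (-q)) (Icc a b) :=
    hφ.rpow_const fun x hx => Or.inl (hφpos x hx).ne'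
  -- integrability on subintervals
  have hsub : ∀ y ∈ Icc a b, Icc a y ⊆ Icc a b := fun y hy => Icc_subset_Icc le_rfl hy.2
  have hgint : ∀ y ∈ Icc a b, IntervalIntegrable g volume a y := fun y hy => by
    apply ContinuousOn.intervalIntegrable
    rw [uIcc_of_le hy.1]; exact hgcont.mono (hsub y hy)
  have hφqint : ∀ y ∈ Icc a b, IntervalIntegrable (fun x => φ x ^ (-q)) volume a y :=
    fun y hy => by
      apply ContinuousOn.intervalIntegrable
      rw [uIcc_of_le hy.1]; exact hφqcont.mono (hsub y hy)
  -- nonnegativity of primitives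
  have hAnn : ∀ y ∈ Icc a b, 0 ≤ A y := fun y hy =>
    intervalIntegral.integral_nonneg hy.1 fun x hx => hfnn x (hsub y hy hx)
  have hBnn : ∀ y ∈ Icc a b, 0 ≤ B y := fun y hy =>
    intervalIntegral.integral_nonneg hy.1 fun x hx => hgnn x (hsub y hy hx)
  have hCnn : ∀ y ∈ Icc a b, 0 ≤ C y := fun y hy =>
    intervalIntegral.integral_nonneg hy.1 fun x hx =>
      (Real.rpow_pos_of_pos (hφpos x (hsub y hy hx)) _).le
  have hCpos : ∀ y ∈ Icc a b, a < y → 0 < C y := fun y hy hay =>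
    intervalIntegral.intervalIntegral_pos_of_pos_on (hφqint y hy)
      (fun x hx => Real.rpow_pos_of_pos (hφpos x (hsub y hy (Ioo_subset_Icc_self hx))) _) hay
  -- the Hölder pointwise inequality
  have key : ∀ y ∈ Icc a b, H y * C y ^ (1 - p) * A y ^ p ≤ H y * B y := by
    intro y hy
    rcases eq_or_lt_of_le hy.1 with rfl | hay
    · have h1 : (1:ℝ) - p ≠ 0 := by linarith
      simp [hAdef, hBdef, hCdef, intervalIntegral.integral_same, Real.zero_rpow h1,
        Real.zero_rpow hp0.ne']
    · -- Hölder on (a, y]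
      have hsy := hsub y hy
      have hIoc : Ioc a y ⊆ Icc a b := fun x hx => hsy (Ioc_subset_Icc_self hx)
      have hφy : ContinuousOn φ (Ioc a y) := hφ.mono hIoc
      have hfy : ContinuousOn f (Ioc a y) := hf.mono hIoc
      have hFm : AEStronglyMeasurable (fun x => φ x * f x) (volume.restrict (Ioc a y)) :=
        (hφy.mul hfy).aestronglyMeasurable measurableSet_Ioc
      have hGm : AEStronglyMeasurable (fun x => (φ x)⁻¹) (volume.restrict (Ioc a y)) :=
        (hφy.inv₀ fun x hx => (hφpos x (hIoc hx)).ne').aestronglyMeasurable measurableSet_Ioc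
      obtain ⟨M1, hM1⟩ := isCompact_Icc.exists_bound_of_continuousOn (hφ.mul hf)
      obtain ⟨M2, hM2⟩ := isCompact_Icc.exists_bound_of_continuousOn
        (hφ.inv₀ fun x hx => (hφpos x hx).ne')
      have hFmem : MemLp (fun x => φ x * f x) (ENNReal.ofReal p) (volume.restrict (Ioc a y)) :=
        MemLp.of_bound hFm M1 ((ae_restrict_iff' measurableSet_Ioc).2
          (ae_of_all _ fun x hx => hM1 x (hIoc hx)))
      have hGmem : MemLp (fun x => (φ x)⁻¹) (ENNReal.ofReal q) (volume.restrict (Ioc a y)) :=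
        MemLp.of_bound hGm M2 ((ae_restrict_iff' measurableSet_Ioc).2
          (ae_of_all _ fun x hx => hM2 x (hIoc hx)))
      have hFnn : 0 ≤ᵐ[volume.restrict (Ioc a y)] fun x => φ x * f x :=
        (ae_restrict_iff' measurableSet_Ioc).2 (ae_of_all _ fun x hx =>
          mul_nonneg (hφpos x (hIoc hx)).le (hfnn x (hIoc hx)))
      have hGnn : 0 ≤ᵐ[volume.restrict (Ioc a y)] fun x => (φ x)⁻¹ :=
        (ae_restrict_iff' measurableSet_Ioc).2 (ae_of_all _ fun x hx =>
          (inv_nonneg).2 (hφpos x (hIoc hx)).le)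
      have hold := MeasureTheory.integral_mul_le_Lp_mul_Lq_of_nonneg hcj hFnn hGnn hFmem hGmem
      -- identify the three integrals
      have e1 : (∫ x in Ioc a y, φ x * f x * (φ x)⁻¹) = A y := by
        rw [show A y = ∫ x in a..y, f x from rfl, intervalIntegral.integral_of_le hy.1]
        exact setIntegral_congr_fun measurableSet_Ioc fun x hx => by
          field_simp [(hφpos x (hIoc hx)).ne']
      have e2 : (∫ x in Ioc a y, (φ x * f x) ^ p) = B y := by
        rw [show B y = ∫ x in a..y, g x from rfl, intervalIntegral.integral_of_le hy.1]
        exact setIntegral_congr_fun measurableSet_Ioc fun x hx =>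
          Real.mul_rpow (hφpos x (hIoc hx)).le (hfnn x (hIoc hx))
      have e3 : (∫ x in Ioc a y, ((φ x)⁻¹) ^ q) = C y := by
        rw [show C y = ∫ x in a..y, φ x ^ (-q) from rfl, intervalIntegral.integral_of_le hy.1]
        exact setIntegral_congr_fun measurableSet_Ioc fun x hx => by
          rw [Real.inv_rpow (hφpos x (hIoc hx)).le, ← Real.rpow_neg (hφpos x (hIoc hx)).le]
      beta_reduce at hold
      rw [e1, e2, e3] at hold
      -- raise to the power p
      have hBy : 0 ≤ B y := hBnn y hy
      have hCy : 0 < C y := hCpos y hy hay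
      have hApB : A y ^ p ≤ B y * C y ^ (p - 1) := by
        calc A y ^ p ≤ (B y ^ (1/p) * C y ^ (1/q)) ^ p :=
              Real.rpow_le_rpow (hAnn y hy) hold hp0.le
          _ = (B y ^ (1/p)) ^ p * (C y ^ (1/q)) ^ p :=
              Real.mul_rpow (Real.rpow_nonneg hBy _) (Real.rpow_nonneg hCy.le _)
          _ = B y * C y ^ (p - 1) := by
              rw [← Real.rpow_mul hBy, ← Real.rpow_mul hCy.le]
              congr 1
              · rw [one_div_mul_cancel hp0.ne', Real.rpow_one]
              · congr 1
                have h1q : 1/q = 1 - 1/p := by linarith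
                field_simp [h1q]
                linarith [hcj.sub_one_mul_conj, mul_comm q (p - 1)]
      have hHC : 0 ≤ H y * C y ^ (1 - p) :=
        mul_nonneg (hHpos y hy).le (Real.rpow_nonneg hCy.le _)
      calc H y * C y ^ (1 - p) * A y ^ p
          ≤ H y * C y ^ (1 - p) * (B y * C y ^ (p - 1)) :=
            mul_le_mul_of_nonneg_left hApB hHC
        _ = H y * B y * (C y ^ (1 - p) * C y ^ (p - 1)) := by ring
        _ = H y * B y := by
            rw [← Real.rpow_add hCy]
            norm_num
  -- continuity of the primitives
  have hIcc : uIcc a b = Icc a b := uIcc_of_le hab.le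
  have hBcont : ContinuousOn B (Icc a b) := by
    have := intervalIntegral.continuousOn_primitive_interval
      (a := a) (b := b) (f := g) (μ := volume) (by rw [hIcc]; exact hgcont.integrableOn_Icc)
    rwa [hIcc] at this
  have hCcont : ContinuousOn C (Icc a b) := by
    have := intervalIntegral.continuousOn_primitive_interval
      (a := a) (b := b) (f := fun x => φ x ^ (-q)) (μ := volume)
      (by rw [hIcc]; exact hφqcont.integrableOn_Icc)
    rwa [hIcc] at this
  have hAcont : ContinuousOn A (Icc a b) := by
    have := intervalIntegral.continuousOn_primitive_interval
      (a := a) (b := b) (f := f) (μ := volume) (by rw [hIcc]; exact hf.integrableOn_Icc)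
    rwa [hIcc] at this
  -- interval integrability of both sides of `key`
  have hHBint : IntervalIntegrable (fun y => H y * B y) volume a b := by
    apply ContinuousOn.intervalIntegrable
    rw [hIcc]; exact hHcont.mul hBcont
  have hLint : IntervalIntegrable
      (fun y => H y * C y ^ (1 - p) * A y ^ p) volume a b := by
    rw [intervalIntegrable_iff_integrableOn_Ioc_of_le hab.le]
    have hIoc : Ioc a b ⊆ Icc a b := Ioc_subset_Icc_self
    have hmeas : AEStronglyMeasurable (fun y => H y * C y ^ (1 - p) * A y ^ p)
        (volume.restrict (Ioc a b)) := by
      have hC' : ContinuousOn (fun y => C y ^ (1 - p)) (Ioc a b) :=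
        (hCcont.mono hIoc).rpow_const fun y hy =>
          Or.inl (hCpos y (hIoc hy) hy.1).ne'
      have hA' : ContinuousOn (fun y => A y ^ p) (Ioc a b) :=
        (hAcont.mono hIoc).rpow_const fun y hy => Or.inr hp0.le
      exact (((hHcont.mono hIoc).mul hC').mul hA').aestronglyMeasurable measurableSet_Ioc
    refine Integrable.mono'
      ((intervalIntegrable_iff_integrableOn_Ioc_of_le hab.le).1 hHBint) hmeas ?_
    refine (ae_restrict_iff' measurableSet_Ioc).2 (ae_of_all _ fun y hy => ?_)
    have hy' : y ∈ Icc a b := Ioc_subset_Icc_self hy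
    have hnn : 0 ≤ H y * C y ^ (1 - p) * A y ^ p :=
      mul_nonneg (mul_nonneg (hHpos y hy').le (Real.rpow_nonneg (hCnn y hy') _))
        (Real.rpow_nonneg (hAnn y hy') _)
    rw [Real.norm_eq_abs, abs_of_nonneg hnn]
    exact key y hy'
  -- first step: bound the LHS
  have step1 : (∫ y in a..b, H y * C y ^ (1 - p) * A y ^ p) ≤ ∫ y in a..b, H y * B y :=
    intervalIntegral.integral_mono_on hab.le hLint hHBint key
  -- clamped (globally continuous) versions
  set c : ℝ → ℝ := fun t => min (max t a) b with hcdef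
  have hccont : Continuous c := (continuous_id.max continuous_const).min continuous_const
  have hcmem : ∀ t, c t ∈ Icc a b := fun t =>
    ⟨le_min (le_max_right _ _) hab.le, min_le_right _ _⟩
  have hceq : ∀ t ∈ Icc a b, c t = t := fun t ht => by
    rw [hcdef]; simp only [max_eq_left ht.1, min_eq_left ht.2]
  set Hc : ℝ → ℝ := H ∘ c with hHcdef
  set gc : ℝ → ℝ := g ∘ c with hgcdef
  have hHc : Continuous Hc := hHcont.comp_continuous hccont hcmem
  have hgc : Continuous gc := hgcont.comp_continuous hccont hcmem
  have hHceq : ∀ t ∈ Icc a b, Hc t = H t := fun t ht => by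
    rw [hHcdef]; simp [Function.comp, hceq t ht]
  have hgceq : ∀ t ∈ Icc a b, gc t = g t := fun t ht => by
    rw [hgcdef]; simp [Function.comp, hceq t ht]
  set K : ℝ → ℝ := fun y => ∫ t in a..y, Hc t with hKdef
  set Bc : ℝ → ℝ := fun y => ∫ x in a..y, gc x with hBcdef
  have hK' : ∀ x : ℝ, HasDerivAt K (Hc x) x := fun x =>
    intervalIntegral.integral_hasDerivAt_right (hHc.intervalIntegrable _ _)
      (hHc.stronglyMeasurableAtFilter _ _) hHc.continuousAt
  have hBc' : ∀ x : ℝ, HasDerivAt Bc (gc x) x := fun x =>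
    intervalIntegral.integral_hasDerivAt_right (hgc.intervalIntegrable _ _)
      (hgc.stronglyMeasurableAtFilter _ _) hgc.continuousAt
  have hKcont : ContinuousOn K (uIcc a b) := fun x _ => ((hK' x).continuousAt).continuousWithinAt
  have hBccont : ContinuousOn Bc (uIcc a b) := fun x _ => ((hBc' x).continuousAt).continuousWithinAt
  have ibp := intervalIntegral.integral_mul_deriv_eq_deriv_mul_of_hasDerivAt
    (u := K) (v := Bc) (u' := Hc) (v' := gc) hKcont hBccont
    (fun x _ => hK' x) (fun x _ => hBc' x)
    (hHc.intervalIntegrable a b) (hgc.intervalIntegrable a b)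
  have hKa : K a = 0 := by rw [hKdef]; exact intervalIntegral.integral_same
  have hBca : Bc a = 0 := by rw [hBcdef]; exact intervalIntegral.integral_same
  -- identify ∫ H·B with ∫ Hc·Bc
  have eHB : (∫ y in a..b, H y * B y) = ∫ y in a..b, Hc y * Bc y := by
    apply intervalIntegral.integral_congr
    intro y hy
    rw [hIcc] at hy
    show H y * B y = Hc y * Bc y
    have hBy : B y = Bc y := by
      show (∫ x in a..y, g x) = ∫ x in a..y, gc x
      apply intervalIntegral.integral_congr
      intro x hx
      rw [uIcc_of_le hy.1] at hx
      exact (hgceq x (hsub y hy hx)).symm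
    rw [hHceq y hy, hBy]
  -- rearrange the integration by parts
  have step2 : (∫ y in a..b, Hc y * Bc y) = ∫ x in a..b, (K b - K x) * gc x := by
    have e1 : (∫ x in a..b, K x * gc x)
        = K b * Bc b - K a * Bc a - ∫ x in a..b, Hc x * Bc x := ibp
    have e2 : K b * Bc b = ∫ x in a..b, K b * gc x := by
      rw [hBcdef]
      exact (intervalIntegral.integral_const_mul _ _).symm
    have hKgc : IntervalIntegrable (fun x => K x * gc x) volume a b := by
      apply ContinuousOn.intervalIntegrable
      exact hKcont.mul hgc.continuousOn
    have hKbgc : IntervalIntegrable (fun x => K b * gc x) volume a b :=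
      (hgc.intervalIntegrable a b).const_mul _
    calc (∫ y in a..b, Hc y * Bc y)
        = K b * Bc b - K a * Bc a - ∫ x in a..b, K x * gc x := by rw [e1]; ring
      _ = (∫ x in a..b, K b * gc x) - ∫ x in a..b, K x * gc x := by
          rw [hKa, hBca, ← e2]; ring
      _ = ∫ x in a..b, (K b - K x) * gc x := by
          rw [← intervalIntegral.integral_sub hKbgc hKgc]
          congr 1; funext x; ring
  -- identify with the RHS
  have step3 : (∫ x in a..b, (K b - K x) * gc x)
      = ∫ x in a..b, φ x ^ p * f x ^ p * ∫ y in x..b, H y := by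
    apply intervalIntegral.integral_congr
    intro x hx
    rw [hIcc] at hx
    show (K b - K x) * gc x = φ x ^ p * f x ^ p * ∫ y in x..b, H y
    have e1 : K b - K x = ∫ y in x..b, Hc y := by
      rw [hKdef]
      exact intervalIntegral.integral_interval_sub_left
        (hHc.intervalIntegrable a b) (hHc.intervalIntegrable a x)
    have e2 : (∫ y in x..b, Hc y) = ∫ y in x..b, H y := by
      apply intervalIntegral.integral_congr
      intro t ht
      rw [uIcc_of_le hx.2] at ht
      exact hHceq t ⟨le_trans hx.1 ht.1, ht.2⟩
    rw [e1, e2, hgceq x hx, hgdef, mul_comm]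
  calc (∫ y in a..b, H y * (∫ x in a..y, φ x ^ (-q)) ^ (1 - p) * (∫ x in a..y, f x) ^ p)
      = ∫ y in a..b, H y * C y ^ (1 - p) * A y ^ p := rfl
    _ ≤ ∫ y in a..b, H y * B y := step1
    _ = ∫ y in a..b, Hc y * Bc y := eHB
    _ = ∫ x in a..b, (K b - K x) * gc x := step2
    _ = ∫ x in a..b, φ x ^ p * f x ^ p * ∫ y in x..b, H y := step3
end

section
/- Let a < b be real numbers and let p > 1, q with 1/p + 1/q = 1. Let h, f, g : ℝ → ℝ be continuous and nonnegative on [a,b] and let φ, ψ : ℝ → ℝ be continuous and positive on [a,b]. Define H(y) = h(y)·ψ(y)^(−p). Then ∫_a^b ( ∫_y^b h(y)·f(x)·g(y) dx ) dy ≤ (∫_a^b φ(x)^p·f(x)^p·(∫_a^x H(y) dy) dx)^(1/p) · (∫_a^b ψ(y)^q·g(y)^q·h(y)·(∫_y^b φ(x)^(−q) dx) dy)^(1/q). (First inequality of Corollary 3.7, continuous case 𝕋 = ℝ, obtained from Theorem 3.4 with the kernel K(x,y) = h(y) for x > y, K(x,y) = 0 for x ≤ y.) -/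
open MeasureTheory Set

lemma tri_meas (a b : ℝ) :
    MeasurableSet {z : ℝ × ℝ | z.1 ∈ Set.Ioc a b ∧ z.2 ∈ Set.Ioc z.1 b} := by
  have : {z : ℝ × ℝ | z.1 ∈ Set.Ioc a b ∧ z.2 ∈ Set.Ioc z.1 b}
      = ({z : ℝ × ℝ | a < z.1} ∩ {z | z.1 ≤ b}) ∩ ({z | z.1 < z.2} ∩ {z | z.2 ≤ b}) := by
    ext z; simp [Set.mem_Ioc, and_assoc]
  rw [this]
  exact (((measurableSet_lt measurable_const measurable_fst).inter
      (measurableSet_le measurable_fst measurable_const)).inter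
    ((measurableSet_lt measurable_fst measurable_snd).inter
      (measurableSet_le measurable_snd measurable_const)))

lemma tri_fub1 (a b : ℝ) (k : ℝ × ℝ → ℝ)
    (hk : IntegrableOn k {z : ℝ × ℝ | z.1 ∈ Set.Ioc a b ∧ z.2 ∈ Set.Ioc z.1 b}) :
    ∫ z in {z : ℝ × ℝ | z.1 ∈ Set.Ioc a b ∧ z.2 ∈ Set.Ioc z.1 b}, k z
      = ∫ y in Set.Ioc a b, ∫ x in Set.Ioc y b, k (y, x) := by
  set T := {z : ℝ × ℝ | z.1 ∈ Set.Ioc a b ∧ z.2 ∈ Set.Ioc z.1 b} with hTdef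
  have hT := tri_meas a b
  have hInt : Integrable (T.indicator k) := (integrable_indicator_iff hT).2 hk
  rw [← integral_indicator hT]
  rw [Measure.volume_eq_prod] at hInt ⊢
  rw [integral_prod _ hInt]
  rw [← integral_indicator measurableSet_Ioc]
  refine integral_congr_ae (Filter.Eventually.of_forall fun y => ?_)
  by_cases hy : y ∈ Set.Ioc a b
  · rw [Set.indicator_of_mem hy, ← integral_indicator measurableSet_Ioc]
    refine integral_congr_ae (Filter.Eventually.of_forall fun x => ?_)
    show T.indicator k (y, x) = (Set.Ioc y b).indicator (fun x => k (y, x)) x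
    by_cases hx : x ∈ Set.Ioc y b
    · rw [Set.indicator_of_mem hx, Set.indicator_of_mem (show (y,x) ∈ T from ⟨hy, hx⟩)]
    · rw [Set.indicator_of_notMem hx, Set.indicator_of_notMem
        (show (y,x) ∉ T from fun hz => hx hz.2)]
  · rw [Set.indicator_of_notMem hy]
    have : ∀ x : ℝ, T.indicator k (y, x) = 0 := fun x =>
      Set.indicator_of_notMem (fun hz => hy hz.1) _
    simp [this]

lemma tri_fub2 (a b : ℝ) (k : ℝ × ℝ → ℝ)
    (hk : IntegrableOn k {z : ℝ × ℝ | z.1 ∈ Set.Ioc a b ∧ z.2 ∈ Set.Ioc z.1 b}) :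
    ∫ z in {z : ℝ × ℝ | z.1 ∈ Set.Ioc a b ∧ z.2 ∈ Set.Ioc z.1 b}, k z
      = ∫ x in Set.Ioc a b, ∫ y in Set.Ioc a x, k (y, x) := by
  set T := {z : ℝ × ℝ | z.1 ∈ Set.Ioc a b ∧ z.2 ∈ Set.Ioc z.1 b} with hTdef
  have hT := tri_meas a b
  have hInt : Integrable (T.indicator k) := (integrable_indicator_iff hT).2 hk
  rw [← integral_indicator hT]
  rw [Measure.volume_eq_prod] at hInt ⊢
  rw [integral_prod _ hInt]
  rw [integral_integral_swap (by exact hInt)]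
  rw [← integral_indicator measurableSet_Ioc]
  refine integral_congr_ae (Filter.Eventually.of_forall fun x => ?_)
  show (∫ y : ℝ, T.indicator k (y, x)) = (Set.Ioc a b).indicator (fun x => ∫ y in Set.Ioc a x, k (y, x)) x
  by_cases hx : x ∈ Set.Ioc a b
  · rw [Set.indicator_of_mem hx]
    have hset : (fun y => T.indicator k (y, x)) = (Set.Ioo a x).indicator (fun y => k (y, x)) := by
      funext y
      by_cases hy : y ∈ Set.Ioo a x
      · rw [Set.indicator_of_mem hy, Set.indicator_of_mem]
        exact ⟨⟨hy.1, hy.2.le.trans hx.2⟩, hy.2, hx.2⟩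
      · rw [Set.indicator_of_notMem hy, Set.indicator_of_notMem]
        intro hz
        exact hy ⟨hz.1.1, hz.2.1⟩
    rw [hset, integral_indicator measurableSet_Ioo]
    exact setIntegral_congr_set Ioo_ae_eq_Ioc
  · rw [Set.indicator_of_notMem hx]
    have : ∀ y : ℝ, T.indicator k (y, x) = 0 := fun y =>
      Set.indicator_of_notMem (fun hz => hx ⟨hz.1.1.trans hz.2.1, hz.2.2⟩) _
    simp [this]

/-- First inequality of Corollary 3.7, continuous case 𝕋 = ℝ. -/
theorem corollary37_first_inequality_continuous
    (a b p q : ℝ) (h f g φ ψ : ℝ → ℝ)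
    (hab : a < b) (hp : 1 < p) (hpq : 1 / p + 1 / q = 1)
    (hh : ContinuousOn h (Set.Icc a b)) (hhnn : ∀ t ∈ Set.Icc a b, 0 ≤ h t)
    (hf : ContinuousOn f (Set.Icc a b)) (hfnn : ∀ t ∈ Set.Icc a b, 0 ≤ f t)
    (hg : ContinuousOn g (Set.Icc a b)) (hgnn : ∀ t ∈ Set.Icc a b, 0 ≤ g t)
    (hφ : ContinuousOn φ (Set.Icc a b)) (hφpos : ∀ t ∈ Set.Icc a b, 0 < φ t)
    (hψ : ContinuousOn ψ (Set.Icc a b)) (hψpos : ∀ t ∈ Set.Icc a b, 0 < ψ t)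
    (H : ℝ → ℝ) (hH : ∀ y, H y = h y * ψ y ^ (-p)) :
    (∫ y in a..b, ∫ x in y..b, h y * f x * g y)
      ≤ (∫ x in a..b, φ x ^ p * f x ^ p * ∫ y in a..x, H y) ^ (1 / p) *
        (∫ y in a..b, ψ y ^ q * g y ^ q * h y * ∫ x in y..b, φ x ^ (-q)) ^ (1 / q) := by
  have conj : p.HolderConjugate q := Real.holderConjugate_iff.2 ⟨hp, by simpa [one_div] using hpq⟩
  have hp0 : 0 < p := conj.left_pos
  have hq0 : 0 < q := conj.symm.left_pos
  set T := {z : ℝ × ℝ | z.1 ∈ Set.Ioc a b ∧ z.2 ∈ Set.Ioc z.1 b} with hTdef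
  set K := Set.Icc a b ×ˢ Set.Icc a b with hKdef
  have hT := tri_meas a b
  have hTK : T ⊆ K := fun z hz =>
    ⟨⟨hz.1.1.le, hz.1.2⟩, ⟨(hz.1.1.trans hz.2.1).le, hz.2.2⟩⟩
  have hKc : IsCompact K := isCompact_Icc.prod isCompact_Icc
  have hKm : MeasurableSet K := measurableSet_Icc.prod measurableSet_Icc
  -- membership helpers
  have hmem1 : ∀ z ∈ K, z.1 ∈ Set.Icc a b := fun z hz => hz.1
  have hmem2 : ∀ z ∈ K, z.2 ∈ Set.Icc a b := fun z hz => hz.2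
  -- the two Hölder factors
  set U : ℝ × ℝ → ℝ := fun z => φ z.2 * f z.2 * (H z.1) ^ (1 / p) with hUdef
  set V : ℝ × ℝ → ℝ := fun z => ψ z.1 * g z.1 * (h z.1) ^ (1 / q) * (φ z.2)⁻¹ with hVdef
  -- continuity facts
  have hHcont : ContinuousOn H (Set.Icc a b) := by
    have : H = fun y => h y * ψ y ^ (-p) := funext hH
    rw [this]
    exact hh.mul (hψ.rpow_const fun t ht => Or.inl (hψpos t ht).ne')
  have hHnn : ∀ t ∈ Set.Icc a b, 0 ≤ H t := fun t ht => by
    rw [hH t]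
    exact mul_nonneg (hhnn t ht) (Real.rpow_pos_of_pos (hψpos t ht) _).le
  have hc1 : ContinuousOn (fun z : ℝ × ℝ => φ z.2) K :=
    hφ.comp continuous_snd.continuousOn hmem2
  have hc2 : ContinuousOn (fun z : ℝ × ℝ => f z.2) K :=
    hf.comp continuous_snd.continuousOn hmem2
  have hc3 : ContinuousOn (fun z : ℝ × ℝ => H z.1) K :=
    hHcont.comp continuous_fst.continuousOn hmem1
  have hc4 : ContinuousOn (fun z : ℝ × ℝ => ψ z.1) K :=
    hψ.comp continuous_fst.continuousOn hmem1
  have hc5 : ContinuousOn (fun z : ℝ × ℝ => g z.1) K :=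
    hg.comp continuous_fst.continuousOn hmem1
  have hc6 : ContinuousOn (fun z : ℝ × ℝ => h z.1) K :=
    hh.comp continuous_fst.continuousOn hmem1
  have hUc : ContinuousOn U K :=
    (hc1.mul hc2).mul (hc3.rpow_const fun z _ => Or.inr (by positivity))
  have hVc : ContinuousOn V K :=
    ((hc4.mul hc5).mul (hc6.rpow_const fun z _ => Or.inr (by positivity))).mul
      (hc1.inv₀ fun z hz => (hφpos _ (hmem2 z hz)).ne')
  -- pointwise formulas on T
  have key1 : ∀ z ∈ T, U z * V z = h z.1 * f z.2 * g z.1 := by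
    intro z hz
    obtain ⟨hy, hx⟩ := hTK hz
    have hψ0 : (0:ℝ) < ψ z.1 := hψpos _ hy
    have hφ0 : (0:ℝ) < φ z.2 := hφpos _ hx
    have hh0 : (0:ℝ) ≤ h z.1 := hhnn _ hy
    have e1 : (H z.1) ^ (1/p) = (h z.1) ^ (1/p) * (ψ z.1)⁻¹ := by
      rw [hH, Real.mul_rpow hh0 (Real.rpow_pos_of_pos hψ0 _).le,
        ← Real.rpow_mul hψ0.le, show -p * (1/p) = -1 by field_simp, Real.rpow_neg_one]
    have e2 : h z.1 ^ (1/p) * h z.1 ^ (1/q) = h z.1 := by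
      rw [← Real.rpow_add' hh0 (by rw [hpq]; norm_num), hpq, Real.rpow_one]
    show (φ z.2 * f z.2 * (H z.1) ^ (1/p)) * (ψ z.1 * g z.1 * h z.1 ^ (1/q) * (φ z.2)⁻¹)
        = h z.1 * f z.2 * g z.1
    rw [e1]
    calc (φ z.2 * f z.2 * (h z.1 ^ (1/p) * (ψ z.1)⁻¹)) *
          (ψ z.1 * g z.1 * h z.1 ^ (1/q) * (φ z.2)⁻¹)
        = (h z.1 ^ (1/p) * h z.1 ^ (1/q)) * f z.2 * g z.1 * ((ψ z.1)⁻¹ * ψ z.1) *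
          ((φ z.2)⁻¹ * φ z.2) := by ring
      _ = h z.1 * f z.2 * g z.1 := by
          rw [e2, inv_mul_cancel₀ hψ0.ne', inv_mul_cancel₀ hφ0.ne']; ring
  have key2 : ∀ z ∈ T, U z ^ p = φ z.2 ^ p * f z.2 ^ p * H z.1 := by
    intro z hz
    obtain ⟨hy, hx⟩ := hTK hz
    have hH0 : (0:ℝ) ≤ H z.1 := hHnn _ hy
    show (φ z.2 * f z.2 * (H z.1) ^ (1/p)) ^ p = φ z.2 ^ p * f z.2 ^ p * H z.1
    rw [Real.mul_rpow (mul_nonneg (hφpos _ hx).le (hfnn _ hx)) (Real.rpow_nonneg hH0 _),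
      Real.mul_rpow (hφpos _ hx).le (hfnn _ hx),
      ← Real.rpow_mul hH0, one_div_mul_cancel hp0.ne', Real.rpow_one]
  have key3 : ∀ z ∈ T, V z ^ q = ψ z.1 ^ q * g z.1 ^ q * h z.1 * φ z.2 ^ (-q) := by
    intro z hz
    obtain ⟨hy, hx⟩ := hTK hz
    have hh0 : (0:ℝ) ≤ h z.1 := hhnn _ hy
    have hψ0 : (0:ℝ) < ψ z.1 := hψpos _ hy
    have hφ0 : (0:ℝ) < φ z.2 := hφpos _ hx
    have hg0 : (0:ℝ) ≤ g z.1 := hgnn _ hy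
    show (ψ z.1 * g z.1 * h z.1 ^ (1/q) * (φ z.2)⁻¹) ^ q
        = ψ z.1 ^ q * g z.1 ^ q * h z.1 * φ z.2 ^ (-q)
    rw [Real.mul_rpow (by positivity) (by positivity),
      Real.mul_rpow (mul_nonneg hψ0.le hg0) (Real.rpow_nonneg hh0 _),
      Real.mul_rpow hψ0.le hg0,
      ← Real.rpow_mul hh0, one_div_mul_cancel hq0.ne', Real.rpow_one,
      Real.inv_rpow hφ0.le, ← Real.rpow_neg hφ0.le]
  -- integrability of the three integrands over T
  have hk1int : IntegrableOn (fun z : ℝ × ℝ => h z.1 * f z.2 * g z.1) T :=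
    (((hc6.mul hc2).mul hc5).integrableOn_compact hKc).mono_set hTK
  have hk2int : IntegrableOn (fun z : ℝ × ℝ => φ z.2 ^ p * f z.2 ^ p * H z.1) T := by
    refine (ContinuousOn.integrableOn_compact hKc ?_).mono_set hTK
    exact ((hc1.rpow_const fun z hz => Or.inl (hφpos _ (hmem2 z hz)).ne').mul
      (hc2.rpow_const fun z _ => Or.inr hp0.le)).mul hc3
  have hk3int : IntegrableOn (fun z : ℝ × ℝ => ψ z.1 ^ q * g z.1 ^ q * h z.1 * φ z.2 ^ (-q)) T := by
    refine (ContinuousOn.integrableOn_compact hKc ?_).mono_set hTK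
    exact (((hc4.rpow_const fun z _ => Or.inr hq0.le).mul
      (hc5.rpow_const fun z _ => Or.inr hq0.le)).mul hc6).mul
      (hc1.rpow_const fun z hz => Or.inl (hφpos _ (hmem2 z hz)).ne')
  -- Memℒp facts
  haveI hfin : IsFiniteMeasure (volume.restrict T) := ⟨by
    rw [Measure.restrict_apply_univ]
    exact lt_of_le_of_lt (measure_mono hTK) hKc.measure_lt_top⟩
  obtain ⟨CU, hCU⟩ := hKc.exists_bound_of_continuousOn hUc
  obtain ⟨CV, hCV⟩ := hKc.exists_bound_of_continuousOn hVc
  have hUm : AEStronglyMeasurable U (volume.restrict T) :=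
    (hUc.aestronglyMeasurable hKm).mono_measure (Measure.restrict_mono hTK le_rfl)
  have hVm : AEStronglyMeasurable V (volume.restrict T) :=
    (hVc.aestronglyMeasurable hKm).mono_measure (Measure.restrict_mono hTK le_rfl)
  have hULp : MemLp U (ENNReal.ofReal p) (volume.restrict T) := by
    refine (memLp_top_of_bound hUm CU ?_).mono_exponent le_top
    filter_upwards [ae_restrict_mem hT] with z hz using hCU z (hTK hz)
  have hVLp : MemLp V (ENNReal.ofReal q) (volume.restrict T) := by
    refine (memLp_top_of_bound hVm CV ?_).mono_exponent le_top
    filter_upwards [ae_restrict_mem hT] with z hz using hCV z (hTK hz)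
  have hUnn : 0 ≤ᵐ[volume.restrict T] U := by
    filter_upwards [ae_restrict_mem hT] with z hz
    obtain ⟨hy, hx⟩ := hTK hz
    exact mul_nonneg (mul_nonneg (hφpos _ hx).le (hfnn _ hx))
      (Real.rpow_nonneg (hHnn _ hy) _)
  have hVnn : 0 ≤ᵐ[volume.restrict T] V := by
    filter_upwards [ae_restrict_mem hT] with z hz
    obtain ⟨hy, hx⟩ := hTK hz
    exact mul_nonneg (mul_nonneg (mul_nonneg (hψpos _ hy).le (hgnn _ hy))
      (Real.rpow_nonneg (hhnn _ hy) _)) (inv_nonneg.2 (hφpos _ hx).le)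
  -- Hölder's inequality
  have holder := integral_mul_le_Lp_mul_Lq_of_nonneg conj hUnn hVnn hULp hVLp
  -- identify the three integrals
  have eqL : (∫ y in a..b, ∫ x in y..b, h y * f x * g y)
      = ∫ z in T, U z * V z := by
    rw [intervalIntegral.integral_of_le hab.le]
    rw [show (∫ y in Set.Ioc a b, ∫ x in y..b, h y * f x * g y)
        = ∫ y in Set.Ioc a b, ∫ x in Set.Ioc y b, h y * f x * g y from
      setIntegral_congr_fun measurableSet_Ioc fun y hy =>
        intervalIntegral.integral_of_le hy.2]
    rw [← tri_fub1 a b _ hk1int]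
    exact (setIntegral_congr_fun hT key1).symm
  have eqA : (∫ x in a..b, φ x ^ p * f x ^ p * ∫ y in a..x, H y)
      = ∫ z in T, U z ^ p := by
    rw [intervalIntegral.integral_of_le hab.le]
    rw [show (∫ x in Set.Ioc a b, φ x ^ p * f x ^ p * ∫ y in a..x, H y)
        = ∫ x in Set.Ioc a b, ∫ y in Set.Ioc a x, φ x ^ p * f x ^ p * H y from
      setIntegral_congr_fun measurableSet_Ioc fun x hx => by
        rw [intervalIntegral.integral_of_le hx.1.le, ← integral_const_mul]]
    rw [← tri_fub2 a b _ hk2int]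
    exact (setIntegral_congr_fun hT key2).symm
  have eqB : (∫ y in a..b, ψ y ^ q * g y ^ q * h y * ∫ x in y..b, φ x ^ (-q))
      = ∫ z in T, V z ^ q := by
    rw [intervalIntegral.integral_of_le hab.le]
    rw [show (∫ y in Set.Ioc a b, ψ y ^ q * g y ^ q * h y * ∫ x in y..b, φ x ^ (-q))
        = ∫ y in Set.Ioc a b, ∫ x in Set.Ioc y b, ψ y ^ q * g y ^ q * h y * φ x ^ (-q) from
      setIntegral_congr_fun measurableSet_Ioc fun y hy => by
        rw [intervalIntegral.integral_of_le hy.2, ← integral_const_mul]]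
    rw [← tri_fub1 a b _ hk3int]
    exact (setIntegral_congr_fun hT key3).symm
  rw [eqL, eqA, eqB]
  exact holder
end

section
/- Let a < b be real numbers and let p > 1, q with 1/p + 1/q = 1. Let h, f : ℝ → ℝ be continuous and nonnegative on [a,b] with h positive on [a,b], and let φ, ψ : ℝ → ℝ be continuous and positive on [a,b]. Define H(y) = h(y)·ψ(y)^(−p). Then ∫_a^b H(y)·(∫_y^b φ(x)^(−q) dx)^(1−p)·(∫_y^b f(x) dx)^p dy ≤ ∫_a^b φ(x)^p·f(x)^p·(∫_a^x H(y) dy) dx, where the integrand on the left is understood with the convention 0^(1−p)·0 = 0 at y = b. (Second (Hardy-type) inequality of Corollary 3.7, continuous case 𝕋 = ℝ.) -/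
open MeasureTheory intervalIntegral Set

/-- Second (Hardy-type) inequality of Corollary 3.7, continuous case 𝕋 = ℝ. -/
theorem corollary37_second_inequality_continuous
    (a b p q : ℝ) (h f φ ψ : ℝ → ℝ)
    (hab : a < b) (hp : 1 < p) (hpq : 1 / p + 1 / q = 1)
    (hh : ContinuousOn h (Set.Icc a b)) (hhpos : ∀ t ∈ Set.Icc a b, 0 < h t)
    (hf : ContinuousOn f (Set.Icc a b)) (hfnn : ∀ t ∈ Set.Icc a b, 0 ≤ f t)
    (hφ : ContinuousOn φ (Set.Icc a b)) (hφpos : ∀ t ∈ Set.Icc a b, 0 < φ t)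
    (hψ : ContinuousOn ψ (Set.Icc a b)) (hψpos : ∀ t ∈ Set.Icc a b, 0 < ψ t)
    (H : ℝ → ℝ) (hH : ∀ y, H y = h y * ψ y ^ (-p)) :
    (∫ y in a..b, H y * (∫ x in y..b, φ x ^ (-q)) ^ (1 - p) * (∫ x in y..b, f x) ^ p)
      ≤ ∫ x in a..b, φ x ^ p * f x ^ p * ∫ y in a..x, H y := by
  have hp0 : (0:ℝ) < p := lt_trans one_pos hp
  have hpq' : Real.HolderConjugate p q := Real.holderConjugate_iff.mpr ⟨hp, by rw [inv_eq_one_div, inv_eq_one_div]; exact hpq⟩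
  have hq1 : (1:ℝ) < q := (Real.holderConjugate_iff.mp hpq'.symm).1
  have hq0 : (0:ℝ) < q := lt_trans one_pos hq1
  have hdiv : p / q = p - 1 := by
    have h' : q + p = p * q := by field_simp at hpq; linarith
    rw [div_eq_iff hq0.ne']
    nlinarith
  -- continuity facts
  have hHc : ContinuousOn H (Icc a b) := by
    have : ContinuousOn (fun y => h y * ψ y ^ (-p)) (Icc a b) :=
      hh.mul (hψ.rpow_const fun x hx => Or.inl (hψpos x hx).ne')
    exact this.congr fun y _ => hH y
  have hgc : ContinuousOn (fun x => φ x ^ p * f x ^ p) (Icc a b) :=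
    (hφ.rpow_const fun x hx => Or.inr hp0.le).mul (hf.rpow_const fun x hx => Or.inr hp0.le)
  have hφqc : ContinuousOn (fun x => φ x ^ (-q)) (Icc a b) :=
    hφ.rpow_const fun x hx => Or.inl (hφpos x hx).ne'
  have hU : Icc a b = uIcc a b := (uIcc_of_le hab.le).symm
  -- interval integrability on subintervals
  have hsubI : ∀ y ∈ Icc a b, ∀ z ∈ Icc a b, uIcc y z ⊆ Icc a b := fun y hy z hz =>
    uIcc_subset_Icc hy hz
  have hint : ∀ (u : ℝ → ℝ), ContinuousOn u (Icc a b) → ∀ y ∈ Icc a b, ∀ z ∈ Icc a b,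
      IntervalIntegrable u volume y z := fun u hu y hy z hz =>
    (hu.mono (hsubI y hy z hz)).intervalIntegrable
  have hmema : a ∈ Icc a b := left_mem_Icc.2 hab.le
  have hmemb : b ∈ Icc a b := right_mem_Icc.2 hab.le
  -- primitives are continuous
  have hGc : ContinuousOn (fun y => ∫ x in y..b, φ x ^ (-q)) (Icc a b) := by
    rw [hU]; exact continuousOn_primitive_interval_left (hU ▸ hφqc.integrableOn_compact isCompact_Icc)
  have hFc : ContinuousOn (fun y => ∫ x in y..b, f x) (Icc a b) := by
    rw [hU]; exact continuousOn_primitive_interval_left (hU ▸ hf.integrableOn_compact isCompact_Icc)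
  have hTc : ContinuousOn (fun y => ∫ x in y..b, φ x ^ p * f x ^ p) (Icc a b) := by
    rw [hU]; exact continuousOn_primitive_interval_left (hU ▸ hgc.integrableOn_compact isCompact_Icc)
  have hKc : ContinuousOn (fun x => ∫ y in a..x, H y) (Icc a b) := by
    rw [hU]; exact continuousOn_primitive_interval (hU ▸ hHc.integrableOn_compact isCompact_Icc)
  -- positivity / nonnegativity
  have hHpos : ∀ y ∈ Icc a b, 0 < H y := fun y hy => by
    rw [hH]; exact mul_pos (hhpos y hy) (Real.rpow_pos_of_pos (hψpos y hy) _)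
  have hFnn : ∀ y ∈ Icc a b, 0 ≤ ∫ x in y..b, f x := fun y hy =>
    intervalIntegral.integral_nonneg hy.2 fun x hx => hfnn x ⟨le_trans hy.1 hx.1, hx.2⟩
  have hTnn : ∀ y ∈ Icc a b, 0 ≤ ∫ x in y..b, φ x ^ p * f x ^ p := fun y hy =>
    intervalIntegral.integral_nonneg hy.2 fun x hx =>
      mul_nonneg (Real.rpow_nonneg (hφpos x ⟨le_trans hy.1 hx.1, hx.2⟩).le _)
        (Real.rpow_nonneg (hfnn x ⟨le_trans hy.1 hx.1, hx.2⟩) _)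
  have hGnn : ∀ y ∈ Icc a b, 0 ≤ ∫ x in y..b, φ x ^ (-q) := fun y hy =>
    intervalIntegral.integral_nonneg hy.2 fun x hx =>
      (Real.rpow_pos_of_pos (hφpos x ⟨le_trans hy.1 hx.1, hx.2⟩) _).le
  have hGpos : ∀ y ∈ Ico a b, 0 < ∫ x in y..b, φ x ^ (-q) := fun y hy =>
    intervalIntegral.intervalIntegral_pos_of_pos_on
      (hint _ hφqc y ⟨hy.1, hy.2.le⟩ b hmemb)
      (fun x hx => Real.rpow_pos_of_pos (hφpos x ⟨le_trans hy.1 hx.1.le, hx.2.le⟩) _) hy.2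
  -- Hölder's inequality
  have holder : ∀ y ∈ Ico a b, (∫ x in y..b, f x) ≤
      (∫ x in y..b, φ x ^ p * f x ^ p) ^ (1/p) * (∫ x in y..b, φ x ^ (-q)) ^ (1/q) := by
    intro y hy
    have hyb : y ≤ b := hy.2.le
    have hsub : Ioc y b ⊆ Icc a b := fun x hx => ⟨le_trans hy.1 hx.1.le, hx.2⟩
    have hsub' : Icc y b ⊆ Icc a b := fun x hx => ⟨le_trans hy.1 hx.1, hx.2⟩
    rw [intervalIntegral.integral_of_le hyb, intervalIntegral.integral_of_le hyb,
      intervalIntegral.integral_of_le hyb]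
    haveI : IsFiniteMeasure (volume.restrict (Ioc y b)) :=
      ⟨by rw [Measure.restrict_apply_univ]; exact measure_Ioc_lt_top⟩
    obtain ⟨C1, hC1⟩ := isCompact_Icc.exists_bound_of_continuousOn (hφ.mul hf)
    obtain ⟨C2, hC2⟩ := isCompact_Icc.exists_bound_of_continuousOn
      (hφ.inv₀ fun x hx => (hφpos x hx).ne')
    have hmono : volume.restrict (Ioc y b) ≤ volume.restrict (Icc y b) :=
      Measure.restrict_mono Ioc_subset_Icc_self le_rfl
    have hm1 : AEStronglyMeasurable (fun x => φ x * f x) (volume.restrict (Ioc y b)) :=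
      (((hφ.mono hsub').mul (hf.mono hsub')).aestronglyMeasurable measurableSet_Icc).mono_measure hmono
    have hm2 : AEStronglyMeasurable (fun x => (φ x)⁻¹) (volume.restrict (Ioc y b)) :=
      (((hφ.mono hsub').inv₀ fun x hx => (hφpos x (hsub' hx)).ne').aestronglyMeasurable
        measurableSet_Icc).mono_measure hmono
    have hmem1 : MemLp (fun x => φ x * f x) (ENNReal.ofReal p) (volume.restrict (Ioc y b)) :=
      MemLp.of_bound hm1 C1 ((ae_restrict_iff' measurableSet_Ioc).2
        (ae_of_all _ fun x hx => hC1 x (hsub hx)))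
    have hmem2 : MemLp (fun x => (φ x)⁻¹) (ENNReal.ofReal q) (volume.restrict (Ioc y b)) :=
      MemLp.of_bound hm2 C2 ((ae_restrict_iff' measurableSet_Ioc).2
        (ae_of_all _ fun x hx => hC2 x (hsub hx)))
    have HH := MeasureTheory.integral_mul_norm_le_Lp_mul_Lq hpq' hmem1 hmem2
    have e1 : (∫ x in Ioc y b, ‖φ x * f x‖ * ‖(φ x)⁻¹‖) = ∫ x in Ioc y b, f x :=
      setIntegral_congr_fun measurableSet_Ioc fun x hx => by
        have hφx := hφpos x (hsub hx); have hfx := hfnn x (hsub hx)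
        rw [Real.norm_eq_abs, Real.norm_eq_abs, abs_of_nonneg (mul_nonneg hφx.le hfx),
          abs_of_nonneg (inv_nonneg.2 hφx.le)]
        field_simp
    have e2 : (∫ x in Ioc y b, ‖φ x * f x‖ ^ p) = ∫ x in Ioc y b, φ x ^ p * f x ^ p :=
      setIntegral_congr_fun measurableSet_Ioc fun x hx => by
        have hφx := hφpos x (hsub hx); have hfx := hfnn x (hsub hx)
        rw [Real.norm_eq_abs, abs_of_nonneg (mul_nonneg hφx.le hfx), Real.mul_rpow hφx.le hfx]
    have e3 : (∫ x in Ioc y b, ‖(φ x)⁻¹‖ ^ q) = ∫ x in Ioc y b, φ x ^ (-q) :=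
      setIntegral_congr_fun measurableSet_Ioc fun x hx => by
        have hφx := hφpos x (hsub hx)
        rw [Real.norm_eq_abs, abs_of_nonneg (inv_nonneg.2 hφx.le), Real.inv_rpow hφx.le,
          ← Real.rpow_neg hφx.le]
    rw [e1, e2, e3] at HH
    exact HH
  -- pointwise inequality
  have ptwise : ∀ y ∈ Icc a b,
      H y * (∫ x in y..b, φ x ^ (-q)) ^ (1 - p) * (∫ x in y..b, f x) ^ p ≤
        H y * ∫ x in y..b, φ x ^ p * f x ^ p := by
    intro y hy
    rcases eq_or_lt_of_le hy.2 with hyb | hyb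
    · subst hyb
      simp only [intervalIntegral.integral_same]
      rw [Real.zero_rpow (sub_ne_zero.2 (by linarith)), Real.zero_rpow hp0.ne']
      simp
    · have hyIco : y ∈ Ico a b := ⟨hy.1, hyb⟩
      set G := ∫ x in y..b, φ x ^ (-q) with hGdef
      set F := ∫ x in y..b, f x with hFdef
      set T := ∫ x in y..b, φ x ^ p * f x ^ p with hTdef
      have hG : 0 < G := hGpos y hyIco
      have hT : 0 ≤ T := hTnn y hy
      have hF : 0 ≤ F := hFnn y hy
      have hFp : F ^ p ≤ T * G ^ (p - 1) := by
        calc F ^ p ≤ (T ^ (1/p) * G ^ (1/q)) ^ p :=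
              Real.rpow_le_rpow hF (holder y hyIco) hp0.le
          _ = (T ^ (1/p)) ^ p * (G ^ (1/q)) ^ p :=
              Real.mul_rpow (Real.rpow_nonneg hT _) (Real.rpow_nonneg hG.le _)
          _ = T * G ^ (p - 1) := by
              rw [← Real.rpow_mul hT, ← Real.rpow_mul hG.le, one_div_mul_cancel hp0.ne',
                Real.rpow_one, show 1/q*p = p - 1 by rw [← hdiv]; ring]
      have hHG : 0 ≤ H y * G ^ (1 - p) :=
        mul_nonneg (hHpos y hy).le (Real.rpow_nonneg hG.le _)
      calc H y * G ^ (1 - p) * F ^ p ≤ H y * G ^ (1 - p) * (T * G ^ (p - 1)) :=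
            mul_le_mul_of_nonneg_left hFp hHG
        _ = H y * T * (G ^ (1 - p) * G ^ (p - 1)) := by ring
        _ = H y * T := by
            rw [← Real.rpow_add hG, show (1 - p) + (p - 1) = 0 by ring, Real.rpow_zero, mul_one]
  -- integrability of both sides of the pointwise inequality
  have hintR : IntervalIntegrable (fun y => H y * ∫ x in y..b, φ x ^ p * f x ^ p) volume a b := by
    have := hHc.mul hTc; rw [hU] at this; exact this.intervalIntegrable
  have hintL : IntervalIntegrable
      (fun y => H y * (∫ x in y..b, φ x ^ (-q)) ^ (1 - p) * (∫ x in y..b, f x) ^ p) volume a b := by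
    apply hintR.mono_fun
    · rw [uIoc_of_le hab.le]
      have hmono : volume.restrict (Ioc a b) ≤ volume.restrict (Icc a b) :=
        Measure.restrict_mono Ioc_subset_Icc_self le_rfl
      have h1 := ((hHc.aestronglyMeasurable measurableSet_Icc).mono_measure hmono).aemeasurable
      have h2 := ((hGc.aestronglyMeasurable measurableSet_Icc).mono_measure hmono).aemeasurable
      have h3 := ((hFc.aestronglyMeasurable measurableSet_Icc).mono_measure hmono).aemeasurable
      exact ((h1.mul (h2.pow aemeasurable_const)).mul (h3.pow aemeasurable_const)).aestronglyMeasurable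
    · rw [uIoc_of_le hab.le]
      refine (ae_restrict_iff' measurableSet_Ioc).2 (ae_of_all _ fun y hy => ?_)
      have hy' : y ∈ Icc a b := Ioc_subset_Icc_self hy
      have hnn : 0 ≤ H y * (∫ x in y..b, φ x ^ (-q)) ^ (1 - p) * (∫ x in y..b, f x) ^ p :=
        mul_nonneg (mul_nonneg (hHpos y hy').le (Real.rpow_nonneg (hGnn y hy') _))
          (Real.rpow_nonneg (hFnn y hy') _)
      simp only [Real.norm_eq_abs]
      rw [abs_of_nonneg hnn]
      exact (ptwise y hy').trans (le_abs_self _)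
  have step1 := intervalIntegral.integral_mono_on hab.le hintL hintR ptwise
  -- integration by parts (Fubini-type identity)
  have hintKg : IntervalIntegrable (fun y => (∫ t in a..y, H t) * (φ y ^ p * f y ^ p)) volume a b := by
    have := hKc.mul hgc; rw [hU] at this; exact this.intervalIntegrable
  have ibp : (∫ y in a..b,
      (H y * (∫ x in y..b, φ x ^ p * f x ^ p) - (∫ t in a..y, H t) * (φ y ^ p * f y ^ p))) = 0 := by
    have hcontW : ContinuousOn
        (fun y => (∫ t in a..y, H t) * ∫ x in y..b, φ x ^ p * f x ^ p) (Icc a b) := hKc.mul hTc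
    have hderiv : ∀ y ∈ Ioo a b, HasDerivWithinAt
        (fun y => (∫ t in a..y, H t) * ∫ x in y..b, φ x ^ p * f x ^ p)
        (H y * (∫ x in y..b, φ x ^ p * f x ^ p) - (∫ t in a..y, H t) * (φ y ^ p * f y ^ p))
        (Ioi y) y := by
      intro y hy
      have hyI : y ∈ Icc a b := Ioo_subset_Icc_self hy
      have hnb : Icc a b ∈ nhds y := Icc_mem_nhds hy.1 hy.2
      have hK' : HasDerivAt (fun u => ∫ t in a..u, H t) (H y) y :=
        intervalIntegral.integral_hasDerivAt_right (hint _ hHc a hmema y hyI)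
          ⟨Icc a b, hnb, hHc.aestronglyMeasurable measurableSet_Icc⟩
          (hHc.continuousAt hnb)
      have hT' : HasDerivAt (fun u => ∫ x in u..b, φ x ^ p * f x ^ p)
          (-(φ y ^ p * f y ^ p)) y :=
        intervalIntegral.integral_hasDerivAt_left (hint _ hgc y hyI b hmemb)
          ⟨Icc a b, hnb, hgc.aestronglyMeasurable measurableSet_Icc⟩
          (hgc.continuousAt hnb)
      have := hK'.mul hT'
      have heq : H y * (∫ x in y..b, φ x ^ p * f x ^ p)
          - (∫ t in a..y, H t) * (φ y ^ p * f y ^ p)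
          = H y * (∫ x in y..b, φ x ^ p * f x ^ p)
            + (∫ t in a..y, H t) * -(φ y ^ p * f y ^ p) := by ring
      rw [heq]
      exact this.hasDerivWithinAt
    have h'int : IntervalIntegrable
        (fun y => H y * (∫ x in y..b, φ x ^ p * f x ^ p)
          - (∫ t in a..y, H t) * (φ y ^ p * f y ^ p)) volume a b := hintR.sub hintKg
    have hmain := intervalIntegral.integral_eq_sub_of_hasDeriv_right_of_le hab.le hcontW hderiv h'int
    rw [hmain, intervalIntegral.integral_same, intervalIntegral.integral_same, mul_zero, zero_mul,
      sub_zero]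
  have eq2 : (∫ y in a..b, H y * ∫ x in y..b, φ x ^ p * f x ^ p)
      = ∫ x in a..b, φ x ^ p * f x ^ p * ∫ y in a..x, H y := by
    have hsub := intervalIntegral.integral_sub hintR hintKg
    rw [ibp] at hsub
    have : (∫ y in a..b, H y * ∫ x in y..b, φ x ^ p * f x ^ p)
        = ∫ y in a..b, (∫ t in a..y, H t) * (φ y ^ p * f y ^ p) := by linarith
    rw [this]
    apply intervalIntegral.integral_congr
    intro x hx
    ring
  exact step1.trans (le_of_eq eq2)
end

section
/- Let a < b be real numbers and let p > 1, q with 1/p + 1/q = 1. Let K : ℝ × ℝ → ℝ be continuous and nonnegative on [a,b] × [a,b], let f, g : ℝ → ℝ be continuous and nonnegative on [a,b], and let φ, ψ : ℝ → ℝ be continuous and positive on [a,b]. Let F₁, G₁ : ℝ → ℝ be functions such that ∫_a^b K(x,y)·ψ(y)^(−p) dy ≤ F₁(x) for all x ∈ [a,b] and ∫_a^b K(x,y)·φ(x)^(−q) dx ≤ G₁(y) for all y ∈ [a,b]. Then ∫_a^b ∫_a^b K(x,y)·f(x)·g(y) dx dy ≤ (∫_a^b φ(x)^p·F₁(x)·f(x)^p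 dx)^(1/p) · (∫_a^b ψ(y)^q·G₁(y)·g(y)^q dy)^(1/q). (Inequality (7) of Theorem 3.8, continuous case 𝕋 = ℝ.) -/
open MeasureTheory Set

/-- Inequality (7) of Theorem 3.8, continuous case 𝕋 = ℝ. -/
theorem bounded_kernel_first_inequality_continuous
    (a b p q : ℝ) (K : ℝ × ℝ → ℝ) (f g φ ψ F₁ G₁ : ℝ → ℝ)
    (hab : a < b) (hp : 1 < p) (hpq : 1 / p + 1 / q = 1)
    (hK : ContinuousOn K (Set.Icc a b ×ˢ Set.Icc a b))
    (hKnn : ∀ z ∈ Set.Icc a b ×ˢ Set.Icc a b, 0 ≤ K z)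
    (hf : ContinuousOn f (Set.Icc a b)) (hfnn : ∀ t ∈ Set.Icc a b, 0 ≤ f t)
    (hg : ContinuousOn g (Set.Icc a b)) (hgnn : ∀ t ∈ Set.Icc a b, 0 ≤ g t)
    (hφ : ContinuousOn φ (Set.Icc a b)) (hφpos : ∀ t ∈ Set.Icc a b, 0 < φ t)
    (hψ : ContinuousOn ψ (Set.Icc a b)) (hψpos : ∀ t ∈ Set.Icc a b, 0 < ψ t)
    (hF₁ : ContinuousOn F₁ (Set.Icc a b)) (hG₁ : ContinuousOn G₁ (Set.Icc a b))
    (hFbound : ∀ x ∈ Set.Icc a b, (∫ y in a..b, K (x, y) * ψ y ^ (-p)) ≤ F₁ x)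
    (hGbound : ∀ y ∈ Set.Icc a b, (∫ x in a..b, K (x, y) * φ x ^ (-q)) ≤ G₁ y) :
    (∫ y in a..b, ∫ x in a..b, K (x, y) * f x * g y)
      ≤ (∫ x in a..b, φ x ^ p * F₁ x * f x ^ p) ^ (1 / p) *
        (∫ y in a..b, ψ y ^ q * G₁ y * g y ^ q) ^ (1 / q) := by
  have hpq' : Real.HolderConjugate p q := Real.holderConjugate_iff.mpr ⟨hp, by simpa [one_div] using hpq⟩
  have hp0 : 0 < p := hpq'.pos
  have hq0 : 0 < q := hpq'.symm.pos
  set I : Set ℝ := Set.Icc a b with hIdef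
  have hIc : IsCompact I := isCompact_Icc
  have hIm : MeasurableSet I := measurableSet_Icc
  set μ : Measure ℝ := volume.restrict I with hμdef
  haveI : IsFiniteMeasure μ := ⟨by
    rw [hμdef, Measure.restrict_apply_univ]; exact measure_Icc_lt_top⟩
  have hconv : ∀ h : ℝ → ℝ, (∫ t in a..b, h t) = ∫ t, h t ∂μ := by
    intro h
    rw [intervalIntegral.integral_of_le hab.le, hμdef, hIdef]
    exact (MeasureTheory.integral_Icc_eq_integral_Ioc).symm
  have hπeq : μ.prod μ = (volume.prod volume).restrict (I ×ˢ I) := by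
    rw [hμdef, Measure.prod_restrict]
  have hSm : MeasurableSet (I ×ˢ I) := hIm.prod hIm
  have hSc : IsCompact (I ×ˢ I) := hIc.prod hIc
  have hae : ∀ᵐ z ∂(μ.prod μ), z ∈ I ×ˢ I := by
    rw [hπeq]; exact ae_restrict_mem hSm
  -- continuous building blocks on the product set
  have hKc : ContinuousOn (fun z : ℝ × ℝ => K (z.2, z.1)) (I ×ˢ I) :=
    hK.comp continuous_swap.continuousOn fun z hz => ⟨hz.2, hz.1⟩
  have hfc : ContinuousOn (fun z : ℝ × ℝ => f z.2) (I ×ˢ I) :=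
    hf.comp continuous_snd.continuousOn fun z hz => hz.2
  have hgc : ContinuousOn (fun z : ℝ × ℝ => g z.1) (I ×ˢ I) :=
    hg.comp continuous_fst.continuousOn fun z hz => hz.1
  have hφc : ContinuousOn (fun z : ℝ × ℝ => φ z.2) (I ×ˢ I) :=
    hφ.comp continuous_snd.continuousOn fun z hz => hz.2
  have hψc : ContinuousOn (fun z : ℝ × ℝ => ψ z.1) (I ×ˢ I) :=
    hψ.comp continuous_fst.continuousOn fun z hz => hz.1
  -- the functions
  set W : ℝ × ℝ → ℝ := fun z => K (z.2, z.1) * f z.2 * g z.1 with hWdef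
  set U : ℝ × ℝ → ℝ := fun z => K (z.2, z.1) ^ (1 / p) * (f z.2 * φ z.2 / ψ z.1) with hUdef
  set V : ℝ × ℝ → ℝ := fun z => K (z.2, z.1) ^ (1 / q) * (g z.1 * ψ z.1 / φ z.2) with hVdef
  set A : ℝ × ℝ → ℝ := fun z => K (z.2, z.1) * (f z.2 ^ p * φ z.2 ^ p * ψ z.1 ^ (-p)) with hAdef
  set B : ℝ × ℝ → ℝ := fun z => K (z.2, z.1) * (g z.1 ^ q * ψ z.1 ^ q * φ z.2 ^ (-q)) with hBdef
  have hWc : ContinuousOn W (I ×ˢ I) := (hKc.mul hfc).mul hgc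
  have hUc : ContinuousOn U (I ×ˢ I) := by
    refine (hKc.rpow_const fun z _ => Or.inr (by positivity)).mul
      (((hfc.mul hφc).div hψc) fun z hz => (hψpos _ hz.1).ne')
  have hVc : ContinuousOn V (I ×ˢ I) := by
    refine (hKc.rpow_const fun z _ => Or.inr (by positivity)).mul
      (((hgc.mul hψc).div hφc) fun z hz => (hφpos _ hz.2).ne')
  have hAc : ContinuousOn A (I ×ˢ I) := by
    refine hKc.mul (((hfc.rpow_const fun z _ => Or.inr hp0.le).mul
      (hφc.rpow_const fun z _ => Or.inr hp0.le)).mul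
      (hψc.rpow_const fun z hz => Or.inl (hψpos _ hz.1).ne'))
  have hBc : ContinuousOn B (I ×ˢ I) := by
    refine hKc.mul (((hgc.rpow_const fun z _ => Or.inr hq0.le).mul
      (hψc.rpow_const fun z _ => Or.inr hq0.le)).mul
      (hφc.rpow_const fun z hz => Or.inl (hφpos _ hz.2).ne'))
  have hInt : ∀ F : ℝ × ℝ → ℝ, ContinuousOn F (I ×ˢ I) → Integrable F (μ.prod μ) := by
    intro F hFc
    rw [hπeq]
    exact hFc.integrableOn_compact hSc
  have hWint := hInt W hWc
  have hAint := hInt A hAc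
  have hBint := hInt B hBc
  -- pointwise facts on the product set
  have key : ∀ z ∈ I ×ˢ I,
      U z * V z = W z ∧ U z ^ p = A z ∧ V z ^ q = B z ∧ 0 ≤ U z ∧ 0 ≤ V z := by
    intro z hz
    obtain ⟨hy, hx⟩ := hz
    have hK0 : 0 ≤ K (z.2, z.1) := hKnn _ (Set.mk_mem_prod hx hy)
    have hf0 : 0 ≤ f z.2 := hfnn _ hx
    have hg0 : 0 ≤ g z.1 := hgnn _ hy
    have hφ0 : 0 < φ z.2 := hφpos _ hx
    have hψ0 : 0 < ψ z.1 := hψpos _ hy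
    have hKsum : K (z.2, z.1) ^ (1 / p) * K (z.2, z.1) ^ (1 / q) = K (z.2, z.1) := by
      rw [← Real.rpow_add_of_nonneg hK0 (by positivity) (by positivity), hpq, Real.rpow_one]
    refine ⟨?_, ?_, ?_, ?_, ?_⟩
    · have : U z * V z = (K (z.2, z.1) ^ (1 / p) * K (z.2, z.1) ^ (1 / q)) *
          ((f z.2 * φ z.2 / ψ z.1) * (g z.1 * ψ z.1 / φ z.2)) := by
        simp only [hUdef, hVdef]; ring
      rw [this, hKsum, hWdef]
      field_simp
    · simp only [hUdef, hAdef]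
      rw [Real.mul_rpow (Real.rpow_nonneg hK0 _) (by positivity),
        ← Real.rpow_mul hK0, one_div_mul_cancel hp0.ne', Real.rpow_one,
        Real.div_rpow (by positivity) hψ0.le, Real.mul_rpow hf0 hφ0.le,
        Real.rpow_neg hψ0.le, div_eq_mul_inv]
    · simp only [hVdef, hBdef]
      rw [Real.mul_rpow (Real.rpow_nonneg hK0 _) (by positivity),
        ← Real.rpow_mul hK0, one_div_mul_cancel hq0.ne', Real.rpow_one,
        Real.div_rpow (by positivity) hφ0.le, Real.mul_rpow hg0 hψ0.le,
        Real.rpow_neg hφ0.le, div_eq_mul_inv]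
    · exact mul_nonneg (Real.rpow_nonneg hK0 _) (by positivity)
    · exact mul_nonneg (Real.rpow_nonneg hK0 _) (by positivity)
  have hUnn : 0 ≤ᵐ[μ.prod μ] U := by
    filter_upwards [hae] with z hz using (key z hz).2.2.2.1
  have hVnn : 0 ≤ᵐ[μ.prod μ] V := by
    filter_upwards [hae] with z hz using (key z hz).2.2.2.2
  -- Memℒp facts
  have hMem : ∀ (F : ℝ × ℝ → ℝ) (r : ℝ), ContinuousOn F (I ×ˢ I) →
      MemLp F (ENNReal.ofReal r) (μ.prod μ) := by
    intro F r hFc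
    have hm : AEStronglyMeasurable F (μ.prod μ) := by
      rw [hπeq]; exact hFc.aestronglyMeasurable hSm
    obtain ⟨C, hC⟩ := hSc.exists_bound_of_continuousOn hFc
    have htop : MemLp F ⊤ (μ.prod μ) :=
      memLp_top_of_bound hm C (by filter_upwards [hae] with z hz using hC z hz)
    exact htop.mono_exponent le_top
  -- Hölder
  have hHolder : ∫ z, U z * V z ∂(μ.prod μ) ≤
      (∫ z, U z ^ p ∂(μ.prod μ)) ^ (1 / p) * (∫ z, V z ^ q ∂(μ.prod μ)) ^ (1 / q) :=
    integral_mul_le_Lp_mul_Lq_of_nonneg hpq' hUnn hVnn (hMem U p hUc) (hMem V q hVc)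
  have hUVW : ∫ z, U z * V z ∂(μ.prod μ) = ∫ z, W z ∂(μ.prod μ) :=
    integral_congr_ae (by filter_upwards [hae] with z hz using (key z hz).1)
  have hUA : ∫ z, U z ^ p ∂(μ.prod μ) = ∫ z, A z ∂(μ.prod μ) :=
    integral_congr_ae (by filter_upwards [hae] with z hz using (key z hz).2.1)
  have hVB : ∫ z, V z ^ q ∂(μ.prod μ) = ∫ z, B z ∂(μ.prod μ) :=
    integral_congr_ae (by filter_upwards [hae] with z hz using (key z hz).2.2.1)
  -- LHS identification
  have hLHS : (∫ y in a..b, ∫ x in a..b, K (x, y) * f x * g y)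
      = ∫ z, W z ∂(μ.prod μ) := by
    rw [hconv]
    have h1 : ∀ y : ℝ, (∫ x in a..b, K (x, y) * f x * g y)
        = ∫ x, K (x, y) * f x * g y ∂μ := fun y => hconv _
    calc ∫ y, (∫ x in a..b, K (x, y) * f x * g y) ∂μ
        = ∫ y, ∫ x, K (x, y) * f x * g y ∂μ ∂μ := by
          exact integral_congr_ae (Filter.Eventually.of_forall fun y => h1 y)
      _ = ∫ z, W z ∂(μ.prod μ) := by
          exact MeasureTheory.integral_integral (f := fun y x => K (x, y) * f x * g y) hWint
  -- integrability of RHS integrands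
  have hR1c : ContinuousOn (fun x => φ x ^ p * F₁ x * f x ^ p) I :=
    ((hφ.rpow_const fun x _ => Or.inr hp0.le).mul hF₁).mul
      (hf.rpow_const fun x _ => Or.inr hp0.le)
  have hR2c : ContinuousOn (fun y => ψ y ^ q * G₁ y * g y ^ q) I :=
    ((hψ.rpow_const fun x _ => Or.inr hq0.le).mul hG₁).mul
      (hg.rpow_const fun x _ => Or.inr hq0.le)
  have hR1int : Integrable (fun x => φ x ^ p * F₁ x * f x ^ p) μ := by
    rw [hμdef]; exact hR1c.integrableOn_compact hIc
  have hR2int : Integrable (fun y => ψ y ^ q * G₁ y * g y ^ q) μ := by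
    rw [hμdef]; exact hR2c.integrableOn_compact hIc
  have haeI : ∀ᵐ t ∂μ, t ∈ I := by rw [hμdef]; exact ae_restrict_mem hIm
  -- bound for the A integral
  have hAle : ∫ z, A z ∂(μ.prod μ) ≤ ∫ x, φ x ^ p * F₁ x * f x ^ p ∂μ := by
    rw [MeasureTheory.integral_prod_symm A hAint]
    refine integral_mono_ae hAint.integral_prod_right hR1int ?_
    filter_upwards [haeI] with x hx
    have hf0 : 0 ≤ f x := hfnn _ hx
    have hφ0 : 0 < φ x := hφpos _ hx
    have h1 : (∫ yv, A (yv, x) ∂μ)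
        = (f x ^ p * φ x ^ p) * ∫ yv, K (x, yv) * ψ yv ^ (-p) ∂μ := by
      rw [← integral_const_mul]
      exact integral_congr_ae (Filter.Eventually.of_forall fun yv => by
        simp only [hAdef]; ring)
    have h2 : (∫ yv, K (x, yv) * ψ yv ^ (-p) ∂μ) ≤ F₁ x := by
      rw [← hconv]; exact hFbound x hx
    calc (∫ yv, A (yv, x) ∂μ)
        = (f x ^ p * φ x ^ p) * ∫ yv, K (x, yv) * ψ yv ^ (-p) ∂μ := h1
      _ ≤ (f x ^ p * φ x ^ p) * F₁ x := by
          refine mul_le_mul_of_nonneg_left h2 ?_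
          exact mul_nonneg (Real.rpow_nonneg hf0 _) (Real.rpow_nonneg hφ0.le _)
      _ = φ x ^ p * F₁ x * f x ^ p := by ring
  -- bound for the B integral
  have hBle : ∫ z, B z ∂(μ.prod μ) ≤ ∫ y, ψ y ^ q * G₁ y * g y ^ q ∂μ := by
    rw [MeasureTheory.integral_prod B hBint]
    refine integral_mono_ae hBint.integral_prod_left hR2int ?_
    filter_upwards [haeI] with y hy
    have hg0 : 0 ≤ g y := hgnn _ hy
    have hψ0 : 0 < ψ y := hψpos _ hy
    have h1 : (∫ xv, B (y, xv) ∂μ)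
        = (g y ^ q * ψ y ^ q) * ∫ xv, K (xv, y) * φ xv ^ (-q) ∂μ := by
      rw [← integral_const_mul]
      exact integral_congr_ae (Filter.Eventually.of_forall fun xv => by
        simp only [hBdef]; ring)
    have h2 : (∫ xv, K (xv, y) * φ xv ^ (-q) ∂μ) ≤ G₁ y := by
      rw [← hconv]; exact hGbound y hy
    calc (∫ xv, B (y, xv) ∂μ)
        = (g y ^ q * ψ y ^ q) * ∫ xv, K (xv, y) * φ xv ^ (-q) ∂μ := h1
      _ ≤ (g y ^ q * ψ y ^ q) * G₁ y := by
          refine mul_le_mul_of_nonneg_left h2 ?_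
          exact mul_nonneg (Real.rpow_nonneg hg0 _) (Real.rpow_nonneg hψ0.le _)
      _ = ψ y ^ q * G₁ y * g y ^ q := by ring
  -- nonnegativity of the A, B integrals
  have hAnn : 0 ≤ ∫ z, A z ∂(μ.prod μ) := by
    rw [← hUA]
    refine integral_nonneg_of_ae ?_
    filter_upwards [hUnn] with z hz using Real.rpow_nonneg hz _
  have hBnn : 0 ≤ ∫ z, B z ∂(μ.prod μ) := by
    rw [← hVB]
    refine integral_nonneg_of_ae ?_
    filter_upwards [hVnn] with z hz using Real.rpow_nonneg hz _
  -- assemble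
  rw [hLHS, hconv (fun x => φ x ^ p * F₁ x * f x ^ p), hconv (fun y => ψ y ^ q * G₁ y * g y ^ q)]
  calc ∫ z, W z ∂(μ.prod μ)
      = ∫ z, U z * V z ∂(μ.prod μ) := hUVW.symm
    _ ≤ (∫ z, U z ^ p ∂(μ.prod μ)) ^ (1 / p) * (∫ z, V z ^ q ∂(μ.prod μ)) ^ (1 / q) := hHolder
    _ = (∫ z, A z ∂(μ.prod μ)) ^ (1 / p) * (∫ z, B z ∂(μ.prod μ)) ^ (1 / q) := by
        rw [hUA, hVB]
    _ ≤ (∫ x, φ x ^ p * F₁ x * f x ^ p ∂μ) ^ (1 / p) *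
        (∫ y, ψ y ^ q * G₁ y * g y ^ q ∂μ) ^ (1 / q) := by
        refine mul_le_mul (Real.rpow_le_rpow hAnn hAle (by positivity))
          (Real.rpow_le_rpow hBnn hBle (by positivity))
          (Real.rpow_nonneg hBnn _) (Real.rpow_nonneg (le_trans hAnn hAle) _)
end

section
/- Let a < b be real numbers and let p > 1, q with 1/p + 1/q = 1. Let K : ℝ × ℝ → ℝ be continuous and nonnegative on [a,b] × [a,b], let f : ℝ → ℝ be continuous and nonnegative on [a,b], and let φ, ψ : ℝ → ℝ be continuous and positive on [a,b]. Let F₁, G₁ : ℝ → ℝ be continuous functions with G₁ positive on [a,b], such that ∫_a^b K(x,y)·ψ(y)^(−p) dy ≤ F₁(x) for all x ∈ [a,b] and ∫_a^b K(x,y)·φ(x)^(−q) dx ≤ G₁(y) for all y ∈ [a,b]. Then ∫_a^b G₁(y)^(1−p)·ψ(y)^(−p)·(∫_a^b K(x,y)·f(x) dx)^p dy ≤ ∫_a^b φ(x)^p·F₁(x)·f(x)^p dx. (Inequality (8) of Theorem 3.8, continuous case 𝕋 = ℝ.) -/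
open MeasureTheory Set

/-- Inequality (8) of Theorem 3.8, continuous case 𝕋 = ℝ. -/
theorem bounded_kernel_hardy_inequality_continuous
    (a b p q : ℝ) (K : ℝ × ℝ → ℝ) (f φ ψ F₁ G₁ : ℝ → ℝ)
    (hab : a < b) (hp : 1 < p) (hpq : 1 / p + 1 / q = 1)
    (hK : ContinuousOn K (Set.Icc a b ×ˢ Set.Icc a b))
    (hKnn : ∀ z ∈ Set.Icc a b ×ˢ Set.Icc a b, 0 ≤ K z)
    (hf : ContinuousOn f (Set.Icc a b)) (hfnn : ∀ t ∈ Set.Icc a b, 0 ≤ f t)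
    (hφ : ContinuousOn φ (Set.Icc a b)) (hφpos : ∀ t ∈ Set.Icc a b, 0 < φ t)
    (hψ : ContinuousOn ψ (Set.Icc a b)) (hψpos : ∀ t ∈ Set.Icc a b, 0 < ψ t)
    (hF₁ : ContinuousOn F₁ (Set.Icc a b)) (hG₁ : ContinuousOn G₁ (Set.Icc a b))
    (hG₁pos : ∀ y ∈ Set.Icc a b, 0 < G₁ y)
    (hFbound : ∀ x ∈ Set.Icc a b, (∫ y in a..b, K (x, y) * ψ y ^ (-p)) ≤ F₁ x)
    (hGbound : ∀ y ∈ Set.Icc a b, (∫ x in a..b, K (x, y) * φ x ^ (-q)) ≤ G₁ y) :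
    (∫ y in a..b, G₁ y ^ (1 - p) * ψ y ^ (-p) * (∫ x in a..b, K (x, y) * f x) ^ p)
      ≤ ∫ x in a..b, φ x ^ p * F₁ x * f x ^ p := by
  have hble : a ≤ b := hab.le
  have hTS : Set.Ioc a b ⊆ Set.Icc a b := Set.Ioc_subset_Icc_self
  set μ := (volume : Measure ℝ).restrict (Set.Ioc a b) with hμdef
  haveI : Fact ((volume : Measure ℝ) (Set.Ioc a b) < ⊤) := ⟨measure_Ioc_lt_top⟩
  -- exponent facts
  have hp0 : 0 < p := lt_trans zero_lt_one hp
  have hpq' : p.HolderConjugate q := Real.holderConjugate_iff.mpr ⟨hp, by rw [← one_div, ← one_div]; exact hpq⟩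
  have hq1 : 1 < q := hpq'.symm.lt
  have hq0 : 0 < q := lt_trans zero_lt_one hq1
  have hdiv : p / q = p - 1 := by
    have h1q : 1 / q = 1 - 1 / p := by linarith
    rw [div_eq_mul_one_div, h1q]
    field_simp
  -- helpers
  have memLp : ∀ (u : ℝ → ℝ), ContinuousOn u (Set.Icc a b) → ∀ r : ENNReal, MemLp u r μ := by
    intro u hu r
    obtain ⟨C, hC⟩ := isCompact_Icc.exists_bound_of_continuousOn hu
    exact MemLp.of_bound ((hu.mono hTS).aestronglyMeasurable measurableSet_Ioc) C
      ((ae_restrict_iff' measurableSet_Ioc).mpr (ae_of_all _ fun x hx => hC x (hTS hx)))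
  have intOn : ∀ (u : ℝ → ℝ), ContinuousOn u (Set.Icc a b) → Integrable u μ := fun u hu =>
    (hu.integrableOn_Icc).mono_set hTS
  have hφp : ContinuousOn (fun x => φ x ^ p) (Set.Icc a b) :=
    hφ.rpow_const fun x hx => Or.inr hp0.le
  have hfp : ContinuousOn (fun x => f x ^ p) (Set.Icc a b) :=
    hf.rpow_const fun x hx => Or.inr hp0.le
  have hφinv : ContinuousOn (fun x => (φ x)⁻¹) (Set.Icc a b) :=
    hφ.inv₀ fun x hx => (hφpos x hx).ne'
  have hKx : ∀ y ∈ Set.Icc a b, ContinuousOn (fun x => K (x, y)) (Set.Icc a b) := fun y hy =>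
    hK.comp ((continuous_id.prodMk continuous_const).continuousOn)
      (fun x hx => Set.mk_mem_prod hx hy)
  have hcnn : ∀ x ∈ Set.Icc a b, 0 ≤ φ x ^ p * f x ^ p := fun x hx =>
    mul_nonneg (Real.rpow_nonneg (hφpos x hx).le _) (Real.rpow_nonneg (hfnn x hx) _)
  -- Hölder step
  have key : ∀ y ∈ Set.Icc a b, (∫ x, K (x, y) * f x ∂μ)
      ≤ (∫ x, K (x, y) * (φ x ^ p * f x ^ p) ∂μ) ^ (1/p) * G₁ y ^ (1/q) := by
    intro y hy
    set u : ℝ → ℝ := fun x => K (x, y) ^ (1/p) * (φ x * f x) with hu_def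
    set v : ℝ → ℝ := fun x => K (x, y) ^ (1/q) * (φ x)⁻¹ with hv_def
    have hucont : ContinuousOn u (Set.Icc a b) :=
      ((hKx y hy).rpow_const fun x hx => Or.inr (by positivity)).mul (hφ.mul hf)
    have hvcont : ContinuousOn v (Set.Icc a b) :=
      ((hKx y hy).rpow_const fun x hx => Or.inr (by positivity)).mul hφinv
    have hunn : ∀ x ∈ Set.Icc a b, 0 ≤ u x := fun x hx =>
      mul_nonneg (Real.rpow_nonneg (hKnn _ ⟨hx, hy⟩) _)
        (mul_nonneg (hφpos x hx).le (hfnn x hx))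
    have hvnn : ∀ x ∈ Set.Icc a b, 0 ≤ v x := fun x hx =>
      mul_nonneg (Real.rpow_nonneg (hKnn _ ⟨hx, hy⟩) _) (inv_nonneg.2 (hφpos x hx).le)
    have hold := integral_mul_le_Lp_mul_Lq_of_nonneg hpq'
      ((ae_restrict_iff' measurableSet_Ioc).mpr (ae_of_all _ fun x hx => hunn x (hTS hx)))
      ((ae_restrict_iff' measurableSet_Ioc).mpr (ae_of_all _ fun x hx => hvnn x (hTS hx)))
      (memLp u hucont _) (memLp v hvcont _)
    have e1 : (∫ x, u x * v x ∂μ) = ∫ x, K (x, y) * f x ∂μ := by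
      refine setIntegral_congr_fun measurableSet_Ioc fun x hx => ?_
      have hx' := hTS hx
      have hK0 : (0:ℝ) ≤ K (x, y) := hKnn _ ⟨hx', hy⟩
      have hKsum : K (x, y) ^ (1/p) * K (x, y) ^ (1/q) = K (x, y) := by
        rw [← Real.rpow_add' hK0 (by rw [hpq]; norm_num), hpq, Real.rpow_one]
      calc u x * v x
          = (K (x, y) ^ (1/p) * K (x, y) ^ (1/q)) * ((φ x * (φ x)⁻¹) * f x) := by
            simp only [hu_def, hv_def]; ring
        _ = K (x, y) * f x := by
            rw [hKsum, mul_inv_cancel₀ (hφpos x hx').ne', one_mul]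
    have e2 : (∫ x, u x ^ p ∂μ) = ∫ x, K (x, y) * (φ x ^ p * f x ^ p) ∂μ := by
      refine setIntegral_congr_fun measurableSet_Ioc fun x hx => ?_
      have hx' := hTS hx
      have hK0 : (0:ℝ) ≤ K (x, y) := hKnn _ ⟨hx', hy⟩
      show (K (x, y) ^ (1/p) * (φ x * f x)) ^ p = K (x, y) * (φ x ^ p * f x ^ p)
      rw [Real.mul_rpow (Real.rpow_nonneg hK0 _)
            (mul_nonneg (hφpos x hx').le (hfnn x hx')),
          Real.mul_rpow (hφpos x hx').le (hfnn x hx'),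
          ← Real.rpow_mul hK0, one_div_mul_cancel hp0.ne', Real.rpow_one]
    have e3 : (∫ x, v x ^ q ∂μ) = ∫ x, K (x, y) * φ x ^ (-q) ∂μ := by
      refine setIntegral_congr_fun measurableSet_Ioc fun x hx => ?_
      have hx' := hTS hx
      have hK0 : (0:ℝ) ≤ K (x, y) := hKnn _ ⟨hx', hy⟩
      show (K (x, y) ^ (1/q) * (φ x)⁻¹) ^ q = K (x, y) * φ x ^ (-q)
      rw [Real.mul_rpow (Real.rpow_nonneg hK0 _) (inv_nonneg.2 (hφpos x hx').le),
          Real.inv_rpow (hφpos x hx').le, ← Real.rpow_neg (hφpos x hx').le,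
          ← Real.rpow_mul hK0, one_div_mul_cancel hq0.ne', Real.rpow_one]
    rw [e1, e2, e3] at hold
    have hBle : (∫ x, K (x, y) * φ x ^ (-q) ∂μ) ≤ G₁ y := by
      have h := hGbound y hy
      rwa [intervalIntegral.integral_of_le hble] at h
    have hBnn : 0 ≤ ∫ x, K (x, y) * φ x ^ (-q) ∂μ :=
      setIntegral_nonneg measurableSet_Ioc fun x hx =>
        mul_nonneg (hKnn _ ⟨hTS hx, hy⟩) (Real.rpow_nonneg (hφpos x (hTS hx)).le _)
    have hAnn : 0 ≤ ∫ x, K (x, y) * (φ x ^ p * f x ^ p) ∂μ :=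
      setIntegral_nonneg measurableSet_Ioc fun x hx =>
        mul_nonneg (hKnn _ ⟨hTS hx, hy⟩) (hcnn x (hTS hx))
    exact hold.trans (mul_le_mul_of_nonneg_left
      (Real.rpow_le_rpow hBnn hBle (by positivity)) (Real.rpow_nonneg hAnn _))
  -- the product function
  set H : ℝ × ℝ → ℝ := fun z => ψ z.2 ^ (-p) * (K z * (φ z.1 ^ p * f z.1 ^ p)) with hH_def
  have hHcont : ContinuousOn H (Set.Icc a b ×ˢ Set.Icc a b) := by
    refine ContinuousOn.mul ?_ (hK.mul (ContinuousOn.mul ?_ ?_))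
    · exact (hψ.comp continuous_snd.continuousOn fun z hz => hz.2).rpow_const
        fun z hz => Or.inl (hψpos _ hz.2).ne'
    · exact (hφ.comp continuous_fst.continuousOn fun z hz => hz.1).rpow_const
        fun z hz => Or.inr hp0.le
    · exact (hf.comp continuous_fst.continuousOn fun z hz => hz.1).rpow_const
        fun z hz => Or.inr hp0.le
  have hHint : Integrable H (μ.prod μ) := by
    rw [hμdef, Measure.prod_restrict, ← Measure.volume_eq_prod]
    exact (hHcont.integrableOn_compact (isCompact_Icc.prod isCompact_Icc)).mono_set
      (Set.prod_mono hTS hTS)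
  have hHnn : ∀ x ∈ Set.Icc a b, ∀ y ∈ Set.Icc a b, 0 ≤ H (x, y) := fun x hx y hy =>
    mul_nonneg (Real.rpow_nonneg (hψpos y hy).le _)
      (mul_nonneg (hKnn _ ⟨hx, hy⟩) (hcnn x hx))
  -- step 1
  have step1 : (∫ y, G₁ y ^ (1 - p) * ψ y ^ (-p) * (∫ x, K (x, y) * f x ∂μ) ^ p ∂μ)
      ≤ ∫ y, (∫ x, H (x, y) ∂μ) ∂μ := by
    refine integral_mono_of_nonneg ?_ hHint.integral_prod_right ?_
    · refine (ae_restrict_iff' measurableSet_Ioc).mpr (ae_of_all _ fun y hy => ?_)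
      have hy' := hTS hy
      have hInn : 0 ≤ ∫ x, K (x, y) * f x ∂μ :=
        setIntegral_nonneg measurableSet_Ioc fun x hx =>
          mul_nonneg (hKnn _ ⟨hTS hx, hy'⟩) (hfnn x (hTS hx))
      exact mul_nonneg (mul_nonneg (Real.rpow_nonneg (hG₁pos y hy').le _)
        (Real.rpow_nonneg (hψpos y hy').le _)) (Real.rpow_nonneg hInn _)
    · refine (ae_restrict_iff' measurableSet_Ioc).mpr (ae_of_all _ fun y hy => ?_)
      have hy' := hTS hy
      have hEq : (∫ x, H (x, y) ∂μ) = ψ y ^ (-p) * ∫ x, K (x, y) * (φ x ^ p * f x ^ p) ∂μ := by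
        simp only [hH_def]
        exact integral_const_mul _ _
      dsimp only
      rw [hEq]
      have hInn : 0 ≤ ∫ x, K (x, y) * f x ∂μ :=
        setIntegral_nonneg measurableSet_Ioc fun x hx =>
          mul_nonneg (hKnn _ ⟨hTS hx, hy'⟩) (hfnn x (hTS hx))
      have hAnn : 0 ≤ ∫ x, K (x, y) * (φ x ^ p * f x ^ p) ∂μ :=
        setIntegral_nonneg measurableSet_Ioc fun x hx =>
          mul_nonneg (hKnn _ ⟨hTS hx, hy'⟩) (hcnn x (hTS hx))
      have hGp : 0 < G₁ y := hG₁pos y hy'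
      have h2 : (∫ x, K (x, y) * f x ∂μ) ^ p
          ≤ (∫ x, K (x, y) * (φ x ^ p * f x ^ p) ∂μ) * G₁ y ^ (p - 1) := by
        calc (∫ x, K (x, y) * f x ∂μ) ^ p
            ≤ ((∫ x, K (x, y) * (φ x ^ p * f x ^ p) ∂μ) ^ (1/p) * G₁ y ^ (1/q)) ^ p :=
              Real.rpow_le_rpow hInn (key y hy') hp0.le
          _ = (∫ x, K (x, y) * (φ x ^ p * f x ^ p) ∂μ) * G₁ y ^ (p - 1) := by
              rw [Real.mul_rpow (Real.rpow_nonneg hAnn _) (Real.rpow_nonneg hGp.le _),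
                ← Real.rpow_mul hAnn, ← Real.rpow_mul hGp.le,
                one_div_mul_cancel hp0.ne', Real.rpow_one,
                show (1/q) * p = p - 1 by rw [div_mul_eq_mul_div, one_mul, hdiv]]
      calc G₁ y ^ (1 - p) * ψ y ^ (-p) * (∫ x, K (x, y) * f x ∂μ) ^ p
          ≤ G₁ y ^ (1 - p) * ψ y ^ (-p)
              * ((∫ x, K (x, y) * (φ x ^ p * f x ^ p) ∂μ) * G₁ y ^ (p - 1)) :=
            mul_le_mul_of_nonneg_left h2
              (mul_nonneg (Real.rpow_nonneg hGp.le _) (Real.rpow_nonneg (hψpos y hy').le _))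
        _ = ψ y ^ (-p) * (∫ x, K (x, y) * (φ x ^ p * f x ^ p) ∂μ)
              * (G₁ y ^ (1 - p) * G₁ y ^ (p - 1)) := by ring
        _ = ψ y ^ (-p) * ∫ x, K (x, y) * (φ x ^ p * f x ^ p) ∂μ := by
            rw [← Real.rpow_add hGp, show (1 - p) + (p - 1) = 0 by ring,
              Real.rpow_zero, mul_one]
  -- step 2 : Fubini
  have step2 : (∫ y, (∫ x, H (x, y) ∂μ) ∂μ) = ∫ x, (∫ y, H (x, y) ∂μ) ∂μ :=
    (integral_integral_swap (f := fun x y => H (x, y)) hHint).symm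
  -- step 3
  have step3 : (∫ x, (∫ y, H (x, y) ∂μ) ∂μ) ≤ ∫ x, φ x ^ p * F₁ x * f x ^ p ∂μ := by
    refine integral_mono_of_nonneg ?_ (intOn _ ((hφp.mul hF₁).mul hfp)) ?_
    · refine (ae_restrict_iff' measurableSet_Ioc).mpr (ae_of_all _ fun x hx => ?_)
      exact integral_nonneg_of_ae ((ae_restrict_iff' measurableSet_Ioc).mpr
        (ae_of_all _ fun y hy => hHnn x (hTS hx) y (hTS hy)))
    · refine (ae_restrict_iff' measurableSet_Ioc).mpr (ae_of_all _ fun x hx => ?_)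
      have hx' := hTS hx
      have hEq : (∫ y, H (x, y) ∂μ)
          = (φ x ^ p * f x ^ p) * ∫ y, K (x, y) * ψ y ^ (-p) ∂μ := by
        rw [show (fun y => H (x, y))
            = fun y => (φ x ^ p * f x ^ p) * (K (x, y) * ψ y ^ (-p)) from
          funext fun y => by simp only [hH_def]; ring]
        exact integral_const_mul _ _
      dsimp only
      rw [hEq]
      have hFb : (∫ y, K (x, y) * ψ y ^ (-p) ∂μ) ≤ F₁ x := by
        have h := hFbound x hx'
        rwa [intervalIntegral.integral_of_le hble] at h
      calc (φ x ^ p * f x ^ p) * ∫ y, K (x, y) * ψ y ^ (-p) ∂μ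
          ≤ (φ x ^ p * f x ^ p) * F₁ x := mul_le_mul_of_nonneg_left hFb (hcnn x hx')
        _ = φ x ^ p * F₁ x * f x ^ p := by ring
  -- combine
  rw [intervalIntegral.integral_of_le hble, intervalIntegral.integral_of_le hble]
  simp only [intervalIntegral.integral_of_le hble]
  exact step1.trans (step2 ▸ step3)
end

section
/- Let a < b and c < d be real numbers, p > 1, q with 1/p + 1/q = 1, and C > 0. Let F : ℝ → ℝ be continuous and positive on [a,b], G : ℝ → ℝ continuous and positive on [c,d], f : ℝ → ℝ continuous on [a,b], g : ℝ → ℝ continuous on [c,d], M, N : ℝ → ℝ continuous and positive, and L : ℝ × ℝ → ℝ continuous and positive. Assume 0 < ∫_a^b M(f(t))^p·F(t)^p dt < ∞ and 0 < ∫_c^d N(g(t))^q·G(t)^q dt < ∞. If ∫_c^d N(g(y))^(−p)·(∫_a^b F(x)/L(f(x),g(y)) dx)^p dy ≤ C^p·∫_a^b M(f(t))^p·F(t)^p dt, then ∫_a^b ∫_c^d F(x)·G(y)/L(f(x),g(y)) dy dx ≤ C·(∫_a^b M(f(t))^p·F(t)^p dt)^(1/p)·(∫_c^d N(g(t))^q·G(t)^q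 dt)^(1/q). (Direction (10) ⟹ (9) of Theorem 3.9, continuous case 𝕋 = ℝ.) -/
open MeasureTheory Set intervalIntegral

/-- Tietze extension for `ContinuousOn` on a closed set. -/
lemma my_exists_ext {s : Set ℝ} (hs : IsClosed s) (F : ℝ → ℝ) (hF : ContinuousOn F s) :
    ∃ F' : ℝ → ℝ, Continuous F' ∧ ∀ x ∈ s, F' x = F x := by
  obtain ⟨g, hg⟩ := ContinuousMap.exists_restrict_eq (Y := ℝ) hs ⟨s.restrict F, hF.restrict⟩
  exact ⟨g, g.continuous, fun x hx => congr($(hg) ⟨x, hx⟩)⟩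

lemma my_memLp_s13 {c d : ℝ} (φ : ℝ → ℝ) (hφ : Continuous φ) (r : ENNReal) :
    MemLp φ r (volume.restrict (Set.Ioc c d)) := by
  haveI : IsFiniteMeasure (volume.restrict (Set.Ioc c d)) :=
    ⟨by rw [Measure.restrict_apply_univ]; exact measure_Ioc_lt_top⟩
  obtain ⟨B, hB⟩ := (isCompact_Icc (a := c) (b := d)).exists_bound_of_continuousOn hφ.continuousOn
  exact MemLp.of_bound hφ.aestronglyMeasurable B
    ((ae_restrict_iff' measurableSet_Ioc).2 (Filter.Eventually.of_forall
      fun y hy => hB y (Set.Ioc_subset_Icc_self hy)))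

theorem aux_main_s13
    (a b c d p q C : ℝ) (F G f g M N : ℝ → ℝ) (L : ℝ × ℝ → ℝ)
    (hab : a < b) (hcd : c < d) (hp : 1 < p) (hpq : 1 / p + 1 / q = 1) (hC : 0 < C)
    (hF : Continuous F) (hFpos : ∀ t ∈ Set.Icc a b, 0 < F t)
    (hG : Continuous G) (hGpos : ∀ t ∈ Set.Icc c d, 0 < G t)
    (hf : Continuous f) (hg : Continuous g)
    (hN : Continuous N) (hNpos : ∀ x, 0 < N x)
    (hL : Continuous L) (hLpos : ∀ z, 0 < L z)
    (hMF : 0 ≤ ∫ t in a..b, M (f t) ^ p * F t ^ p)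
    (h10 : (∫ y in c..d, N (g y) ^ (-p) * (∫ x in a..b, F x / L (f x, g y)) ^ p)
      ≤ C ^ p * ∫ t in a..b, M (f t) ^ p * F t ^ p) :
    (∫ x in a..b, ∫ y in c..d, F x * G y / L (f x, g y))
      ≤ C * (∫ t in a..b, M (f t) ^ p * F t ^ p) ^ (1 / p) *
          (∫ t in c..d, N (g t) ^ q * G t ^ q) ^ (1 / q) := by
  have hab' : a ≤ b := hab.le
  have hcd' : c ≤ d := hcd.le
  have hpq' : p.HolderConjugate q := Real.holderConjugate_iff.mpr ⟨hp, by simpa [one_div] using hpq⟩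
  have hp0 : p ≠ 0 := hpq'.left_pos.ne'
  set I : ℝ := ∫ t in a..b, M (f t) ^ p * F t ^ p with hIdef
  -- the inner integral as a function of y
  set K : ℝ → ℝ := fun y => ∫ x in a..b, F x / L (f x, g y) with hKdef
  have hcont2 : Continuous (Function.uncurry fun y x => F x / L (f x, g y)) := by
    apply Continuous.div
    · exact hF.comp continuous_snd
    · exact hL.comp ((hf.comp continuous_snd).prodMk (hg.comp continuous_fst))
    · exact fun z => (hLpos _).ne'
  have hK : Continuous K :=
    intervalIntegral.continuous_parametric_intervalIntegral_of_continuous' hcont2 a b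
  have hKpos : ∀ y, 0 < K y := by
    intro y
    apply intervalIntegral.intervalIntegral_pos_of_pos_on
    · exact Continuous.intervalIntegrable
        (hF.div (hL.comp (hf.prodMk (continuous_const (y := g y)))) fun x => (hLpos _).ne') a b
    · intro x hx
      exact div_pos (hFpos x (Ioo_subset_Icc_self hx)) (hLpos _)
    · exact hab
  -- Step 1 : Fubini
  have step1 : (∫ x in a..b, ∫ y in c..d, F x * G y / L (f x, g y))
      = ∫ y in Set.Ioc c d, G y * K y := by
    have hcontp : Continuous (Function.uncurry fun x y => F x * G y / L (f x, g y)) := by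
      apply Continuous.div
      · exact (hF.comp continuous_fst).mul (hG.comp continuous_snd)
      · exact hL.comp ((hf.comp continuous_fst).prodMk (hg.comp continuous_snd))
      · exact fun z => (hLpos _).ne'
    have hint : Integrable (Function.uncurry fun x y => F x * G y / L (f x, g y))
        ((volume.restrict (Set.Ioc a b)).prod (volume.restrict (Set.Ioc c d))) := by
      rw [Measure.prod_restrict]
      exact (hcontp.continuousOn.integrableOn_compact (isCompact_Icc.prod isCompact_Icc)).mono_set
        (Set.prod_mono Set.Ioc_subset_Icc_self Set.Ioc_subset_Icc_self)
    calc (∫ x in a..b, ∫ y in c..d, F x * G y / L (f x, g y))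
        = ∫ x in Set.Ioc a b, ∫ y in Set.Ioc c d, F x * G y / L (f x, g y) := by
          rw [intervalIntegral.integral_of_le hab']
          exact setIntegral_congr_fun measurableSet_Ioc fun x _ =>
            intervalIntegral.integral_of_le hcd'
      _ = ∫ y in Set.Ioc c d, ∫ x in Set.Ioc a b, F x * G y / L (f x, g y) :=
          MeasureTheory.integral_integral_swap hint
      _ = ∫ y in Set.Ioc c d, G y * K y := by
          refine setIntegral_congr_fun measurableSet_Ioc fun y _ => ?_
          simp only [hKdef]
          rw [intervalIntegral.integral_of_le hab', ← MeasureTheory.integral_const_mul]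
          exact integral_congr_ae (Filter.Eventually.of_forall fun x => by ring)
  -- Hölder factors
  set h₁ : ℝ → ℝ := fun y => (N (g y))⁻¹ * K y with hh₁
  set h₂ : ℝ → ℝ := fun y => N (g y) * G y with hh₂
  have hA : (∫ y in Set.Ioc c d, h₁ y ^ p)
      = ∫ y in c..d, N (g y) ^ (-p) * (∫ x in a..b, F x / L (f x, g y)) ^ p := by
    rw [intervalIntegral.integral_of_le hcd']
    refine setIntegral_congr_fun measurableSet_Ioc fun y _ => ?_
    rw [hh₁]
    rw [Real.mul_rpow (inv_nonneg.2 (hNpos _).le) (hKpos y).le,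
      Real.inv_rpow (hNpos _).le, ← Real.rpow_neg (hNpos _).le]
  have hB : (∫ y in Set.Ioc c d, h₂ y ^ q)
      = ∫ t in c..d, N (g t) ^ q * G t ^ q := by
    rw [intervalIntegral.integral_of_le hcd']
    refine setIntegral_congr_fun measurableSet_Ioc fun y hy => ?_
    rw [hh₂, Real.mul_rpow (hNpos _).le (hGpos y (Set.Ioc_subset_Icc_self hy)).le]
  have hh₁c : Continuous h₁ := ((hN.comp hg).inv₀ fun y => (hNpos _).ne').mul hK
  have hh₂c : Continuous h₂ := (hN.comp hg).mul hG
  have holder : (∫ y in Set.Ioc c d, h₁ y * h₂ y)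
      ≤ (∫ y in Set.Ioc c d, h₁ y ^ p) ^ (1/p) * (∫ y in Set.Ioc c d, h₂ y ^ q) ^ (1/q) := by
    refine MeasureTheory.integral_mul_le_Lp_mul_Lq_of_nonneg hpq' ?_ ?_
      (my_memLp_s13 h₁ hh₁c _) (my_memLp_s13 h₂ hh₂c _)
    · exact Filter.Eventually.of_forall fun y =>
        mul_nonneg (inv_nonneg.2 (hNpos _).le) (hKpos y).le
    · exact (ae_restrict_iff' measurableSet_Ioc).2 (Filter.Eventually.of_forall fun y hy =>
        mul_nonneg (hNpos _).le (hGpos y (Set.Ioc_subset_Icc_self hy)).le)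
  have key : (∫ y in Set.Ioc c d, G y * K y) = ∫ y in Set.Ioc c d, h₁ y * h₂ y := by
    refine setIntegral_congr_fun measurableSet_Ioc fun y _ => ?_
    show G y * K y = (N (g y))⁻¹ * K y * (N (g y) * G y)
    rw [mul_mul_mul_comm, inv_mul_cancel₀ (hNpos _).ne', one_mul, mul_comm]
  -- bounding the first factor
  have hApos : 0 ≤ ∫ y in Set.Ioc c d, h₁ y ^ p :=
    setIntegral_nonneg measurableSet_Ioc fun y _ => Real.rpow_nonneg
      (mul_nonneg (inv_nonneg.2 (hNpos _).le) (hKpos y).le) p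
  have hfac1 : (∫ y in Set.Ioc c d, h₁ y ^ p) ^ (1/p) ≤ C * I ^ (1/p) := by
    have h1 : (∫ y in Set.Ioc c d, h₁ y ^ p) ≤ C ^ p * I := by rw [hA]; exact h10
    calc (∫ y in Set.Ioc c d, h₁ y ^ p) ^ (1/p)
        ≤ (C ^ p * I) ^ (1/p) :=
          Real.rpow_le_rpow hApos h1 (by positivity)
      _ = (C ^ p) ^ (1/p) * I ^ (1/p) :=
          Real.mul_rpow (Real.rpow_nonneg hC.le p) hMF
      _ = C * I ^ (1/p) := by
          rw [← Real.rpow_mul hC.le, mul_one_div_cancel hp0, Real.rpow_one]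
  have hBpos : 0 ≤ (∫ y in Set.Ioc c d, h₂ y ^ q) ^ (1/q) := Real.rpow_nonneg
    (setIntegral_nonneg measurableSet_Ioc fun y hy => Real.rpow_nonneg
      (mul_nonneg (hNpos _).le (hGpos y (Set.Ioc_subset_Icc_self hy)).le) q) _
  calc (∫ x in a..b, ∫ y in c..d, F x * G y / L (f x, g y))
      = ∫ y in Set.Ioc c d, h₁ y * h₂ y := by rw [step1, key]
    _ ≤ (∫ y in Set.Ioc c d, h₁ y ^ p) ^ (1/p) * (∫ y in Set.Ioc c d, h₂ y ^ q) ^ (1/q) := holder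
    _ ≤ (C * I ^ (1/p)) * (∫ y in Set.Ioc c d, h₂ y ^ q) ^ (1/q) :=
        mul_le_mul_of_nonneg_right hfac1 hBpos
    _ = C * I ^ (1/p) * (∫ t in c..d, N (g t) ^ q * G t ^ q) ^ (1/q) := by rw [hB]

/-- Direction (10) ⟹ (9) of Theorem 3.9, continuous case 𝕋 = ℝ. -/
theorem sulaiman_type_backward_continuous
    (a b c d p q C : ℝ) (F G f g M N : ℝ → ℝ) (L : ℝ × ℝ → ℝ)
    (hab : a < b) (hcd : c < d) (hp : 1 < p) (hpq : 1 / p + 1 / q = 1) (hC : 0 < C)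
    (hF : ContinuousOn F (Set.Icc a b)) (hFpos : ∀ t ∈ Set.Icc a b, 0 < F t)
    (hG : ContinuousOn G (Set.Icc c d)) (hGpos : ∀ t ∈ Set.Icc c d, 0 < G t)
    (hf : ContinuousOn f (Set.Icc a b)) (hg : ContinuousOn g (Set.Icc c d))
    (hM : Continuous M) (hMpos : ∀ x, 0 < M x)
    (hN : Continuous N) (hNpos : ∀ x, 0 < N x)
    (hL : Continuous L) (hLpos : ∀ z, 0 < L z)
    (hMF : 0 < ∫ t in a..b, M (f t) ^ p * F t ^ p)
    (hNG : 0 < ∫ t in c..d, N (g t) ^ q * G t ^ q)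
    (h10 : (∫ y in c..d, N (g y) ^ (-p) * (∫ x in a..b, F x / L (f x, g y)) ^ p)
      ≤ C ^ p * ∫ t in a..b, M (f t) ^ p * F t ^ p) :
    (∫ x in a..b, ∫ y in c..d, F x * G y / L (f x, g y))
      ≤ C * (∫ t in a..b, M (f t) ^ p * F t ^ p) ^ (1 / p) *
          (∫ t in c..d, N (g t) ^ q * G t ^ q) ^ (1 / q) := by
  obtain ⟨F', hF'c, hF'eq⟩ := my_exists_ext isClosed_Icc F hF
  obtain ⟨f', hf'c, hf'eq⟩ := my_exists_ext isClosed_Icc f hf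
  obtain ⟨G', hG'c, hG'eq⟩ := my_exists_ext isClosed_Icc G hG
  obtain ⟨g', hg'c, hg'eq⟩ := my_exists_ext isClosed_Icc g hg
  have hu1 : Set.uIcc a b = Set.Icc a b := Set.uIcc_of_le hab.le
  have hu2 : Set.uIcc c d = Set.Icc c d := Set.uIcc_of_le hcd.le
  have e1 : (∫ t in a..b, M (f' t) ^ p * F' t ^ p) = ∫ t in a..b, M (f t) ^ p * F t ^ p :=
    intervalIntegral.integral_congr fun t ht => by
      rw [hu1] at ht; rw [hf'eq t ht, hF'eq t ht]
  have e2 : (∫ t in c..d, N (g' t) ^ q * G' t ^ q) = ∫ t in c..d, N (g t) ^ q * G t ^ q :=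
    intervalIntegral.integral_congr fun t ht => by
      rw [hu2] at ht; rw [hg'eq t ht, hG'eq t ht]
  have einner : ∀ y, (∫ x in a..b, F' x / L (f' x, g' y)) = ∫ x in a..b, F x / L (f' x, g' y) :=
    fun y => intervalIntegral.integral_congr fun x hx => by
      rw [hu1] at hx; rw [hF'eq x hx]
  have e3 : (∫ y in c..d, N (g' y) ^ (-p) * (∫ x in a..b, F' x / L (f' x, g' y)) ^ p)
      = ∫ y in c..d, N (g y) ^ (-p) * (∫ x in a..b, F x / L (f x, g y)) ^ p :=
    intervalIntegral.integral_congr fun y hy => by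
      rw [hu2] at hy
      rw [hg'eq y hy]
      congr 2
      exact intervalIntegral.integral_congr fun x hx => by
        rw [hu1] at hx; rw [hF'eq x hx, hf'eq x hx]
  have e4 : (∫ x in a..b, ∫ y in c..d, F' x * G' y / L (f' x, g' y))
      = ∫ x in a..b, ∫ y in c..d, F x * G y / L (f x, g y) :=
    intervalIntegral.integral_congr fun x hx => by
      rw [hu1] at hx
      exact intervalIntegral.integral_congr fun y hy => by
        rw [hu2] at hy; rw [hF'eq x hx, hf'eq x hx, hG'eq y hy, hg'eq y hy]
  rw [← e1, ← e2, ← e4]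
  exact aux_main_s13 a b c d p q C F' G' f' g' M N L hab hcd hp hpq hC
    hF'c (fun t ht => (hF'eq t ht).symm ▸ hFpos t ht)
    hG'c (fun t ht => (hG'eq t ht).symm ▸ hGpos t ht)
    hf'c hg'c hN hNpos hL hLpos (e1 ▸ hMF.le) (by rw [e3, e1]; exact h10)
end

section
/- Let a < b and c < d be real numbers, p > 1, q with 1/p + 1/q = 1, and C > 0. Let F : ℝ → ℝ be continuous and positive on [a,b], f : ℝ → ℝ continuous on [a,b], g : ℝ → ℝ continuous on [c,d], M, N : ℝ → ℝ continuous and positive, and L : ℝ × ℝ → ℝ continuous and positive. Assume 0 < ∫_a^b M(f(t))^p·F(t)^p dt < ∞. Suppose that for every function G : ℝ → ℝ that is continuous and positive on [c,d] with 0 < ∫_c^d N(g(t))^q·G(t)^q dt < ∞, the inequality ∫_a^b ∫_c^d F(x)·G(y)/L(f(x),g(y)) dy dx ≤ C·(∫_a^b M(f(t))^p·F(t)^p dt)^(1/p)·(∫_c^d N(g(t))^q·G(t)^q dt)^(1/q) holds. Then ∫_c^d N(g(y))^(−p)·(∫_a^b F(x)/L(f(x),g(y)) dx)^p dy ≤ C^p·∫_a^b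 M(f(t))^p·F(t)^p dt. (Direction (9) ⟹ (10) of Theorem 3.9, continuous case 𝕋 = ℝ.) -/
open MeasureTheory Set intervalIntegral

private lemma exists_cont_ext {s : Set ℝ} (hs : IsClosed s) {φ : ℝ → ℝ}
    (hφ : ContinuousOn φ s) : ∃ ψ : ℝ → ℝ, Continuous ψ ∧ Set.EqOn ψ φ s := by
  obtain ⟨ψ, hψ⟩ := ContinuousMap.exists_restrict_eq (Y := ℝ) hs ⟨s.restrict φ, hφ.restrict⟩
  exact ⟨ψ, ψ.continuous, fun x hx => ContinuousMap.congr_fun hψ ⟨x, hx⟩⟩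

/-- Direction (9) ⟹ (10) of Theorem 3.9, continuous case 𝕋 = ℝ. -/
theorem sulaiman_type_forward_continuous
    (a b c d p q C : ℝ) (F f g M N : ℝ → ℝ) (L : ℝ × ℝ → ℝ)
    (hab : a < b) (hcd : c < d) (hp : 1 < p) (hpq : 1 / p + 1 / q = 1) (hC : 0 < C)
    (hF : ContinuousOn F (Set.Icc a b)) (hFpos : ∀ t ∈ Set.Icc a b, 0 < F t)
    (hf : ContinuousOn f (Set.Icc a b)) (hg : ContinuousOn g (Set.Icc c d))
    (hM : Continuous M) (hMpos : ∀ x, 0 < M x)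
    (hN : Continuous N) (hNpos : ∀ x, 0 < N x)
    (hL : Continuous L) (hLpos : ∀ z, 0 < L z)
    (hMF : 0 < ∫ t in a..b, M (f t) ^ p * F t ^ p)
    (h9 : ∀ G : ℝ → ℝ, ContinuousOn G (Set.Icc c d) →
      (∀ t ∈ Set.Icc c d, 0 < G t) →
      0 < (∫ t in c..d, N (g t) ^ q * G t ^ q) →
      (∫ x in a..b, ∫ y in c..d, F x * G y / L (f x, g y))
        ≤ C * (∫ t in a..b, M (f t) ^ p * F t ^ p) ^ (1 / p) *
            (∫ t in c..d, N (g t) ^ q * G t ^ q) ^ (1 / q)) :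
    (∫ y in c..d, N (g y) ^ (-p) * (∫ x in a..b, F x / L (f x, g y)) ^ p)
      ≤ C ^ p * ∫ t in a..b, M (f t) ^ p * F t ^ p := by
  have hp0 : 0 < p := lt_trans one_pos hp
  have hne : p ≠ 0 := hp0.ne'
  have hq0 : 0 < q := by
    have h1 : 1 / p < 1 := by rw [div_lt_one hp0]; exact hp
    have : 0 < 1 / q := by linarith
    exact one_div_pos.mp this
  have hqe : q ≠ 0 := hq0.ne'
  have hpq2 : q + p = p * q := by field_simp at hpq; linarith
  have hq1 : q * (p - 1) = p := by nlinarith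
  -- continuous extensions
  obtain ⟨F', hF'c, hF'⟩ := exists_cont_ext isClosed_Icc hF
  obtain ⟨f', hf'c, hf'⟩ := exists_cont_ext isClosed_Icc hf
  obtain ⟨g', hg'c, hg'⟩ := exists_cont_ext isClosed_Icc hg
  set K : ℝ → ℝ → ℝ := fun x y => F' x / L (f' x, g' y) with hKdef
  have hKc : Continuous (Function.uncurry K) := by
    apply Continuous.div
    · exact hF'c.comp continuous_fst
    · exact hL.comp ((hf'c.comp continuous_fst).prodMk (hg'c.comp continuous_snd))
    · exact fun z => (hLpos _).ne'
  set H : ℝ → ℝ := fun y => ∫ x in a..b, K x y with hHdef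
  have hHc : Continuous H :=
    intervalIntegral.continuous_parametric_intervalIntegral_of_continuous'
      (f := fun y x => K x y) (hKc.comp continuous_swap) a b
  have hKint : ∀ y, IntervalIntegrable (fun x => K x y) volume a b := fun y =>
    (hKc.comp (continuous_id.prodMk continuous_const)).intervalIntegrable a b
  have hHpos : ∀ y, 0 < H y := by
    intro y
    refine intervalIntegral_pos_of_pos_on (hKint y) (fun x hx => ?_) hab
    have hx' : x ∈ Set.Icc a b := Ioo_subset_Icc_self hx
    exact div_pos (by rw [hF' hx']; exact hFpos x hx') (hLpos _)
  set G : ℝ → ℝ := fun y => N (g' y) ^ (-p) * H y ^ (p - 1) with hGdef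
  have hGc : Continuous G :=
    ((hN.comp hg'c).rpow_const (fun y => Or.inl (hNpos _).ne')).mul
      (hHc.rpow_const (fun y => Or.inl (hHpos _).ne'))
  have hGpos : ∀ y, 0 < G y := fun y =>
    mul_pos (Real.rpow_pos_of_pos (hNpos _) _) (Real.rpow_pos_of_pos (hHpos _) _)
  have hkey : ∀ y, N (g' y) ^ q * G y ^ q = N (g' y) ^ (-p) * H y ^ p := by
    intro y
    have hN' : (0:ℝ) ≤ N (g' y) := (hNpos _).le
    have hH' : (0:ℝ) ≤ H y := (hHpos y).le
    have e1 : q + -p * q = -p := by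
      have : q + -p * q = -(q * (p - 1)) := by ring
      rw [this, hq1]
    have e2 : (p - 1) * q = p := by rw [mul_comm]; exact hq1
    rw [hGdef]
    rw [Real.mul_rpow (Real.rpow_nonneg hN' _) (Real.rpow_nonneg hH' _),
      ← Real.rpow_mul hN', ← Real.rpow_mul hH', ← mul_assoc,
      ← Real.rpow_add (hNpos _), e1, e2]
  set A := ∫ t in a..b, M (f t) ^ p * F t ^ p with hAdef
  set B := ∫ y in c..d, N (g' y) ^ (-p) * H y ^ p with hBdef
  have hBintc : Continuous fun y => N (g' y) ^ (-p) * H y ^ p :=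
    ((hN.comp hg'c).rpow_const (fun y => Or.inl (hNpos _).ne')).mul
      (hHc.rpow_const (fun y => Or.inl (hHpos _).ne'))
  have hBpos : 0 < B :=
    intervalIntegral_pos_of_pos_on (hBintc.intervalIntegrable c d)
      (fun y _ => mul_pos (Real.rpow_pos_of_pos (hNpos _) _)
        (Real.rpow_pos_of_pos (hHpos _) _)) hcd
  have hGq : (∫ t in c..d, N (g t) ^ q * G t ^ q) = B := by
    refine intervalIntegral.integral_congr fun y hy => ?_
    rw [Set.uIcc_of_le hcd.le] at hy
    rw [← hg' hy, hkey y]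
  have h9' := h9 G hGc.continuousOn (fun t _ => hGpos t) (by rw [hGq]; exact hBpos)
  rw [hGq] at h9'
  have hLHS : (∫ x in a..b, ∫ y in c..d, F x * G y / L (f x, g y)) = B := by
    have step1 : (∫ x in a..b, ∫ y in c..d, F x * G y / L (f x, g y))
        = ∫ x in a..b, ∫ y in c..d, K x y * G y := by
      refine intervalIntegral.integral_congr fun x hx => ?_
      rw [Set.uIcc_of_le hab.le] at hx
      refine intervalIntegral.integral_congr fun y hy => ?_
      rw [Set.uIcc_of_le hcd.le] at hy
      rw [← hF' hx, ← hf' hx, ← hg' hy, hKdef]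
      ring
    have hint : Integrable (Function.uncurry fun x y => K x y * G y)
        ((volume.restrict (Set.Ioc a b)).prod (volume.restrict (Set.Ioc c d))) := by
      rw [Measure.prod_restrict]
      have hc : Continuous (Function.uncurry fun x y => K x y * G y) :=
        hKc.mul (hGc.comp continuous_snd)
      exact (hc.continuousOn.integrableOn_compact (isCompact_Icc.prod isCompact_Icc)).mono_set
        (Set.prod_mono Set.Ioc_subset_Icc_self Set.Ioc_subset_Icc_self)
    have step2 : (∫ x in a..b, ∫ y in c..d, K x y * G y)
        = ∫ y in c..d, ∫ x in a..b, K x y * G y := by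
      simp only [intervalIntegral.integral_of_le hab.le,
        intervalIntegral.integral_of_le hcd.le]
      exact MeasureTheory.integral_integral_swap hint
    have step3 : (∫ y in c..d, ∫ x in a..b, K x y * G y) = B := by
      refine intervalIntegral.integral_congr fun y hy => ?_
      rw [intervalIntegral.integral_mul_const]
      show H y * G y = N (g' y) ^ (-p) * H y ^ p
      rw [hGdef]
      have : H y * (N (g' y) ^ (-p) * H y ^ (p - 1))
          = N (g' y) ^ (-p) * (H y ^ (p - 1) * H y ^ (1:ℝ)) := by
        rw [Real.rpow_one]; ring
      rw [this, ← Real.rpow_add (hHpos y)]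
      norm_num
    rw [step1, step2, step3]
  rw [hLHS] at h9'
  -- now h9' : B ≤ C * A ^ (1/p) * B ^ (1/q)
  have hstep : B ^ (1 / p) ≤ C * A ^ (1 / p) := by
    have h1 : B ^ (1 / p) * B ^ (1 / q) = B := by
      rw [← Real.rpow_add hBpos, hpq, Real.rpow_one]
    have h9'' : B ^ (1 / p) * B ^ (1 / q) ≤ C * A ^ (1 / p) * B ^ (1 / q) := by
      rw [h1]; exact h9'
    exact le_of_mul_le_mul_right h9'' (Real.rpow_pos_of_pos hBpos _)
  have hfin := Real.rpow_le_rpow (Real.rpow_nonneg hBpos.le _) hstep hp0.le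
  rw [← Real.rpow_mul hBpos.le, one_div_mul_cancel hne, Real.rpow_one,
    Real.mul_rpow hC.le (Real.rpow_nonneg hMF.le _),
    ← Real.rpow_mul hMF.le, one_div_mul_cancel hne, Real.rpow_one] at hfin
  have hgoal : (∫ y in c..d, N (g y) ^ (-p) * (∫ x in a..b, F x / L (f x, g y)) ^ p) = B := by
      refine intervalIntegral.integral_congr fun y hy => ?_
      rw [Set.uIcc_of_le hcd.le] at hy
      have hinner : (∫ x in a..b, F x / L (f x, g y)) = H y := by
        refine intervalIntegral.integral_congr fun x hx => ?_
        rw [Set.uIcc_of_le hab.le] at hx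
        rw [← hF' hx, ← hf' hx, ← hg' hy]
      rw [hinner, ← hg' hy]
  rw [hgoal]
  exact hfin
end

section
/- Let s be a nonempty finite set of indices, let p > 1 and q be real numbers with 1/p + 1/q = 1, and let f, g : ι → ℝ be functions with f(k) > 0 and g(k) > 0 for all k ∈ s. Suppose there are constants m, M with 0 < m and m ≤ f(k)^p / g(k)^q ≤ M for all k ∈ s. Then (∑_{k∈s} f(k)^p)^(1/p) · (∑_{k∈s} g(k)^q)^(1/q) ≤ (M/m)^(1/(p·q)) · ∑_{k∈s} f(k)·g(k). (The reverse Hölder inequality of Theorem 3.1 in the discrete case, i.e. the time scale 𝕋 = ℤ with α = 1, where the diamond-alpha integral reduces to a finite sum.) -/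
open Finset

/-- Reverse Hölder inequality (Theorem 3.1, discrete case 𝕋 = ℤ, α = 1). -/
theorem reverse_holder_discrete {ι : Type*}
    (s : Finset ι) (p q m M : ℝ) (f g : ι → ℝ)
    (hs : s.Nonempty) (hp : 1 < p) (hpq : 1 / p + 1 / q = 1)
    (hfpos : ∀ k ∈ s, 0 < f k) (hgpos : ∀ k ∈ s, 0 < g k)
    (hm : 0 < m)
    (hlb : ∀ k ∈ s, m ≤ f k ^ p / g k ^ q)
    (hub : ∀ k ∈ s, f k ^ p / g k ^ q ≤ M) :
    (∑ k ∈ s, f k ^ p) ^ (1 / p) * (∑ k ∈ s, g k ^ q) ^ (1 / q)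
      ≤ (M / m) ^ (1 / (p * q)) * ∑ k ∈ s, f k * g k := by
  have hp0 : 0 < p := lt_trans one_pos hp
  have hq0 : 0 < q := by
    have h1 : 0 < 1 / q := by
      have : 1 / p < 1 := by
        rw [div_lt_one hp0]; exact hp
      linarith
    exact one_div_pos.mp h1
  have hM : 0 < M := by
    obtain ⟨k, hk⟩ := hs
    have := hub k hk
    have h2 : 0 < f k ^ p / g k ^ q :=
      div_pos (Real.rpow_pos_of_pos (hfpos k hk) p) (Real.rpow_pos_of_pos (hgpos k hk) q)
    linarith
  have hpq1 : 1 + p / q = p := by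
    field_simp at hpq ⊢
    linarith [hpq]
  have hqp1 : q / p + 1 = q := by
    field_simp at hpq ⊢
    linarith [hpq]
  -- pointwise bound A : f k ^ p ≤ M^(1/q) * (f k * g k)
  have hA : ∀ k ∈ s, f k ^ p ≤ M ^ (1/q) * (f k * g k) := by
    intro k hk
    have hf := hfpos k hk
    have hg := hgpos k hk
    have h1 : f k ^ p ≤ M * g k ^ q := by
      have := hub k hk
      rw [div_le_iff₀ (Real.rpow_pos_of_pos hg q)] at this
      linarith
    have h2 : (f k ^ p) ^ (1/q) ≤ M ^ (1/q) * g k := by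
      calc (f k ^ p) ^ (1/q) ≤ (M * g k ^ q) ^ (1/q) :=
            Real.rpow_le_rpow (Real.rpow_nonneg hf.le p) h1 (by positivity)
        _ = M ^ (1/q) * (g k ^ q) ^ (1/q) :=
            Real.mul_rpow hM.le (Real.rpow_nonneg hg.le q)
        _ = M ^ (1/q) * g k := by
            rw [← Real.rpow_mul hg.le, mul_one_div, div_self hq0.ne', Real.rpow_one]
    calc f k ^ p = f k ^ (1 + p/q) := by rw [hpq1]
      _ = f k * f k ^ (p/q) := by rw [Real.rpow_add hf, Real.rpow_one]
      _ = f k * (f k ^ p) ^ (1/q) := by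
          rw [← Real.rpow_mul hf.le, mul_one_div]
      _ ≤ f k * (M ^ (1/q) * g k) := by
          exact mul_le_mul_of_nonneg_left h2 hf.le
      _ = M ^ (1/q) * (f k * g k) := by ring
  -- pointwise bound B : g k ^ q ≤ m^(-(1/p)) * (f k * g k)
  have hB : ∀ k ∈ s, g k ^ q ≤ m ^ (-(1/p)) * (f k * g k) := by
    intro k hk
    have hf := hfpos k hk
    have hg := hgpos k hk
    have h1 : m * g k ^ q ≤ f k ^ p := by
      have := hlb k hk
      rw [le_div_iff₀ (Real.rpow_pos_of_pos hg q)] at this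
      linarith
    have h2 : m ^ (1/p) * g k ^ (q/p) ≤ f k := by
      calc m ^ (1/p) * g k ^ (q/p)
            = (m * g k ^ q) ^ (1/p) := by
            rw [Real.mul_rpow hm.le (Real.rpow_nonneg hg.le q),
              ← Real.rpow_mul hg.le, mul_one_div]
        _ ≤ (f k ^ p) ^ (1/p) :=
            Real.rpow_le_rpow (by positivity) h1 (by positivity)
        _ = f k := by
            rw [← Real.rpow_mul hf.le, mul_one_div, div_self hp0.ne', Real.rpow_one]
    have h3 : m ^ (1/p) * g k ^ q ≤ f k * g k := by
      calc m ^ (1/p) * g k ^ q = (m ^ (1/p) * g k ^ (q/p)) * g k := by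
            rw [mul_assoc, ← Real.rpow_add_one hg.ne' (q/p), hqp1]
        _ ≤ f k * g k := mul_le_mul_of_nonneg_right h2 hg.le
    rw [Real.rpow_neg hm.le, inv_mul_eq_div,
      le_div_iff₀ (by positivity : (0:ℝ) < m ^ (1/p)), mul_comm]
    exact h3
  set T := ∑ k ∈ s, f k * g k with hT
  have hTpos : 0 < T := by
    apply Finset.sum_pos (fun k hk => mul_pos (hfpos k hk) (hgpos k hk)) hs
  have hS1 : ∑ k ∈ s, f k ^ p ≤ M ^ (1/q) * T := by
    rw [hT, Finset.mul_sum]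
    exact Finset.sum_le_sum hA
  have hS2 : ∑ k ∈ s, g k ^ q ≤ m ^ (-(1/p)) * T := by
    rw [hT, Finset.mul_sum]
    exact Finset.sum_le_sum hB
  have hS1' : (∑ k ∈ s, f k ^ p) ^ (1/p) ≤ M ^ (1/(q*p)) * T ^ (1/p) := by
    calc (∑ k ∈ s, f k ^ p) ^ (1/p) ≤ (M ^ (1/q) * T) ^ (1/p) := by
          apply Real.rpow_le_rpow _ hS1 (by positivity)
          exact Finset.sum_nonneg fun k hk => Real.rpow_nonneg (hfpos k hk).le p
      _ = M ^ (1/(q*p)) * T ^ (1/p) := by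
          rw [Real.mul_rpow (by positivity) hTpos.le, ← Real.rpow_mul hM.le]
          rw [div_mul_div_comm, one_mul]
  have hS2' : (∑ k ∈ s, g k ^ q) ^ (1/q) ≤ m ^ (-(1/(p*q))) * T ^ (1/q) := by
    calc (∑ k ∈ s, g k ^ q) ^ (1/q) ≤ (m ^ (-(1/p)) * T) ^ (1/q) := by
          apply Real.rpow_le_rpow _ hS2 (by positivity)
          exact Finset.sum_nonneg fun k hk => Real.rpow_nonneg (hgpos k hk).le q
      _ = m ^ (-(1/(p*q))) * T ^ (1/q) := by
          rw [Real.mul_rpow (by positivity) hTpos.le, ← Real.rpow_mul hm.le]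
          congr 1
          rw [neg_mul, div_mul_div_comm, one_mul]
  calc (∑ k ∈ s, f k ^ p) ^ (1/p) * (∑ k ∈ s, g k ^ q) ^ (1/q)
      ≤ (M ^ (1/(q*p)) * T ^ (1/p)) * (m ^ (-(1/(p*q))) * T ^ (1/q)) := by
        apply mul_le_mul hS1' hS2' _ (by positivity)
        · exact Real.rpow_nonneg (Finset.sum_nonneg fun k hk =>
            Real.rpow_nonneg (hgpos k hk).le q) _
    _ = (M / m) ^ (1/(p*q)) * T := by
        rw [mul_comm q p, Real.div_rpow hM.le hm.le, Real.rpow_neg hm.le,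
          show M ^ (1/(p*q)) * T ^ (1/p) * ((m ^ (1/(p*q)))⁻¹ * T ^ (1/q))
            = M ^ (1/(p*q)) / m ^ (1/(p*q)) * (T ^ (1/p) * T ^ (1/q)) by ring,
          ← Real.rpow_add hTpos, hpq, Real.rpow_one]
end

section
/- Let s be a finite set of indices, let p > 1 and q with 1/p + 1/q = 1. Let K : ι × ι → ℝ be nonnegative on s × s, let f, g : ι → ℝ be nonnegative on s, and let φ, ψ : ι → ℝ be positive on s. Define F(x) = ∑_{y∈s} K(x,y)·ψ(y)^(−p) and G(y) = ∑_{x∈s} K(x,y)·φ(x)^(−q). Then ∑_{x∈s} ∑_{y∈s} K(x,y)·f(x)·g(y) ≤ (∑_{x∈s} φ(x)^p·F(x)·f(x)^p)^(1/p) · (∑_{y∈s} ψ(y)^q·G(y)·g(y)^q)^(1/q). (Inequality (5) of Theorem 3.4 in the discrete case, i.e. the time scale 𝕋 = ℤ with α = 1.) -/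
open Finset

/-- Inequality (5) of Theorem 3.4, discrete case 𝕋 = ℤ, α = 1. -/
theorem hardy_type_first_inequality_discrete {ι : Type*}
    (s : Finset ι) (p q : ℝ) (K : ι × ι → ℝ) (f g φ ψ : ι → ℝ)
    (hp : 1 < p) (hpq : 1 / p + 1 / q = 1)
    (hKnn : ∀ x ∈ s, ∀ y ∈ s, 0 ≤ K (x, y))
    (hfnn : ∀ k ∈ s, 0 ≤ f k) (hgnn : ∀ k ∈ s, 0 ≤ g k)
    (hφpos : ∀ k ∈ s, 0 < φ k) (hψpos : ∀ k ∈ s, 0 < ψ k)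
    (F G : ι → ℝ)
    (hF : ∀ x, F x = ∑ y ∈ s, K (x, y) * ψ y ^ (-p))
    (hG : ∀ y, G y = ∑ x ∈ s, K (x, y) * φ x ^ (-q)) :
    (∑ x ∈ s, ∑ y ∈ s, K (x, y) * f x * g y)
      ≤ (∑ x ∈ s, φ x ^ p * F x * f x ^ p) ^ (1 / p) *
        (∑ y ∈ s, ψ y ^ q * G y * g y ^ q) ^ (1 / q) := by
  have hpq' : Real.HolderConjugate p q := Real.holderConjugate_iff.mpr ⟨hp, by rw [← one_div, ← one_div]; exact hpq⟩
  have hq1 : 1 < q := hpq'.symm.lt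
  have hp0 : p ≠ 0 := hpq'.ne_zero
  have hq0 : q ≠ 0 := hpq'.symm.ne_zero
  set a : ι × ι → ℝ := fun z => K z ^ (1/p) * (φ z.1 * f z.1 * (ψ z.2)⁻¹) with ha
  set b : ι × ι → ℝ := fun z => K z ^ (1/q) * (ψ z.2 * g z.2 * (φ z.1)⁻¹) with hb
  have hann : ∀ z ∈ s ×ˢ s, 0 ≤ a z := by
    intro z hz
    rw [Finset.mem_product] at hz
    exact mul_nonneg (Real.rpow_nonneg (by exact hKnn z.1 hz.1 z.2 hz.2) _)
      (mul_nonneg (mul_nonneg (hφpos z.1 hz.1).le (hfnn z.1 hz.1))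
        (inv_nonneg.2 (hψpos z.2 hz.2).le))
  have hbnn : ∀ z ∈ s ×ˢ s, 0 ≤ b z := by
    intro z hz
    rw [Finset.mem_product] at hz
    exact mul_nonneg (Real.rpow_nonneg (by exact hKnn z.1 hz.1 z.2 hz.2) _)
      (mul_nonneg (mul_nonneg (hψpos z.2 hz.2).le (hgnn z.2 hz.2))
        (inv_nonneg.2 (hφpos z.1 hz.1).le))
  have key := Real.inner_le_Lp_mul_Lq_of_nonneg (s ×ˢ s) hpq' hann hbnn
  have hLHS : (∑ x ∈ s, ∑ y ∈ s, K (x, y) * f x * g y) = ∑ z ∈ s ×ˢ s, a z * b z := by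
    rw [Finset.sum_product]
    refine Finset.sum_congr rfl fun x hx => Finset.sum_congr rfl fun y hy => ?_
    have hK : (0:ℝ) ≤ K (x, y) := hKnn x hx y hy
    have hKK : K (x, y) ^ (1/p) * K (x, y) ^ (1/q) = K (x, y) := by
      rw [← Real.rpow_add' hK (by rw [hpq]; norm_num), hpq, Real.rpow_one]
    have hφ : φ x * (φ x)⁻¹ = 1 := mul_inv_cancel₀ (hφpos x hx).ne'
    have hψ : ψ y * (ψ y)⁻¹ = 1 := mul_inv_cancel₀ (hψpos y hy).ne'
    simp only [ha, hb]
    calc K (x, y) * f x * g y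
        = (K (x, y) ^ (1/p) * K (x, y) ^ (1/q)) * (f x * g y) * (φ x * (φ x)⁻¹) *
            (ψ y * (ψ y)⁻¹) := by rw [hKK, hφ, hψ]; ring
      _ = K (x, y) ^ (1/p) * (φ x * f x * (ψ y)⁻¹) *
            (K (x, y) ^ (1/q) * (ψ y * g y * (φ x)⁻¹)) := by ring
  have hA : ∑ z ∈ s ×ˢ s, a z ^ p = ∑ x ∈ s, φ x ^ p * F x * f x ^ p := by
    rw [Finset.sum_product]
    refine Finset.sum_congr rfl fun x hx => ?_
    rw [hF x, Finset.mul_sum, Finset.sum_mul]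
    refine Finset.sum_congr rfl fun y hy => ?_
    have hK : (0:ℝ) ≤ K (x, y) := hKnn x hx y hy
    have h1 : (K (x, y) ^ (1/p)) ^ p = K (x, y) := by
      rw [← Real.rpow_mul hK, one_div_mul_cancel hp0, Real.rpow_one]
    simp only [ha]
    rw [Real.mul_rpow (Real.rpow_nonneg hK _)
        (mul_nonneg (mul_nonneg (hφpos x hx).le (hfnn x hx)) (inv_nonneg.2 (hψpos y hy).le)),
      h1,
      Real.mul_rpow (mul_nonneg (hφpos x hx).le (hfnn x hx)) (inv_nonneg.2 (hψpos y hy).le),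
      Real.mul_rpow (hφpos x hx).le (hfnn x hx),
      Real.inv_rpow (hψpos y hy).le, ← Real.rpow_neg (hψpos y hy).le]
    ring
  have hB : ∑ z ∈ s ×ˢ s, b z ^ q = ∑ y ∈ s, ψ y ^ q * G y * g y ^ q := by
    rw [Finset.sum_product, Finset.sum_comm]
    refine Finset.sum_congr rfl fun y hy => ?_
    rw [hG y, Finset.mul_sum, Finset.sum_mul]
    refine Finset.sum_congr rfl fun x hx => ?_
    have hK : (0:ℝ) ≤ K (x, y) := hKnn x hx y hy
    have h1 : (K (x, y) ^ (1/q)) ^ q = K (x, y) := by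
      rw [← Real.rpow_mul hK, one_div_mul_cancel hq0, Real.rpow_one]
    simp only [hb]
    rw [Real.mul_rpow (Real.rpow_nonneg hK _)
        (mul_nonneg (mul_nonneg (hψpos y hy).le (hgnn y hy)) (inv_nonneg.2 (hφpos x hx).le)),
      h1,
      Real.mul_rpow (mul_nonneg (hψpos y hy).le (hgnn y hy)) (inv_nonneg.2 (hφpos x hx).le),
      Real.mul_rpow (hψpos y hy).le (hgnn y hy),
      Real.inv_rpow (hφpos x hx).le, ← Real.rpow_neg (hφpos x hx).le]
    ring
  rw [hLHS, ← hA, ← hB]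
  exact key
end
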